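/- arXiv:2402.00713 — 10 statements merged into one kernel-verified Lean document; each statement's English description precedes it below -/
import Mathlib

section
/- Let (X_n) be a sequence of independent random variables on a common measurable space (Ω, F), each with finite variance under every P in a family of probability measures 𝒫. If lim_{m→∞} sup_{P∈𝒫} Σ_{k=m}^∞ Var_P(X_k) = 0, then the centered partial sums S_n = Σ_{i=1}^n (X_i − E_P X_i) form a 𝒫-uniform Cauchy sequence, i.e., for every ε > 0, lim_{m→∞} sup_{P∈𝒫} P( sup_{k,n ≥ m} |S_k − S_n| ≥ ε ) = 0. -/
open MeasureTheory ProbabilityTheory Filter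

section Aux

variable {Ω : Type*} {m0 : MeasurableSpace Ω} {μ : Measure Ω}

/-- The filtration shifted by `m`. -/
def shiftF (ℱ : Filtration ℕ m0) (m : ℕ) : Filtration ℕ m0 where
  seq := fun j => ℱ (m + j)
  mono' := fun i j hij => ℱ.mono (Nat.add_le_add_left hij m)
  le' := fun j => ℱ.le _

lemma abs_condexp_le_aux {m : MeasurableSpace Ω} {f : Ω → ℝ} (hf : Integrable f μ) :
    (fun ω => |(μ[f|m]) ω|) ≤ᵐ[μ] μ[(fun ω => |f ω|)|m] := by
  have habs : Integrable (fun ω => |f ω|) μ := hf.abs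
  filter_upwards [condExp_mono hf habs (ae_of_all μ fun x => le_abs_self (f x)),
    EventuallyLE.trans (condExp_neg f m).symm.le
      (condExp_mono hf.neg habs (ae_of_all μ fun x => neg_le_abs (f x)))] with x h1 h2
  simp only [Pi.neg_apply] at h2
  exact abs_le.2 ⟨by linarith, h1⟩

lemma variance_sub_const [IsProbabilityMeasure μ] {X : Ω → ℝ} (hX : MemLp X 2 μ) (c : ℝ) :
    variance (fun ω => X ω - c) μ = variance X μ := by
  have hXi : Integrable X μ := hX.integrable one_le_two
  have h : ∫ ω, (X ω - c) ∂μ = (∫ ω, X ω ∂μ) - c := by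
    rw [integral_sub hXi (integrable_const c), integral_const]; simp
  have hfe : (fun ω => X ω - c) = X - fun _ => c := rfl
  rw [hfe, variance_eq_integral (hX.sub (memLp_const c)).1.aemeasurable,
    variance_eq_integral hX.1.aemeasurable]
  congr 1
  funext ω
  simp only [Pi.sub_apply, Pi.pow_apply, h]
  ring

/-- Kolmogorov-type maximal inequality (L¹ version via Doob) for centered sums of
independent random variables. -/
lemma key_maximal (P : Measure Ω) [IsProbabilityMeasure P]
    (X : ℕ → Ω → ℝ) (hmeas : ∀ n, Measurable (X n))
    (hindep : iIndepFun X P)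
    (hL2 : ∀ n, MemLp (X n) 2 P) (m N : ℕ) {ε : NNReal} (hε : 0 < ε) :
    P {ω | (ε : ℝ) ≤ (Finset.range (N + 1)).sup' Finset.nonempty_range_add_one
        fun j => |∑ i ∈ Finset.Ioc m (m + j), (X i ω - ∫ x, X i x ∂P)|}
      ≤ ENNReal.ofReal
          (Real.sqrt (∑ i ∈ Finset.Ioc m (m + N), variance (X i) P) / ε) := by
  classical
  set c : ℕ → ℝ := fun i => ∫ x, X i x ∂P with hc
  set Y : ℕ → Ω → ℝ := fun i ω => X i ω - c i with hY
  have hYm : ∀ i, MemLp (Y i) 2 P := fun i => (hL2 i).sub (memLp_const _)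
  have hYint : ∀ i, Integrable (Y i) P := fun i => (hYm i).integrable one_le_two
  have hYmean : ∀ i, ∫ ω, Y i ω ∂P = 0 := by
    intro i
    simp only [hY]
    rw [integral_sub ((hL2 i).integrable one_le_two) (integrable_const _), integral_const]
    simp [hc]
  set U : ℕ → Ω → ℝ := fun j ω => ∑ i ∈ Finset.Ioc m (m + j), Y i ω with hU
  have hUsum : ∀ j, U j = ∑ i ∈ Finset.Ioc m (m + j), Y i := by
    intro j; funext ω; rw [Finset.sum_apply]
  have hUint : ∀ j, Integrable (U j) P := by
    intro j; rw [hUsum]; exact integrable_finset_sum' _ fun i _ => hYint i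
  have hUm2 : ∀ j, MemLp (U j) 2 P := by
    intro j; rw [hUsum]; exact memLp_finsetSum' _ fun i _ => hYm i
  have hsm : ∀ n, StronglyMeasurable (X n) := fun n => (hmeas n).stronglyMeasurable
  set ℱ := MeasureTheory.Filtration.natural X hsm with hℱ
  set 𝒢 := shiftF ℱ m with h𝒢
  have hadapX : ∀ i n, i ≤ n → StronglyMeasurable[ℱ n] (X i) := fun i n hin =>
    (Filtration.stronglyAdapted_natural hsm i).mono (ℱ.mono hin)
  have hUadp : ∀ j, StronglyMeasurable[𝒢 j] (U j) := by
    intro j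
    exact Finset.stronglyMeasurable_fun_sum _ fun i hi =>
      ((hadapX i (m + j) (Finset.mem_Ioc.1 hi).2).sub stronglyMeasurable_const)
  -- U is a martingale
  have hmart : Martingale U 𝒢 P := by
    refine ⟨hUadp, fun i j hij => ?_⟩
    have hdecomp : U j = U i + ∑ l ∈ Finset.Ioc (m + i) (m + j), Y l := by
      rw [hUsum, hUsum, Finset.sum_Ioc_consecutive _ (Nat.le_add_right m i)
        (Nat.add_le_add_left hij m)]
    rw [hdecomp]
    refine (condExp_add (hUint i) (integrable_finset_sum' _ fun l _ => hYint l) _).trans ?_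
    have h1 : P[U i|𝒢 i] = U i :=
      condExp_of_stronglyMeasurable (𝒢.le i) (hUadp i) (hUint i)
    have h2 : (P[∑ l ∈ Finset.Ioc (m + i) (m + j), Y l|𝒢 i]) =ᵐ[P]
        ∑ l ∈ Finset.Ioc (m + i) (m + j), (0 : Ω → ℝ) := by
      refine (condExp_finsetSum (fun l _ => hYint l) _).trans ?_
      refine eventuallyEq_sum fun l hl => ?_
      have hlt : m + i < l := (Finset.mem_Ioc.1 hl).1
      have hXc : P[X l|𝒢 i] =ᵐ[P] fun _ => c l :=
        hindep.condExp_natural_ae_eq_of_lt hsm hlt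
      have hsub : P[Y l|𝒢 i] =ᵐ[P] P[X l|𝒢 i] - P[(fun _ => c l : Ω → ℝ)|𝒢 i] := by
        have : Y l = X l - (fun _ => c l) := rfl
        rw [this]
        exact condExp_sub ((hL2 l).integrable one_le_two) (integrable_const _) _
      refine hsub.trans ?_
      have hcst : P[(fun _ => c l : Ω → ℝ)|𝒢 i] = fun _ => c l := condExp_const (𝒢.le i) _
      rw [hcst]
      filter_upwards [hXc] with ω hω
      simp [hω]
    rw [h1]
    filter_upwards [h2] with ω hω
    simp only [Pi.add_apply, hω, Finset.sum_apply, Pi.zero_apply,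
      Finset.sum_const_zero, add_zero]
  -- |U| is a submartingale
  have hVadp : StronglyAdapted 𝒢 fun j => fun ω => |U j ω| := fun j =>
    continuous_abs.comp_stronglyMeasurable (hUadp j)
  have hsubm : Submartingale (fun j ω => |U j ω|) 𝒢 P := by
    refine ⟨hVadp, fun i j hij => ?_, fun i => (hUint i).abs⟩
    have h1 := hmart.2 i j hij
    have h2 := abs_condexp_le_aux (m := 𝒢 i) (μ := P) (hUint j)
    refine EventuallyLE.trans ?_ h2
    filter_upwards [h1] with ω hω
    simp [hω]
  -- Doob's maximal inequality
  have hmax := maximal_ineq hsubm (fun j ω => abs_nonneg _) (ε := ε) N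
  set A : Set Ω := {ω | (ε : ℝ) ≤ (Finset.range (N + 1)).sup' Finset.nonempty_range_add_one
      fun k => |U k ω|} with hA
  -- bound the integral of |U N| by the sqrt of the variance sum
  have hvarsum : variance (U N) P = ∑ i ∈ Finset.Ioc m (m + N), variance (X i) P := by
    rw [hUsum]
    rw [IndepFun.variance_sum (fun i _ => hYm i) ?_]
    · refine Finset.sum_congr rfl fun i _ => ?_
      exact variance_sub_const (hL2 i) (c i)
    · intro i _ j _ hij
      have h := (hindep.indepFun hij).comp
        (measurable_id.sub_const (c i)) (measurable_id.sub_const (c j))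
      exact h
  have hUmean : ∫ ω, U N ω ∂P = 0 := by
    rw [hU]
    rw [integral_finset_sum _ fun i _ => hYint i]
    exact Finset.sum_eq_zero fun i _ => hYmean i
  have hintabs : ∫ ω, |U N ω| ∂P ≤
      Real.sqrt (∑ i ∈ Finset.Ioc m (m + N), variance (X i) P) := by
    rw [← hvarsum]
    have hvnn := variance_nonneg (fun ω => |U N ω|) P
    have habs2 : MemLp (fun ω => |U N ω|) 2 P := by
      have := (hUm2 N).abs
      exact this
    rw [variance_eq_sub habs2] at hvnn
    have hsq : (∫ ω, ((fun ω => |U N ω|) ^ 2) ω ∂P) = ∫ ω, ((U N) ^ 2) ω ∂P := by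
      refine integral_congr_ae (ae_of_all _ fun ω => ?_)
      simp [sq_abs]
    rw [hsq] at hvnn
    have hv2 : variance (U N) P = ∫ ω, ((U N) ^ 2) ω ∂P :=
      variance_of_integral_eq_zero (hUm2 N).aemeasurable hUmean
    rw [Real.le_sqrt (integral_nonneg fun ω => abs_nonneg _) (variance_nonneg _ _), hv2]
    linarith
  have hset : ∫ ω in A, |U N ω| ∂P ≤ ∫ ω, |U N ω| ∂P :=
    setIntegral_le_integral (hUint N).abs (ae_of_all _ fun ω => abs_nonneg _)
  -- put things together
  have hε' : (ε : ENNReal) ≠ 0 := by simpa using hε.ne'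
  have hle : P A ≤ ENNReal.ofReal
      (Real.sqrt (∑ i ∈ Finset.Ioc m (m + N), variance (X i) P)) / (ε : ENNReal) := by
    rw [ENNReal.le_div_iff_mul_le (Or.inl hε') (Or.inl ENNReal.coe_ne_top)]
    calc P A * ε = ε * P A := by rw [mul_comm]
    _ ≤ ENNReal.ofReal (∫ ω in A, |U N ω| ∂P) := hmax
    _ ≤ ENNReal.ofReal (Real.sqrt (∑ i ∈ Finset.Ioc m (m + N), variance (X i) P)) :=
        ENNReal.ofReal_le_ofReal (hset.trans hintabs)
  refine hle.trans_eq ?_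
  rw [ENNReal.ofReal_div_of_pos (by exact_mod_cast hε), ENNReal.ofReal_coe_nnreal]

end Aux

/-- Distribution-uniform Khintchine–Kolmogorov convergence theorem: if the tails of the sums
of variances vanish Ps-uniformly, the centered partial sums are Ps-uniformly Cauchy. -/
theorem stmt1 {Ω : Type*} [MeasurableSpace Ω] (Ps : Set (Measure Ω))
    (hPs : ∀ P ∈ Ps, IsProbabilityMeasure P)
    (X : ℕ → Ω → ℝ) (hmeas : ∀ n, Measurable (X n))
    (hindep : ∀ P ∈ Ps, iIndepFun X P)
    (hL2 : ∀ P ∈ Ps, ∀ n, MemLp (X n) 2 P)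
    (hvar : ∀ ε : ℝ, 0 < ε → ∃ M : ℕ, ∀ m ≥ M, ∀ P ∈ Ps,
      ∑' k : ℕ, ENNReal.ofReal (variance (X (m + k)) P) < ENNReal.ofReal ε) :
    ∀ ε : ℝ, 0 < ε → ∀ δ : ℝ, 0 < δ → ∃ M : ℕ, ∀ m ≥ M, ∀ P ∈ Ps,
      P {ω | ∃ k ≥ m, ∃ n ≥ m, ε ≤
        |(∑ i ∈ Finset.Icc 1 k, (X i ω - ∫ x, X i x ∂P)) -
          (∑ i ∈ Finset.Icc 1 n, (X i ω - ∫ x, X i x ∂P))|} < ENNReal.ofReal δ := by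
  intro ε hε δ hδ
  set η : ℝ := (ε * δ / 4) ^ 2 with hη
  have hηpos : 0 < η := by positivity
  obtain ⟨M, hM⟩ := hvar η hηpos
  refine ⟨M, fun m hm P hP => ?_⟩
  haveI : IsProbabilityMeasure P := hPs P hP
  set c : ℕ → ℝ := fun i => ∫ x, X i x ∂P with hc
  -- tail variance bound
  have htail : ∀ N, ∑ i ∈ Finset.Ioc m (m + N), variance (X i) P ≤ η := by
    intro N
    have h1 : Finset.Ioc m (m + N) = Finset.Ico (m + 1) (m + N + 1) := by
      ext x; simp only [Finset.mem_Ioc, Finset.mem_Ico]; omega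
    have h2 : ∑ i ∈ Finset.Ico (m + 1) (m + N + 1), variance (X i) P
        = ∑ k ∈ Finset.range N, variance (X (m + 1 + k)) P := by
      rw [Finset.sum_Ico_eq_sum_range, show m + N + 1 - (m + 1) = N from by omega]
    have h3 := hM (m + 1) (hm.trans (Nat.le_succ m)) P hP
    have h4 : ENNReal.ofReal (∑ k ∈ Finset.range N, variance (X (m + 1 + k)) P)
        ≤ ∑' k, ENNReal.ofReal (variance (X (m + 1 + k)) P) := by
      rw [ENNReal.ofReal_sum_of_nonneg (fun i _ => variance_nonneg _ _)]
      exact ENNReal.sum_le_tsum _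
    have h5 := lt_of_le_of_lt h4 h3
    rw [h1, h2]
    exact le_of_lt ((ENNReal.ofReal_lt_ofReal_iff_of_nonneg
      (Finset.sum_nonneg fun i _ => variance_nonneg _ _)).1 h5)
  set ε₀ : NNReal := (ε / 2).toNNReal with hε₀
  have hε₀coe : (ε₀ : ℝ) = ε / 2 := Real.coe_toNNReal _ (by positivity)
  have hε₀pos : 0 < ε₀ := by
    rw [← NNReal.coe_pos, hε₀coe]; positivity
  set A : ℕ → Set Ω := fun N =>
      {ω | (ε₀ : ℝ) ≤ (Finset.range (N + 1)).sup' Finset.nonempty_range_add_one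
        fun j => |∑ i ∈ Finset.Ioc m (m + j), (X i ω - c i)|} with hA
  have hAbound : ∀ N, P (A N) ≤ ENNReal.ofReal (δ / 2) := by
    intro N
    refine (key_maximal P X hmeas (hindep P hP) (hL2 P hP) m N hε₀pos).trans ?_
    refine ENNReal.ofReal_le_ofReal ?_
    rw [hε₀coe]
    have h1 : Real.sqrt (∑ i ∈ Finset.Ioc m (m + N), variance (X i) P) ≤ Real.sqrt η :=
      Real.sqrt_le_sqrt (htail N)
    have h2 : Real.sqrt η = ε * δ / 4 := by rw [hη, Real.sqrt_sq (by positivity)]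
    calc Real.sqrt (∑ i ∈ Finset.Ioc m (m + N), variance (X i) P) / (ε / 2)
        ≤ Real.sqrt η / (ε / 2) := by gcongr
      _ = δ / 2 := by rw [h2]; field_simp; ring
  have hmono : Monotone A := by
    intro N M' hNM ω hω
    simp only [hA, Set.mem_setOf_eq] at hω ⊢
    exact le_trans hω (Finset.sup'_mono _ (Finset.range_subset_range.2 (Nat.succ_le_succ hNM)) _)
  have hsub : {ω | ∃ k ≥ m, ∃ n ≥ m, ε ≤
        |(∑ i ∈ Finset.Icc 1 k, (X i ω - c i)) -
          (∑ i ∈ Finset.Icc 1 n, (X i ω - c i))|} ⊆ ⋃ N, A N := by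
    intro ω hω
    obtain ⟨k, hk, n, hn, hkn⟩ := hω
    have hIcc : ∀ j, ∑ i ∈ Finset.Icc 1 j, (X i ω - c i)
        = ∑ i ∈ Finset.Ioc 0 j, (X i ω - c i) := fun j => by
      rw [← Finset.Icc_add_one_left_eq_Ioc]; rfl
    rw [hIcc, hIcc] at hkn
    have hsplit : ∀ j, m ≤ j → ∑ i ∈ Finset.Ioc 0 j, (X i ω - c i)
        = ∑ i ∈ Finset.Ioc 0 m, (X i ω - c i) + ∑ i ∈ Finset.Ioc m j, (X i ω - c i) :=
      fun j hj => (Finset.sum_Ioc_consecutive _ (Nat.zero_le m) hj).symm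
    rw [hsplit k hk, hsplit n hn, add_sub_add_left_eq_sub] at hkn
    set Sk := ∑ i ∈ Finset.Ioc m k, (X i ω - c i) with hSk
    set Sn := ∑ i ∈ Finset.Ioc m n, (X i ω - c i) with hSn
    have habs : ε / 2 ≤ |Sk| ∨ ε / 2 ≤ |Sn| := by
      by_contra h
      push_neg at h
      have htri : |Sk - Sn| ≤ |Sk| + |Sn| := abs_sub Sk Sn
      linarith [h.1, h.2]
    refine Set.mem_iUnion.2 ⟨k + n, ?_⟩
    rw [Set.mem_setOf_eq, hε₀coe]
    rcases habs with h | h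
    · refine le_trans ?_ (Finset.le_sup'
        (fun j => |∑ i ∈ Finset.Ioc m (m + j), (X i ω - c i)|)
        (Finset.mem_range.2 (show k - m < k + n + 1 by omega)))
      rw [show m + (k - m) = k from by omega]
      exact h
    · refine le_trans ?_ (Finset.le_sup'
        (fun j => |∑ i ∈ Finset.Ioc m (m + j), (X i ω - c i)|)
        (Finset.mem_range.2 (show n - m < k + n + 1 by omega)))
      rw [show m + (n - m) = n from by omega]
      exact h
  calc P {ω | ∃ k ≥ m, ∃ n ≥ m, ε ≤
        |(∑ i ∈ Finset.Icc 1 k, (X i ω - c i)) -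
          (∑ i ∈ Finset.Icc 1 n, (X i ω - c i))|}
      ≤ P (⋃ N, A N) := measure_mono hsub
    _ = ⨆ N, P (A N) := (hmono.directed_le).measure_iUnion
    _ ≤ ENNReal.ofReal (δ / 2) := iSup_le hAbound
    _ < ENNReal.ofReal δ := (ENNReal.ofReal_lt_ofReal_iff hδ).2 (by linarith)
end

section
/- Let (X_n) be independent random variables on (Ω, F) and 𝒫 a family of probability measures under each of which the X_n are independent. Suppose for some c > 0, with X_n^{≤c} := X_n·1{|X_n| ≤ c}: (1) lim_{m→∞} sup_{P∈𝒫} Σ_{n=m}^∞ |E_P X_n^{≤c}| = 0; (2) lim_{m→∞} sup_{P∈𝒫} Σ_{n=m}^∞ Var_P X_n^{≤c} = 0; (3) lim_{m→∞} sup_{P∈𝒫} Σ_{n=m}^∞ P(|X_n| > c) = 0. Then S_n = Σ_{i=1}^n X_i is a 𝒫-uniform Cauchy sequence: for every ε > 0, lim_{m→∞} sup_{P∈𝒫} P(sup_{k,n≥m} |S_k − S_n| ≥ ε) = 0. -/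
open MeasureTheory ProbabilityTheory Filter

section aux

variable {Ω : Type*} [MeasurableSpace Ω] {P : Measure Ω} [IsProbabilityMeasure P]

lemma integrable_of_abs_le' {f : Ω → ℝ} (hf : Measurable f) {C : ℝ} (h : ∀ ω, |f ω| ≤ C) :
    Integrable f P :=
  (integrable_const C).mono' hf.aestronglyMeasurable (ae_of_all _ fun ω => by
    simpa [Real.norm_eq_abs] using h ω)

lemma memLp_two_of_abs_le' {f : Ω → ℝ} (hf : Measurable f) {C : ℝ} (h : ∀ ω, |f ω| ≤ C) :
    MemLp f 2 P :=
  (memLp_top_of_bound hf.aestronglyMeasurable C (ae_of_all _ fun ω => by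
    simpa [Real.norm_eq_abs] using h ω)).mono_exponent le_top

lemma kolmogorov_finite (Y : ℕ → Ω → ℝ) (hYm : ∀ n, Measurable (Y n))
    (hind : iIndepFun Y P) {C : ℝ}
    (hbdd : ∀ n ω, |Y n ω| ≤ C) (hmean : ∀ n, ∫ ω, Y n ω ∂P = 0)
    (a N : ℕ) {lam : ℝ} (hlam : 0 < lam) :
    ENNReal.ofReal (lam ^ 2) * P {ω | ∃ n ≤ N, lam ≤ |∑ i ∈ Finset.Ico a n, Y i ω|} ≤
      ENNReal.ofReal (∑ i ∈ Finset.Ico a N, variance (Y i) P) := by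
  classical
  set Z : ℕ → Ω → ℝ := fun n ω => ∑ i ∈ Finset.Ico a n, Y i ω with hZdef
  have hgoalset : {ω | ∃ n ≤ N, lam ≤ |∑ i ∈ Finset.Ico a n, Y i ω|}
      = {ω | ∃ n ≤ N, lam ≤ |Z n ω|} := rfl
  rw [hgoalset]
  have hZm : ∀ n, Measurable (Z n) := fun n => Finset.measurable_sum _ fun i _ => hYm i
  have hZbdd : ∀ n ω, |Z n ω| ≤ (Finset.Ico a n).card * C := fun n ω => by
    calc |Z n ω| ≤ ∑ i ∈ Finset.Ico a n, |Y i ω| := Finset.abs_sum_le_sum_abs _ _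
    _ ≤ ∑ _i ∈ Finset.Ico a n, C := Finset.sum_le_sum fun i _ => hbdd i ω
    _ = _ := by rw [Finset.sum_const, nsmul_eq_mul]
  have hZint : ∀ n, Integrable (Z n) P := fun n => integrable_of_abs_le' (hZm n) (hZbdd n)
  have hZL2 : ∀ n, MemLp (Z n) 2 P := fun n => memLp_two_of_abs_le' (hZm n) (hZbdd n)
  have hZmean : ∀ n, ∫ ω, Z n ω ∂P = 0 := fun n => by
    rw [hZdef]
    simp only
    rw [integral_finset_sum _ fun i _ => integrable_of_abs_le' (hYm i) (hbdd i)]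
    simp [hmean]
  have hsq_int : ∀ k, Integrable (fun ω => Z k ω ^ 2) P := fun k =>
    integrable_of_abs_le' ((hZm k).pow_const 2)
      (C := ((Finset.Ico a k).card * C) ^ 2) fun ω => by
        rw [abs_pow]
        exact pow_le_pow_left₀ (abs_nonneg _) (hZbdd k ω) 2
  -- first-entrance sets
  set A : ℕ → Set Ω := fun n => {ω | lam ≤ |Z n ω| ∧ ∀ j < n, |Z j ω| < lam} with hAdef
  have hAm : ∀ n, MeasurableSet (A n) := by
    intro n
    have he : A n = {ω | lam ≤ |Z n ω|} ∩ ⋂ j, ⋂ _ : j < n, {ω | |Z j ω| < lam} := by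
      ext ω; simp [hAdef, Set.mem_iInter]
    rw [he]
    exact (measurableSet_le measurable_const (hZm n).abs).inter
      (MeasurableSet.iInter fun j => MeasurableSet.iInter fun _ =>
        measurableSet_lt (hZm j).abs measurable_const)
  have hAdisj0 : ∀ i j, i < j → Disjoint (A i) (A j) := fun i j hlt =>
    Set.disjoint_left.2 fun ω hi hj => absurd hi.1 (not_le.2 (hj.2 i hlt))
  have hAdisj : (↑(Finset.range (N + 1)) : Set ℕ).Pairwise (Function.onFun Disjoint A) := by
    intro i _ j _ hij
    rcases hij.lt_or_gt with h | h
    · exact hAdisj0 i j h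
    · exact (hAdisj0 j i h).symm
  have hEeq : {ω | ∃ n ≤ N, lam ≤ |Z n ω|} = ⋃ n ∈ Finset.range (N + 1), A n := by
    ext ω
    simp only [Set.mem_setOf_eq, Set.mem_iUnion, Finset.mem_range, Nat.lt_succ_iff, hAdef]
    constructor
    · rintro ⟨n, hn, hln⟩
      have hex : ∃ k, lam ≤ |Z k ω| := ⟨n, hln⟩
      exact ⟨Nat.find hex, le_trans (Nat.find_min' hex hln) hn, Nat.find_spec hex,
        fun j hj => not_le.1 (Nat.find_min hex hj)⟩
    · rintro ⟨n, hn, h1, _⟩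
      exact ⟨n, hn, h1⟩
  -- key estimate for each entrance time
  have key : ∀ n, n ≤ N → ENNReal.ofReal (lam ^ 2) * P (A n) ≤
      ENNReal.ofReal (∫ ω in A n, Z N ω ^ 2 ∂P) := by
    intro n hnN
    by_cases han : n < a
    · have hAe : A n = ∅ := by
        ext ω
        simp only [hAdef, Set.mem_setOf_eq, Set.mem_empty_iff_false, iff_false, not_and]
        intro h1
        exfalso
        have hz : Z n ω = 0 := by
          rw [hZdef]; simp [Finset.Ico_eq_empty (by omega : ¬a < n)]
        rw [hz] at h1
        simp at h1
        linarith
      rw [hAe]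
      simp
    push_neg at han
    -- independence of the stopped indicator and the future increment
    set s : (({x // x ∈ Finset.Ico a n}) → ℝ) → ℕ → ℝ :=
      fun v j => ∑ i ∈ (Finset.Ico a n).attach, if (i : ℕ) < j then v i else 0 with hsdef
    have hsm : ∀ j, Measurable fun v => s v j := fun j => by
      apply Finset.measurable_sum
      intro i _
      split_ifs
      · exact measurable_pi_apply i
      · exact measurable_const
    have hseq : ∀ j, j ≤ n → ∀ ω, s (fun i => Y (i : ℕ) ω) j = Z j ω := by
      intro j hj ω
      rw [hsdef, hZdef]
      simp only
      rw [Finset.sum_attach (Finset.Ico a n) (fun i => if i < j then Y i ω else 0),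
        ← Finset.sum_filter]
      congr 1
      ext i
      simp only [Finset.mem_filter, Finset.mem_Ico]
      omega
    set g : (({x // x ∈ Finset.Ico a n}) → ℝ) → ℝ :=
      fun v => if lam ≤ |s v n| ∧ ∀ j < n, |s v j| < lam then s v n else 0 with hgdef
    have hgm : Measurable g := by
      rw [hgdef]
      refine Measurable.ite ?_ (hsm n) measurable_const
      have he : {v | lam ≤ |s v n| ∧ ∀ j < n, |s v j| < lam} =
          {v | lam ≤ |s v n|} ∩ ⋂ j, ⋂ _ : j < n, {v | |s v j| < lam} := by
        ext v; simp [Set.mem_iInter]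
      rw [he]
      exact (measurableSet_le measurable_const (hsm n).abs).inter
        (MeasurableSet.iInter fun j => MeasurableSet.iInter fun _ =>
          measurableSet_lt (hsm j).abs measurable_const)
    set h2 : (({x // x ∈ Finset.Ico n N}) → ℝ) → ℝ :=
      fun v => ∑ i ∈ (Finset.Ico n N).attach, v i with h2def
    have h2m : Measurable h2 := Finset.measurable_sum _ fun i _ => measurable_pi_apply i
    have hInd : IndepFun ((A n).indicator (Z n)) (fun ω => Z N ω - Z n ω) P := by
      have base := (hind.indepFun_finset (Finset.Ico a n) (Finset.Ico n N)
        (Finset.Ico_disjoint_Ico_consecutive a n N) hYm).comp hgm h2m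
      have e1 : (g ∘ fun ω (i : {x // x ∈ Finset.Ico a n}) => Y (i : ℕ) ω)
          = (A n).indicator (Z n) := by
        funext ω
        simp only [Function.comp_apply, hgdef, Set.indicator_apply]
        have hiff : (lam ≤ |s (fun i => Y (i : ℕ) ω) n| ∧
            ∀ j < n, |s (fun i => Y (i : ℕ) ω) j| < lam) ↔ ω ∈ A n := by
          rw [hseq n le_rfl ω]
          constructor
          · rintro ⟨ha1, ha2⟩
            exact ⟨ha1, fun j hj => by rw [← hseq j hj.le ω]; exact ha2 j hj⟩
          · rintro ⟨ha1, ha2⟩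
            exact ⟨ha1, fun j hj => by rw [hseq j hj.le ω]; exact ha2 j hj⟩
        exact if_congr hiff (hseq n le_rfl ω) rfl
      have e2 : (h2 ∘ fun ω (i : {x // x ∈ Finset.Ico n N}) => Y (i : ℕ) ω)
          = fun ω => Z N ω - Z n ω := by
        funext ω
        simp only [Function.comp_apply, h2def]
        rw [Finset.sum_attach (Finset.Ico n N) (fun i => Y i ω)]
        have hc := Finset.sum_Ico_consecutive (fun i => Y i ω) han hnN
        rw [hZdef]
        simp only
        linarith
      rw [e1, e2] at base
      exact base
    have hindint : Integrable ((A n).indicator (Z n)) P := (hZint n).indicator (hAm n)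
    have hdiffint : Integrable (fun ω => Z N ω - Z n ω) P := (hZint N).sub (hZint n)
    have hdiffmean : ∫ ω, (Z N ω - Z n ω) ∂P = 0 := by
      rw [integral_sub (hZint N) (hZint n), hZmean N, hZmean n]; ring
    have hzero : ∫ ω, (A n).indicator (Z n) ω * (Z N ω - Z n ω) ∂P = 0 := by
      rw [show (fun ω => (A n).indicator (Z n) ω * (Z N ω - Z n ω))
          = ((A n).indicator (Z n) * fun ω => Z N ω - Z n ω) from rfl,
        hInd.integral_mul_eq_mul_integral hindint.aestronglyMeasurable hdiffint.aestronglyMeasurable, hdiffmean, mul_zero]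
    have hprodint : Integrable (fun ω => Z n ω * (Z N ω - Z n ω)) P := by
      refine integrable_of_abs_le' ((hZm n).mul ((hZm N).sub (hZm n)))
        (C := ((Finset.Ico a n).card * C) *
          ((Finset.Ico a N).card * C + (Finset.Ico a n).card * C)) fun ω => ?_
      rw [abs_mul]
      refine mul_le_mul (hZbdd n ω) ?_ (abs_nonneg _) ((abs_nonneg _).trans (hZbdd n ω))
      exact (abs_sub _ _).trans (add_le_add (hZbdd N ω) (hZbdd n ω))
    have hreal : lam ^ 2 * (P (A n)).toReal ≤ ∫ ω in A n, Z N ω ^ 2 ∂P := by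
      have h1 : ∫ _ω in A n, (lam ^ 2) ∂P = lam ^ 2 * (P (A n)).toReal := by
        rw [setIntegral_const, smul_eq_mul, measureReal_def]; ring
      have h2' : ∫ _ω in A n, (lam ^ 2) ∂P ≤ ∫ ω in A n, Z n ω ^ 2 ∂P := by
        refine setIntegral_mono_on (integrableOn_const (measure_ne_top _ _))
          (hsq_int n).integrableOn (hAm n) fun ω hω => ?_
        calc lam ^ 2 ≤ |Z n ω| ^ 2 := pow_le_pow_left₀ hlam.le hω.1 2
        _ = Z n ω ^ 2 := sq_abs _
      have h4 : ∫ ω in A n, Z n ω * (Z N ω - Z n ω) ∂P = 0 := by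
        rw [← integral_indicator (hAm n),
          show (A n).indicator (fun ω => Z n ω * (Z N ω - Z n ω))
            = fun ω => (A n).indicator (Z n) ω * (Z N ω - Z n ω) from
            funext fun ω => Set.indicator_mul_left _ _ _]
        exact hzero
      have h6 : ∫ ω in A n, (Z n ω ^ 2 + 2 * (Z n ω * (Z N ω - Z n ω))) ∂P
          = ∫ ω in A n, Z n ω ^ 2 ∂P + 2 * ∫ ω in A n, Z n ω * (Z N ω - Z n ω) ∂P := by
        rw [integral_add (hsq_int n).integrableOn (hprodint.const_mul 2).integrableOn,
          integral_const_mul]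
      have h5 : ∫ ω in A n, (Z n ω ^ 2 + 2 * (Z n ω * (Z N ω - Z n ω))) ∂P
          ≤ ∫ ω in A n, Z N ω ^ 2 ∂P := by
        refine setIntegral_mono ((hsq_int n).add (hprodint.const_mul 2)).integrableOn
          (hsq_int N).integrableOn fun ω => ?_
        nlinarith [sq_nonneg (Z N ω - Z n ω)]
      linarith
    calc ENNReal.ofReal (lam ^ 2) * P (A n)
        = ENNReal.ofReal (lam ^ 2 * (P (A n)).toReal) := by
          rw [ENNReal.ofReal_mul (by positivity), ENNReal.ofReal_toReal (measure_ne_top P _)]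
      _ ≤ ENNReal.ofReal (∫ ω in A n, Z N ω ^ 2 ∂P) := ENNReal.ofReal_le_ofReal hreal
  -- sum up
  have hvar1 : variance (Z N) P = ∫ ω, Z N ω ^ 2 ∂P := by
    rw [variance_of_integral_eq_zero (hZm N).aemeasurable (hZmean N)]
  have hvar2 : variance (Z N) P = ∑ i ∈ Finset.Ico a N, variance (Y i) P := by
    have he : Z N = ∑ i ∈ Finset.Ico a N, Y i := by
      funext ω; rw [hZdef]; simp [Finset.sum_apply]
    rw [he]
    exact IndepFun.variance_sum (fun i _ => memLp_two_of_abs_le' (hYm i) (hbdd i))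
      (fun i _ j _ hij => hind.indepFun hij)
  rw [hEeq, measure_biUnion_finset hAdisj (fun n _ => hAm n), Finset.mul_sum]
  calc ∑ n ∈ Finset.range (N + 1), ENNReal.ofReal (lam ^ 2) * P (A n)
      ≤ ∑ n ∈ Finset.range (N + 1), ENNReal.ofReal (∫ ω in A n, Z N ω ^ 2 ∂P) :=
        Finset.sum_le_sum fun n hn => key n (Nat.lt_succ_iff.mp (Finset.mem_range.1 hn))
    _ = ENNReal.ofReal (∑ n ∈ Finset.range (N + 1), ∫ ω in A n, Z N ω ^ 2 ∂P) :=
        (ENNReal.ofReal_sum_of_nonneg fun n _ =>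
          setIntegral_nonneg (hAm n) fun ω _ => sq_nonneg _).symm
    _ = ENNReal.ofReal (∫ ω in ⋃ n ∈ Finset.range (N + 1), A n, Z N ω ^ 2 ∂P) := by
        rw [integral_biUnion_finset _ (fun n _ => hAm n) hAdisj
          (fun n _ => (hsq_int N).integrableOn)]
    _ ≤ ENNReal.ofReal (∫ ω, Z N ω ^ 2 ∂P) :=
        ENNReal.ofReal_le_ofReal
          (setIntegral_le_integral (hsq_int N) (ae_of_all _ fun ω => sq_nonneg _))
    _ = ENNReal.ofReal (∑ i ∈ Finset.Ico a N, variance (Y i) P) := by rw [← hvar1, hvar2]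

lemma kolmogorov_inf (Y : ℕ → Ω → ℝ) (hYm : ∀ n, Measurable (Y n))
    (hind : iIndepFun Y P) {C : ℝ}
    (hbdd : ∀ n ω, |Y n ω| ≤ C) (hmean : ∀ n, ∫ ω, Y n ω ∂P = 0)
    (a : ℕ) {lam : ℝ} (hlam : 0 < lam) {V : ENNReal}
    (hV : ∀ N, ENNReal.ofReal (∑ i ∈ Finset.Ico a N, variance (Y i) P) ≤ V) :
    ENNReal.ofReal (lam ^ 2) * P {ω | ∃ n, lam ≤ |∑ i ∈ Finset.Ico a n, Y i ω|} ≤ V := by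
  have hmono : Monotone (fun N => {ω | ∃ n ≤ N, lam ≤ |∑ i ∈ Finset.Ico a n, Y i ω|}) := by
    rintro N M hNM ω ⟨n, hn, h⟩
    exact ⟨n, hn.trans hNM, h⟩
  have hU : {ω | ∃ n, lam ≤ |∑ i ∈ Finset.Ico a n, Y i ω|} =
      ⋃ N, {ω | ∃ n ≤ N, lam ≤ |∑ i ∈ Finset.Ico a n, Y i ω|} := by
    ext ω
    simp only [Set.mem_setOf_eq, Set.mem_iUnion]
    exact ⟨fun ⟨n, h⟩ => ⟨n, n, le_rfl, h⟩, fun ⟨N, n, _, h⟩ => ⟨n, h⟩⟩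
  rw [hU, hmono.measure_iUnion, ENNReal.mul_iSup]
  exact iSup_le fun N => (kolmogorov_finite Y hYm hind hbdd hmean a N hlam).trans (hV N)

end aux

/-- Distribution-uniform Kolmogorov three-series theorem: if the tails of the three series
(of truncated means, truncated variances, and exceedance probabilities) vanish Ps-uniformly
for some truncation level `c > 0`, then the partial sums are Ps-uniformly Cauchy. -/
theorem stmt2 {Ω : Type*} [MeasurableSpace Ω] (Ps : Set (Measure Ω))
    (hPs : ∀ P ∈ Ps, IsProbabilityMeasure P)
    (X : ℕ → Ω → ℝ) (hmeas : ∀ n, Measurable (X n))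
    (hindep : ∀ P ∈ Ps, iIndepFun X P)
    (c : ℝ) (hc : 0 < c)
    (hseries1 : ∀ ε : ℝ, 0 < ε → ∃ M : ℕ, ∀ m ≥ M, ∀ P ∈ Ps,
      ∑' k : ℕ, ENNReal.ofReal
        |∫ ω, (if |X (m + k) ω| ≤ c then X (m + k) ω else 0) ∂P| < ENNReal.ofReal ε)
    (hseries2 : ∀ ε : ℝ, 0 < ε → ∃ M : ℕ, ∀ m ≥ M, ∀ P ∈ Ps,
      ∑' k : ℕ, ENNReal.ofReal
        (variance (fun ω => if |X (m + k) ω| ≤ c then X (m + k) ω else 0) P) <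
        ENNReal.ofReal ε)
    (hseries3 : ∀ ε : ℝ, 0 < ε → ∃ M : ℕ, ∀ m ≥ M, ∀ P ∈ Ps,
      ∑' k : ℕ, P {ω | c < |X (m + k) ω|} < ENNReal.ofReal ε) :
    ∀ ε : ℝ, 0 < ε → ∀ δ : ℝ, 0 < δ → ∃ M : ℕ, ∀ m ≥ M, ∀ P ∈ Ps,
      P {ω | ∃ k ≥ m, ∃ n ≥ m, ε ≤
        |(∑ i ∈ Finset.Icc 1 k, X i ω) - (∑ i ∈ Finset.Icc 1 n, X i ω)|} <
        ENNReal.ofReal δ := by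
  intro ε hε δ hδ
  obtain ⟨M1, hM1⟩ := hseries1 (ε / 4) (by positivity)
  obtain ⟨M2, hM2⟩ := hseries2 (δ / 2 * (ε / 4) ^ 2) (by positivity)
  obtain ⟨M3, hM3⟩ := hseries3 (δ / 2) (by positivity)
  refine ⟨max M1 (max M2 M3), fun m hm P hP => ?_⟩
  haveI : IsProbabilityMeasure P := hPs P hP
  classical
  set Y : ℕ → Ω → ℝ := fun n ω => if |X n ω| ≤ c then X n ω else 0 with hYdef
  have hYeq : ∀ n ω, (if |X n ω| ≤ c then X n ω else 0) = Y n ω := fun n ω => by rw [hYdef]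
  have hYm : ∀ n, Measurable (Y n) := fun n =>
    Measurable.ite (measurableSet_le (hmeas n).abs measurable_const) (hmeas n) measurable_const
  have hYbdd : ∀ n ω, |Y n ω| ≤ c := fun n ω => by
    rw [hYdef]
    dsimp only
    split_ifs with h
    · exact h
    · simpa using hc.le
  have hYint : ∀ n, Integrable (Y n) P := fun n => integrable_of_abs_le' (hYm n) (hYbdd n)
  set μ_ : ℕ → ℝ := fun n => ∫ ω, Y n ω ∂P with hmudef
  have hmueq : ∀ n, ∫ ω, Y n ω ∂P = μ_ n := fun n => by rw [hmudef]
  have hmu_bdd : ∀ n, |μ_ n| ≤ c := fun n => by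
    rw [hmudef]
    calc |∫ ω, Y n ω ∂P| = ‖∫ ω, Y n ω ∂P‖ := (Real.norm_eq_abs _).symm
    _ ≤ c * (P Set.univ).toReal := norm_integral_le_of_norm_le_const
        (ae_of_all _ fun ω => by simpa [Real.norm_eq_abs] using hYbdd n ω)
    _ = c := by simp
  set W : ℕ → Ω → ℝ := fun n ω => Y n ω - μ_ n with hWdef
  have hWm : ∀ n, Measurable (W n) := fun n => (hYm n).sub measurable_const
  have hWbdd : ∀ n ω, |W n ω| ≤ c + c := fun n ω => by
    rw [hWdef]
    exact (abs_sub _ _).trans (add_le_add (hYbdd n ω) (hmu_bdd n))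
  have hWmean : ∀ n, ∫ ω, W n ω ∂P = 0 := fun n => by
    rw [hWdef]
    dsimp only
    rw [integral_sub (hYint n) (integrable_const _), integral_const, hmueq n]
    simp [measure_univ]
  have hWindep : iIndepFun W P := by
    have base := (hindep P hP).comp (fun n x => (if |x| ≤ c then x else 0) - μ_ n)
      (fun n => (Measurable.ite (measurableSet_le measurable_abs measurable_const)
        measurable_id measurable_const).sub measurable_const)
    have heq : (fun i => (fun x => (if |x| ≤ c then x else 0) - μ_ i) ∘ X i) = W := by
      funext i ω
      simp [hWdef, hYdef, Function.comp]
    rwa [heq] at base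
  have hWvar : ∀ n, variance (W n) P = variance (Y n) P := fun n => by
    have hY2 : MemLp (Y n) 2 P := memLp_two_of_abs_le' (hYm n) (hYbdd n)
    have hW2 : MemLp (W n) 2 P := memLp_two_of_abs_le' (hWm n) (hWbdd n)
    rw [variance_eq_integral (hWm n).aemeasurable, variance_eq_integral (hYm n).aemeasurable]
    congr 1
    funext ω
    rw [hWmean n, hmueq n]
    simp only [hWdef]
    ring
  -- specialize the series hypotheses at m + 1
  have h1 := hM1 (m + 1) (le_trans (le_max_left _ _) (hm.trans (Nat.le_succ m))) P hP
  have h2 := hM2 (m + 1)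
    (le_trans (le_trans (le_max_left _ _) (le_max_right M1 _)) (hm.trans (Nat.le_succ m))) P hP
  have h3 := hM3 (m + 1)
    (le_trans (le_trans (le_max_right _ _) (le_max_right M1 _)) (hm.trans (Nat.le_succ m))) P hP
  simp only [hYeq, hmueq] at h1 h2
  -- tail bound for the truncated means
  have hmu_tail : ∀ t, ∑ i ∈ Finset.Ico (m + 1) t, |μ_ i| < ε / 4 := by
    intro t
    have h0 : ENNReal.ofReal (∑ i ∈ Finset.Ico (m + 1) t, |μ_ i|)
        = ∑ i ∈ Finset.Ico (m + 1) t, ENNReal.ofReal |μ_ i| :=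
      ENNReal.ofReal_sum_of_nonneg fun i _ => abs_nonneg _
    have hlt : ENNReal.ofReal (∑ i ∈ Finset.Ico (m + 1) t, |μ_ i|)
        < ENNReal.ofReal (ε / 4) := by
      rw [h0, Finset.sum_Ico_eq_sum_range]
      exact lt_of_le_of_lt (ENNReal.sum_le_tsum _) h1
    exact (ENNReal.ofReal_lt_ofReal_iff (by positivity)).mp hlt
  -- the exceptional set
  set Aset : Set Ω := ⋃ k : ℕ, {ω | c < |X (m + 1 + k) ω|} with hAsetdef
  have hPA : P Aset < ENNReal.ofReal (δ / 2) := lt_of_le_of_lt (measure_iUnion_le _) h3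
  -- the maximal set for centered truncated sums
  set G : Set Ω := {ω | ∃ n, ε / 4 ≤ |∑ i ∈ Finset.Ico (m + 1) n, W i ω|} with hGdef
  have hVb : ∀ N, ENNReal.ofReal (∑ i ∈ Finset.Ico (m + 1) N, variance (W i) P)
      ≤ ∑' k, ENNReal.ofReal (variance (Y (m + 1 + k)) P) := by
    intro N
    calc ENNReal.ofReal (∑ i ∈ Finset.Ico (m + 1) N, variance (W i) P)
        = ∑ i ∈ Finset.Ico (m + 1) N, ENNReal.ofReal (variance (W i) P) :=
          ENNReal.ofReal_sum_of_nonneg fun i _ => variance_nonneg _ _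
      _ = ∑ i ∈ Finset.Ico (m + 1) N, ENNReal.ofReal (variance (Y i) P) := by
          exact Finset.sum_congr rfl fun i _ => by rw [hWvar i]
      _ = ∑ k ∈ Finset.range (N - (m + 1)), ENNReal.ofReal (variance (Y (m + 1 + k)) P) := by
          rw [Finset.sum_Ico_eq_sum_range]
      _ ≤ _ := ENNReal.sum_le_tsum _
  have hKol := kolmogorov_inf W hWm hWindep hWbdd hWmean (m + 1)
    (show (0 : ℝ) < ε / 4 by positivity) hVb
  have hPG : P G < ENNReal.ofReal (δ / 2) := by
    have hx0 : ENNReal.ofReal ((ε / 4) ^ 2) ≠ 0 :=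
      (ENNReal.ofReal_pos.mpr (by positivity)).ne'
    have hmul : ENNReal.ofReal ((ε / 4) ^ 2) * P G
        < ENNReal.ofReal ((ε / 4) ^ 2) * ENNReal.ofReal (δ / 2) := by
      calc ENNReal.ofReal ((ε / 4) ^ 2) * P G
          ≤ ∑' k, ENNReal.ofReal (variance (Y (m + 1 + k)) P) := hKol
        _ < ENNReal.ofReal (δ / 2 * (ε / 4) ^ 2) := h2
        _ = ENNReal.ofReal ((ε / 4) ^ 2) * ENNReal.ofReal (δ / 2) := by
            rw [mul_comm, ENNReal.ofReal_mul (by positivity)]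
    exact (ENNReal.mul_lt_mul_iff_right hx0 ENNReal.ofReal_ne_top).mp hmul
  -- inclusion of the Cauchy-failure event
  have hincl : {ω | ∃ k ≥ m, ∃ n ≥ m, ε ≤
      |(∑ i ∈ Finset.Icc 1 k, X i ω) - (∑ i ∈ Finset.Icc 1 n, X i ω)|} ⊆ Aset ∪ G := by
    intro ω hω
    by_cases hA : ω ∈ Aset
    · exact Or.inl hA
    right
    rw [hAsetdef] at hA
    simp only [Set.mem_iUnion, Set.mem_setOf_eq, not_exists, not_lt] at hA
    have hXY : ∀ i, m + 1 ≤ i → X i ω = Y i ω := by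
      intro i hi
      have h := hA (i - (m + 1))
      rw [show m + 1 + (i - (m + 1)) = i by omega] at h
      simp only [hYdef]
      rw [if_pos h]
    have main : ∀ k n : ℕ, m ≤ n → n ≤ k →
        ε ≤ |(∑ i ∈ Finset.Icc 1 k, X i ω) - (∑ i ∈ Finset.Icc 1 n, X i ω)| → ω ∈ G := by
      intro k n hn hnk hkn
      have hIccIoc : ∀ t : ℕ, Finset.Icc 1 t = Finset.Ioc 0 t := fun t => by
        ext i
        simp only [Finset.mem_Icc, Finset.mem_Ioc]
        omega
      have hsplit : (∑ i ∈ Finset.Icc 1 k, X i ω) - (∑ i ∈ Finset.Icc 1 n, X i ω)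
          = ∑ i ∈ Finset.Ioc n k, X i ω := by
        rw [hIccIoc k, hIccIoc n,
          ← Finset.sum_Ioc_consecutive (fun i => X i ω) (Nat.zero_le n) hnk]
        ring
      rw [hsplit] at hkn
      have hXYsum : ∑ i ∈ Finset.Ioc n k, X i ω = ∑ i ∈ Finset.Ioc n k, Y i ω :=
        Finset.sum_congr rfl fun i hi =>
          hXY i (by have := (Finset.mem_Ioc.mp hi).1; omega)
      have hUsplit : ∑ i ∈ Finset.Ioc n k, Y i ω
          = (∑ i ∈ Finset.Ioc m k, Y i ω) - ∑ i ∈ Finset.Ioc m n, Y i ω := by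
        rw [← Finset.sum_Ioc_consecutive (fun i => Y i ω) hn hnk]
        ring
      rw [hXYsum, hUsplit] at hkn
      have hbig : ε / 2 ≤ |∑ i ∈ Finset.Ioc m k, Y i ω|
          ∨ ε / 2 ≤ |∑ i ∈ Finset.Ioc m n, Y i ω| := by
        by_contra hcon
        push_neg at hcon
        have htri := abs_sub (∑ i ∈ Finset.Ioc m k, Y i ω) (∑ i ∈ Finset.Ioc m n, Y i ω)
        linarith [hcon.1, hcon.2]
      have final : ∀ t, ε / 2 ≤ |∑ i ∈ Finset.Ioc m t, Y i ω| → ω ∈ G := by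
        intro t ht
        have hIoc : Finset.Ioc m t = Finset.Ico (m + 1) (t + 1) := by
          ext i
          simp only [Finset.mem_Ioc, Finset.mem_Ico]
          omega
        have hUW : ∑ i ∈ Finset.Ioc m t, Y i ω
            = (∑ i ∈ Finset.Ico (m + 1) (t + 1), W i ω)
              + ∑ i ∈ Finset.Ico (m + 1) (t + 1), μ_ i := by
          rw [hIoc, ← Finset.sum_add_distrib]
          refine Finset.sum_congr rfl fun i _ => ?_
          rw [hWdef]
          ring
        have habs : |∑ i ∈ Finset.Ico (m + 1) (t + 1), μ_ i| < ε / 4 :=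
          lt_of_le_of_lt (Finset.abs_sum_le_sum_abs _ _) (hmu_tail (t + 1))
        rw [hGdef]
        refine ⟨t + 1, ?_⟩
        rw [hUW] at ht
        have htri := abs_add_le (∑ i ∈ Finset.Ico (m + 1) (t + 1), W i ω)
          (∑ i ∈ Finset.Ico (m + 1) (t + 1), μ_ i)
        linarith
      rcases hbig with h | h
      · exact final k h
      · exact final n h
    obtain ⟨k, hk, n, hn, hkn⟩ := hω
    rcases le_total n k with h | h
    · exact main k n hn h hkn
    · exact main n k hk h (by rwa [abs_sub_comm])
  calc P {ω | ∃ k ≥ m, ∃ n ≥ m, ε ≤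
      |(∑ i ∈ Finset.Icc 1 k, X i ω) - (∑ i ∈ Finset.Icc 1 n, X i ω)|}
      ≤ P (Aset ∪ G) := measure_mono hincl
    _ ≤ P Aset + P G := measure_union_le _ _
    _ < ENNReal.ofReal (δ / 2) + ENNReal.ofReal (δ / 2) := ENNReal.add_lt_add hPA hPG
    _ = ENNReal.ofReal δ := by
        rw [← ENNReal.ofReal_add (by positivity) (by positivity)]
        norm_num
end

section
/- Let (Z_n) be random variables that are independent under each P in a family 𝒫. Define Z_{n,B}^{≤1} := (Z_n/B)·1{|Z_n/B| ≤ 1}. Suppose: lim_{B→∞} sup_{P∈𝒫} Σ_{n=1}^∞ |E_P Z_{n,B}^{≤1}| = 0, lim_{B→∞} sup_{P∈𝒫} Σ_{n=1}^∞ Var_P Z_{n,B}^{≤1} = 0, and lim_{B→∞} sup_{P∈𝒫} Σ_{n=1}^∞ P(|Z_n| > B) = 0. Then the partial sums S_n = Σ_{k=1}^n Z_k are 𝒫-uniformly stochastically nonincreasing: for every δ > 0 there exists B_δ > 0 such that sup_{P∈𝒫} P(|S_n| ≥ B_δ) < δ for all n ≥ 1. -/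
open MeasureTheory ProbabilityTheory Filter

/-- A three-series theorem for Ps-uniform stochastic nonincreasingness: if the three series of
truncated-and-rescaled means, variances, and exceedance probabilities vanish Ps-uniformly as the
scale `B → ∞`, then the partial sums are Ps-uniformly stochastically nonincreasing. -/
theorem stmt3 {Ω : Type*} [MeasurableSpace Ω] (Ps : Set (Measure Ω))
    (hPs : ∀ P ∈ Ps, IsProbabilityMeasure P)
    (Z : ℕ → Ω → ℝ) (hmeas : ∀ n, Measurable (Z n))
    (hindep : ∀ P ∈ Ps, iIndepFun Z P)
    (hseries1 : ∀ ε : ℝ, 0 < ε → ∃ B₀ : ℝ, ∀ B ≥ B₀, ∀ P ∈ Ps,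
      ∑' n : ℕ, ENNReal.ofReal
        |∫ ω, (if |Z (n + 1) ω / B| ≤ 1 then Z (n + 1) ω / B else 0) ∂P| <
        ENNReal.ofReal ε)
    (hseries2 : ∀ ε : ℝ, 0 < ε → ∃ B₀ : ℝ, ∀ B ≥ B₀, ∀ P ∈ Ps,
      ∑' n : ℕ, ENNReal.ofReal
        (variance (fun ω => if |Z (n + 1) ω / B| ≤ 1 then Z (n + 1) ω / B else 0) P) <
        ENNReal.ofReal ε)
    (hseries3 : ∀ ε : ℝ, 0 < ε → ∃ B₀ : ℝ, ∀ B ≥ B₀, ∀ P ∈ Ps,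
      ∑' n : ℕ, P {ω | B < |Z (n + 1) ω|} < ENNReal.ofReal ε) :
    ∀ δ : ℝ, 0 < δ → ∃ Bδ : ℝ, 0 < Bδ ∧ ∀ n : ℕ, 1 ≤ n → ∀ P ∈ Ps,
      P {ω | Bδ ≤ |∑ k ∈ Finset.Icc 1 n, Z k ω|} < ENNReal.ofReal δ := by
  intro δ hδ
  obtain ⟨B₁, h1⟩ := hseries1 (1/2) (by norm_num)
  obtain ⟨B₂, h2⟩ := hseries2 (δ/12) (by positivity)
  obtain ⟨B₃, h3⟩ := hseries3 (δ/3) (by positivity)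
  set B : ℝ := max (max B₁ B₂) (max B₃ 1) with hBdef
  have hB1 : (1:ℝ) ≤ B := le_max_of_le_right (le_max_right _ _)
  have hBpos : (0:ℝ) < B := lt_of_lt_of_le one_pos hB1
  have hB₁ : B₁ ≤ B := le_max_of_le_left (le_max_left _ _)
  have hB₂ : B₂ ≤ B := le_max_of_le_left (le_max_right _ _)
  have hB₃ : B₃ ≤ B := le_max_of_le_right (le_max_left _ _)
  refine ⟨B, hBpos, ?_⟩
  intro n _hn P hP
  haveI := hPs P hP
  -- truncation map and truncated variables
  set φ : ℝ → ℝ := fun x => if |x / B| ≤ 1 then x / B else 0 with hφdef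
  have hφmeas : Measurable φ := by
    apply Measurable.ite
    · exact measurableSet_le (measurable_id.div_const B).abs measurable_const
    · exact measurable_id.div_const B
    · exact measurable_const
  set Y : ℕ → Ω → ℝ := fun k ω => φ (Z k ω) with hYdef
  have hYmeas : ∀ k, Measurable (Y k) := fun k => hφmeas.comp (hmeas k)
  have hYbd : ∀ k ω, ‖Y k ω‖ ≤ 1 := by
    intro k ω
    simp only [hYdef, hφdef, Real.norm_eq_abs]
    split_ifs with h
    · exact h
    · simp
  have hYmem : ∀ k, MemLp (Y k) 2 P := fun k =>
    (memLp_top_of_bound (hYmeas k).aestronglyMeasurable 1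
      (Filter.Eventually.of_forall (hYbd k))).mono_exponent le_top
  have hYint : ∀ k, Integrable (Y k) P := fun k => (hYmem k).integrable one_le_two
  have hYindep : iIndepFun Y P :=
    (hindep P hP).comp (fun _ => φ) (fun _ => hφmeas)
  -- reindexing helper
  have reindex : ∀ g : ℕ → ENNReal, ∑ k ∈ Finset.Icc 1 n, g k = ∑ i ∈ Finset.range n, g (i + 1) := by
    intro g
    rw [show Finset.Icc 1 n = Finset.Ico 1 (n+1) by rfl, Finset.sum_Ico_eq_sum_range]
    simp [add_comm]
  -- bound on the sum of |means|
  have mean_bound : ∑ k ∈ Finset.Icc 1 n, |∫ ω, Y k ω ∂P| < 1/2 := by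
    have key : ENNReal.ofReal (∑ k ∈ Finset.Icc 1 n, |∫ ω, Y k ω ∂P|) < ENNReal.ofReal (1/2) := by
      rw [ENNReal.ofReal_sum_of_nonneg (fun i _ => abs_nonneg _), reindex]
      calc ∑ i ∈ Finset.range n, ENNReal.ofReal |∫ ω, Y (i+1) ω ∂P|
          ≤ ∑' i : ℕ, ENNReal.ofReal |∫ ω, Y (i+1) ω ∂P| := ENNReal.sum_le_tsum _
        _ < ENNReal.ofReal (1/2) := h1 B hB₁ P hP
    have := (ENNReal.ofReal_lt_ofReal_iff (by norm_num)).mp key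
    exact this
  -- bound on the sum of variances
  have var_bound : ∑ k ∈ Finset.Icc 1 n, variance (Y k) P < δ/12 := by
    have key : ENNReal.ofReal (∑ k ∈ Finset.Icc 1 n, variance (Y k) P) < ENNReal.ofReal (δ/12) := by
      rw [ENNReal.ofReal_sum_of_nonneg (fun i _ => variance_nonneg _ _), reindex]
      calc ∑ i ∈ Finset.range n, ENNReal.ofReal (variance (Y (i+1)) P)
          ≤ ∑' i : ℕ, ENNReal.ofReal (variance (Y (i+1)) P) := ENNReal.sum_le_tsum _
        _ < ENNReal.ofReal (δ/12) := h2 B hB₂ P hP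
    exact (ENNReal.ofReal_lt_ofReal_iff (by positivity)).mp key
  -- bound on exceedance probabilities
  have exc_bound : ∑ k ∈ Finset.Icc 1 n, P {ω | B < |Z k ω|} < ENNReal.ofReal (δ/3) := by
    rw [reindex]
    calc ∑ i ∈ Finset.range n, P {ω | B < |Z (i+1) ω|}
        ≤ ∑' i : ℕ, P {ω | B < |Z (i+1) ω|} := ENNReal.sum_le_tsum _
      _ < ENNReal.ofReal (δ/3) := h3 B hB₃ P hP
  -- the truncated sum
  set T : Ω → ℝ := ∑ k ∈ Finset.Icc 1 n, Y k with hTdef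
  have hTmem : MemLp T 2 P := memLp_finsetSum' _ (fun k _ => hYmem k)
  have hTmean : |∫ ω, T ω ∂P| ≤ ∑ k ∈ Finset.Icc 1 n, |∫ ω, Y k ω ∂P| := by
    have : ∫ ω, T ω ∂P = ∑ k ∈ Finset.Icc 1 n, ∫ ω, Y k ω ∂P := by
      simp only [hTdef]
      rw [← integral_finset_sum _ (fun k _ => hYint k)]
      simp [Finset.sum_apply]
    rw [this]
    exact Finset.abs_sum_le_sum_abs _ _
  have hTvar : variance T P = ∑ k ∈ Finset.Icc 1 n, variance (Y k) P :=
    IndepFun.variance_sum (fun k _ => hYmem k)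
      (fun i _ j _ hij => hYindep.indepFun hij)
  -- Chebyshev
  have cheb : P {ω | 1/2 ≤ |T ω - ∫ ω, T ω ∂P|} ≤ ENNReal.ofReal (δ/3) := by
    calc P {ω | 1/2 ≤ |T ω - ∫ ω, T ω ∂P|}
        ≤ ENNReal.ofReal (variance T P / (1/2)^2) :=
          meas_ge_le_variance_div_sq hTmem (by norm_num)
      _ ≤ ENNReal.ofReal (δ/3) := by
          apply ENNReal.ofReal_le_ofReal
          rw [hTvar]
          have h4 : (∑ k ∈ Finset.Icc 1 n, variance (Y k) P) / (1/2:ℝ)^2 =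
              4 * ∑ k ∈ Finset.Icc 1 n, variance (Y k) P := by ring
          rw [h4]
          linarith [var_bound]
  -- event inclusion
  have incl : {ω | B ≤ |∑ k ∈ Finset.Icc 1 n, Z k ω|} ⊆
      (⋃ k ∈ Finset.Icc 1 n, {ω | B < |Z k ω|}) ∪ {ω | 1/2 ≤ |T ω - ∫ ω, T ω ∂P|} := by
    intro ω hω
    by_cases h : ∃ k ∈ Finset.Icc 1 n, B < |Z k ω|
    · left
      obtain ⟨k, hk, hk'⟩ := h
      exact Set.mem_biUnion hk hk'
    · right
      push_neg at h
      have hYeq : ∀ k ∈ Finset.Icc 1 n, Y k ω = Z k ω / B := by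
        intro k hk
        simp only [hYdef, hφdef]
        rw [if_pos]
        rw [abs_div, abs_of_pos hBpos, div_le_one hBpos]
        exact h k hk
      have hT : T ω = (∑ k ∈ Finset.Icc 1 n, Z k ω) / B := by
        simp only [hTdef, Finset.sum_apply]
        rw [Finset.sum_congr rfl hYeq, Finset.sum_div]
      have h1T : 1 ≤ |T ω| := by
        rw [hT, abs_div, abs_of_pos hBpos, le_div_iff₀ hBpos, one_mul]
        exact hω
      have := abs_sub_abs_le_abs_sub (T ω) (∫ ω, T ω ∂P)
      have hm : |∫ ω, T ω ∂P| ≤ 1/2 := hTmean.trans mean_bound.le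
      simp only [Set.mem_setOf_eq]
      linarith
  -- put everything together
  calc P {ω | B ≤ |∑ k ∈ Finset.Icc 1 n, Z k ω|}
      ≤ P ((⋃ k ∈ Finset.Icc 1 n, {ω | B < |Z k ω|}) ∪ {ω | 1/2 ≤ |T ω - ∫ ω, T ω ∂P|}) :=
        measure_mono incl
    _ ≤ P (⋃ k ∈ Finset.Icc 1 n, {ω | B < |Z k ω|}) + P {ω | 1/2 ≤ |T ω - ∫ ω, T ω ∂P|} :=
        measure_union_le _ _
    _ ≤ (∑ k ∈ Finset.Icc 1 n, P {ω | B < |Z k ω|}) + P {ω | 1/2 ≤ |T ω - ∫ ω, T ω ∂P|} :=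
        add_le_add_left (measure_biUnion_finset_le _ _) _
    _ ≤ ENNReal.ofReal (δ/3) + ENNReal.ofReal (δ/3) := add_le_add exc_bound.le cheb
    _ = ENNReal.ofReal (δ/3 + δ/3) := (ENNReal.ofReal_add (by positivity) (by positivity)).symm
    _ < ENNReal.ofReal δ := (ENNReal.ofReal_lt_ofReal_iff hδ).mpr (by linarith)
end

section
/- Let (Z_n) be random variables on (Ω, F, 𝒫) whose partial sums S_n = Σ_{i=1}^n Z_i are both a 𝒫-uniform Cauchy sequence and 𝒫-uniformly stochastically nonincreasing. Let (b_n) be positive, nondecreasing, and diverging to ∞. Then (1/b_n) Σ_{i=1}^n b_i Z_i vanishes 𝒫-uniformly almost surely: for every ε > 0, lim_{m→∞} sup_{P∈𝒫} P( sup_{k ≥ m} |(1/b_k) Σ_{i=1}^k b_i Z_i| ≥ ε ) = 0. -/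
open MeasureTheory ProbabilityTheory Filter
section aux
open Finset

lemma abel_sum (b z : ℕ → ℝ) (k : ℕ) :
    b k * (∑ i ∈ Icc 1 k, z i) =
      (∑ i ∈ Icc 1 k, b i * z i)
        + ∑ i ∈ Ico 1 k, (b (i+1) - b i) * (∑ j ∈ Icc 1 i, z j) := by
  induction k with
  | zero => simp
  | succ k ih =>
    rcases Nat.eq_zero_or_pos k with hk | hk
    · subst hk; simp
    · rw [Finset.sum_Icc_succ_top (by omega : 1 ≤ k + 1),
        Finset.sum_Icc_succ_top (by omega : 1 ≤ k + 1),
        Finset.sum_Ico_succ_top (by omega : 1 ≤ k)]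
      nlinarith [ih]

lemma telescope_sum (b : ℕ → ℝ) (k : ℕ) (hk : 1 ≤ k) :
    ∑ i ∈ Ico 1 k, (b (i+1) - b i) = b k - b 1 := by
  induction k with
  | zero => omega
  | succ k ih =>
    rcases Nat.eq_zero_or_pos k with hk' | hk'
    · subst hk'; simp
    · rw [Finset.sum_Ico_succ_top (by omega : 1 ≤ k), ih hk']; ring

lemma abel_sum' (b z : ℕ → ℝ) (k : ℕ) (hk : 1 ≤ k) :
    (∑ i ∈ Icc 1 k, b i * z i) =
      b 1 * (∑ j ∈ Icc 1 k, z j)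
        + ∑ i ∈ Ico 1 k, (b (i+1) - b i) * ((∑ j ∈ Icc 1 k, z j) - (∑ j ∈ Icc 1 i, z j)) := by
  have h1 := abel_sum b z k
  have h2 := telescope_sum b k hk
  have h3 : ∑ i ∈ Ico 1 k, (b (i+1) - b i) * ((∑ j ∈ Icc 1 k, z j) - (∑ j ∈ Icc 1 i, z j))
      = (∑ i ∈ Ico 1 k, (b (i+1) - b i)) * (∑ j ∈ Icc 1 k, z j)
        - ∑ i ∈ Ico 1 k, (b (i+1) - b i) * (∑ j ∈ Icc 1 i, z j) := by
    rw [Finset.sum_mul, ← Finset.sum_sub_distrib]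
    exact Finset.sum_congr rfl fun i _ => by ring
  rw [h3, h2]; linarith

/-- Key deterministic bound. -/
lemma key_bound (b z : ℕ → ℝ) (hbpos : ∀ n, 0 < b n) (hbmono : Monotone b)
    (N k : ℕ) (hN : 1 ≤ N) (hk : N ≤ k) (B' ε2 : ℝ) (hB' : 0 ≤ B') (hε2 : 0 ≤ ε2)
    (hS : ∀ n, |∑ j ∈ Icc 1 n, z j| ≤ B')
    (hclose : ∀ i, N ≤ i → i ≤ k →
      |(∑ j ∈ Icc 1 k, z j) - (∑ j ∈ Icc 1 i, z j)| ≤ ε2) :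
    |(b k)⁻¹ * ∑ i ∈ Icc 1 k, b i * z i| ≤ 3 * b N * B' / b k + ε2 := by
  have hbk := hbpos k
  have habs : |(b k)⁻¹ * ∑ i ∈ Icc 1 k, b i * z i|
      = |∑ i ∈ Icc 1 k, b i * z i| / b k := by
    rw [abs_mul, abs_inv, abs_of_pos hbk]; ring
  rw [habs]
  rw [div_add' _ _ _ (ne_of_gt hbk)] at *
  rw [div_le_div_iff₀ hbk hbk]
  have hmain : |∑ i ∈ Icc 1 k, b i * z i| ≤ 3 * b N * B' + ε2 * b k := by
    rw [abel_sum' b z k (le_trans hN hk)]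
    have hsplit : ∑ i ∈ Ico 1 k, (b (i+1) - b i) * ((∑ j ∈ Icc 1 k, z j) - (∑ j ∈ Icc 1 i, z j))
        = (∑ i ∈ Ico 1 N, (b (i+1) - b i) * ((∑ j ∈ Icc 1 k, z j) - (∑ j ∈ Icc 1 i, z j)))
          + ∑ i ∈ Ico N k, (b (i+1) - b i) * ((∑ j ∈ Icc 1 k, z j) - (∑ j ∈ Icc 1 i, z j)) := by
      rw [Finset.sum_Ico_consecutive _ hN hk]
    -- bound pieces
    have h1 : |∑ i ∈ Ico 1 N, (b (i+1) - b i) * ((∑ j ∈ Icc 1 k, z j) - (∑ j ∈ Icc 1 i, z j))|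
        ≤ (b N - b 1) * (2 * B') := by
      calc |∑ i ∈ Ico 1 N, (b (i+1) - b i) * ((∑ j ∈ Icc 1 k, z j) - (∑ j ∈ Icc 1 i, z j))|
          ≤ ∑ i ∈ Ico 1 N, |(b (i+1) - b i) * ((∑ j ∈ Icc 1 k, z j) - (∑ j ∈ Icc 1 i, z j))| :=
            Finset.abs_sum_le_sum_abs _ _
        _ ≤ ∑ i ∈ Ico 1 N, (b (i+1) - b i) * (2 * B') := by
            apply Finset.sum_le_sum
            intro i _
            rw [abs_mul, abs_of_nonneg (sub_nonneg.2 (hbmono (Nat.le_succ i)))]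
            apply mul_le_mul_of_nonneg_left _ (sub_nonneg.2 (hbmono (Nat.le_succ i)))
            calc |(∑ j ∈ Icc 1 k, z j) - (∑ j ∈ Icc 1 i, z j)|
                ≤ |∑ j ∈ Icc 1 k, z j| + |∑ j ∈ Icc 1 i, z j| := abs_sub _ _
              _ ≤ B' + B' := add_le_add (hS k) (hS i)
              _ = 2 * B' := by ring
        _ = (∑ i ∈ Ico 1 N, (b (i+1) - b i)) * (2 * B') := by rw [Finset.sum_mul]
        _ = (b N - b 1) * (2 * B') := by rw [telescope_sum b N hN]
    have h2 : |∑ i ∈ Ico N k, (b (i+1) - b i) * ((∑ j ∈ Icc 1 k, z j) - (∑ j ∈ Icc 1 i, z j))|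
        ≤ (b k - b N) * ε2 := by
      calc |∑ i ∈ Ico N k, (b (i+1) - b i) * ((∑ j ∈ Icc 1 k, z j) - (∑ j ∈ Icc 1 i, z j))|
          ≤ ∑ i ∈ Ico N k, |(b (i+1) - b i) * ((∑ j ∈ Icc 1 k, z j) - (∑ j ∈ Icc 1 i, z j))| :=
            Finset.abs_sum_le_sum_abs _ _
        _ ≤ ∑ i ∈ Ico N k, (b (i+1) - b i) * ε2 := by
            apply Finset.sum_le_sum
            intro i hi
            rw [Finset.mem_Ico] at hi
            rw [abs_mul, abs_of_nonneg (sub_nonneg.2 (hbmono (Nat.le_succ i)))]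
            exact mul_le_mul_of_nonneg_left (hclose i hi.1 (le_of_lt hi.2))
              (sub_nonneg.2 (hbmono (Nat.le_succ i)))
        _ = (∑ i ∈ Ico N k, (b (i+1) - b i)) * ε2 := by rw [Finset.sum_mul]
        _ ≤ (b k - b N) * ε2 := by
            have : ∑ i ∈ Ico N k, (b (i+1) - b i) = b k - b N := by
              have e1 := telescope_sum b k (le_trans hN hk)
              have e2 := telescope_sum b N hN
              have := Finset.sum_Ico_consecutive (fun i => b (i+1) - b i) hN hk
              linarith
            rw [this]
    have hb1 : |b 1 * (∑ j ∈ Icc 1 k, z j)| ≤ b 1 * B' := by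
      rw [abs_mul, abs_of_pos (hbpos 1)]
      exact mul_le_mul_of_nonneg_left (hS k) (le_of_lt (hbpos 1))
    have hb1N : b 1 ≤ b N := hbmono hN
    have hbNk : b N ≤ b k := hbmono hk
    have hbN := hbpos N
    have hb1' := hbpos 1
    calc |b 1 * (∑ j ∈ Icc 1 k, z j)
          + ∑ i ∈ Ico 1 k, (b (i+1) - b i) * ((∑ j ∈ Icc 1 k, z j) - (∑ j ∈ Icc 1 i, z j))|
        ≤ |b 1 * (∑ j ∈ Icc 1 k, z j)|
          + |∑ i ∈ Ico 1 k, (b (i+1) - b i) * ((∑ j ∈ Icc 1 k, z j) - (∑ j ∈ Icc 1 i, z j))| :=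
          abs_add_le _ _
      _ ≤ b 1 * B' + ((b N - b 1) * (2 * B') + (b k - b N) * ε2) := by
          rw [hsplit]
          exact add_le_add hb1 (le_trans (abs_add_le _ _) (add_le_add h1 h2))
      _ ≤ 3 * b N * B' + ε2 * b k := by nlinarith
  calc |∑ i ∈ Icc 1 k, b i * z i| * b k ≤ (3 * b N * B' + ε2 * b k) * b k :=
        mul_le_mul_of_nonneg_right hmain (le_of_lt hbk)
    _ = (3 * b N * B' + ε2 * b k) * b k := rfl
end aux


/-- A Ps-uniform stochastic generalization of Kronecker's lemma: if the partial sums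
`S_n = Σ_{i=1}^n Z_i` are Ps-uniformly Cauchy and Ps-uniformly stochastically nonincreasing, and
`b_n` is positive, nondecreasing, and diverging to ∞, then `(1/b_n) Σ_{i=1}^n b_i Z_i` vanishes
Ps-uniformly almost surely. -/
theorem stmt4 {Ω : Type*} [MeasurableSpace Ω] (Ps : Set (Measure Ω))
    (hPs : ∀ P ∈ Ps, IsProbabilityMeasure P)
    (Z : ℕ → Ω → ℝ) (hmeas : ∀ n, Measurable (Z n))
    (b : ℕ → ℝ) (hbpos : ∀ n, 0 < b n) (hbmono : Monotone b)
    (hbtop : Tendsto b atTop atTop)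
    (hCauchy : ∀ ε : ℝ, 0 < ε → ∀ δ : ℝ, 0 < δ → ∃ M : ℕ, ∀ m ≥ M, ∀ P ∈ Ps,
      P {ω | ∃ k ≥ m, ∃ n ≥ m, ε ≤
        |(∑ i ∈ Finset.Icc 1 k, Z i ω) - (∑ i ∈ Finset.Icc 1 n, Z i ω)|} <
        ENNReal.ofReal δ)
    (hBdd : ∀ δ : ℝ, 0 < δ → ∃ B : ℝ, 0 < B ∧ ∀ n : ℕ, 1 ≤ n → ∀ P ∈ Ps,
      P {ω | B ≤ |∑ i ∈ Finset.Icc 1 n, Z i ω|} < ENNReal.ofReal δ) :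
    ∀ ε : ℝ, 0 < ε → ∀ δ : ℝ, 0 < δ → ∃ M : ℕ, ∀ m ≥ M, ∀ P ∈ Ps,
      P {ω | ∃ k ≥ m, ε ≤ |(b k)⁻¹ * ∑ i ∈ Finset.Icc 1 k, b i * Z i ω|} <
        ENNReal.ofReal δ := by
  intro ε hε δ hδ
  obtain ⟨N₀, hN₀⟩ := hCauchy (ε/4) (by positivity) (δ/2) (by positivity)
  set N := max N₀ 1 with hNdef
  have hN1 : 1 ≤ N := le_max_right _ _
  have hNN₀ : N₀ ≤ N := le_max_left _ _
  have hNR : (0:ℝ) < (N:ℝ) := by exact_mod_cast Nat.lt_of_lt_of_le Nat.zero_lt_one hN1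
  obtain ⟨B, hBpos, hB⟩ := hBdd (δ / (2 * N)) (div_pos hδ (by linarith))
  set B' : ℝ := B + ε/4 with hB'def
  have hB'pos : 0 < B' := by positivity
  obtain ⟨M₁, hM₁⟩ := eventually_atTop.1 (hbtop.eventually_ge_atTop (6 * b N * B' / ε))
  refine ⟨max M₁ N, fun m hm P hP => ?_⟩
  haveI := hPs P hP
  have hCm := hN₀ N hNN₀ P hP
  set A : Set Ω := {ω | ∃ k ≥ N, ∃ n ≥ N, ε/4 ≤
      |(∑ i ∈ Finset.Icc 1 k, Z i ω) - (∑ i ∈ Finset.Icc 1 n, Z i ω)|} with hAdef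
  set U : Set Ω := ⋃ n ∈ Finset.Icc 1 N, {ω | B ≤ |∑ i ∈ Finset.Icc 1 n, Z i ω|} with hUdef
  have hsub : {ω | ∃ k ≥ m, ε ≤ |(b k)⁻¹ * ∑ i ∈ Finset.Icc 1 k, b i * Z i ω|} ⊆ A ∪ U := by
    intro ω hω
    by_contra hcon
    rw [Set.mem_union] at hcon
    push_neg at hcon
    obtain ⟨hA, hU⟩ := hcon
    simp only [hAdef, Set.mem_setOf_eq, not_exists, not_le, ge_iff_le, not_and] at hA
    simp only [hUdef, Set.mem_iUnion, Set.mem_setOf_eq, not_exists, not_le] at hU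
    obtain ⟨k, hkm, hk⟩ := hω
    have hkN : N ≤ k := le_trans (le_trans (le_max_right M₁ N) hm) hkm
    have hkM₁ : M₁ ≤ k := le_trans (le_trans (le_max_left M₁ N) hm) hkm
    have hS : ∀ n, |∑ j ∈ Finset.Icc 1 n, Z j ω| ≤ B' := by
      intro n
      rcases Nat.eq_zero_or_pos n with h0 | h1
      · subst h0; simpa using hB'pos.le
      rcases le_or_gt n N with hle | hgt
      · have := hU n (Finset.mem_Icc.2 ⟨h1, hle⟩)
        rw [hB'def]; linarith
      · have h1' := hA n (le_of_lt hgt) N le_rfl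
        have h2' := hU N (Finset.mem_Icc.2 ⟨hN1, le_rfl⟩)
        have key : |∑ j ∈ Finset.Icc 1 n, Z j ω| ≤ |∑ j ∈ Finset.Icc 1 N, Z j ω|
            + |(∑ j ∈ Finset.Icc 1 n, Z j ω) - (∑ j ∈ Finset.Icc 1 N, Z j ω)| := by
          have h := abs_add_le (∑ j ∈ Finset.Icc 1 N, Z j ω)
            ((∑ j ∈ Finset.Icc 1 n, Z j ω) - (∑ j ∈ Finset.Icc 1 N, Z j ω))
          simpa using h
        rw [hB'def]; linarith
    have hclose : ∀ i, N ≤ i → i ≤ k →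
        |(∑ j ∈ Finset.Icc 1 k, Z j ω) - (∑ j ∈ Finset.Icc 1 i, Z j ω)| ≤ ε/4 :=
      fun i hi _ => le_of_lt (hA k hkN i hi)
    have hkey := key_bound b (fun i => Z i ω) hbpos hbmono N k hN1 hkN B' (ε/4)
      hB'pos.le (by positivity) hS hclose
    have hbk6 : 6 * b N * B' / ε ≤ b k := hM₁ k hkM₁
    have hdivle : 3 * b N * B' / b k ≤ ε/2 := by
      rw [div_le_iff₀ (hbpos k)]
      have heq : ε/2 * (6 * b N * B' / ε) = 3 * b N * B' := by
        field_simp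
        ring
      have hmul : ε/2 * (6 * b N * B' / ε) ≤ ε/2 * b k :=
        mul_le_mul_of_nonneg_left hbk6 (by positivity)
      linarith
    linarith
  calc P {ω | ∃ k ≥ m, ε ≤ |(b k)⁻¹ * ∑ i ∈ Finset.Icc 1 k, b i * Z i ω|}
      ≤ P (A ∪ U) := measure_mono hsub
    _ ≤ P A + P U := measure_union_le _ _
    _ < ENNReal.ofReal (δ/2) + ENNReal.ofReal (δ/2) := by
        have hPU : P U ≤ ENNReal.ofReal (δ/2) := by
          calc P U ≤ ∑ n ∈ Finset.Icc 1 N, P {ω | B ≤ |∑ i ∈ Finset.Icc 1 n, Z i ω|} :=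
                measure_biUnion_finset_le _ _
            _ ≤ ∑ _n ∈ Finset.Icc 1 N, ENNReal.ofReal (δ/(2*N)) :=
                Finset.sum_le_sum fun n hn =>
                  le_of_lt (hB n (Finset.mem_Icc.1 hn).1 P hP)
            _ = (Finset.Icc 1 N).card • ENNReal.ofReal (δ/(2*N)) := by
                rw [Finset.sum_const]
            _ = ENNReal.ofReal (δ/2) := by
                rw [Nat.card_Icc, nsmul_eq_mul]
                rw [← ENNReal.ofReal_natCast, ← ENNReal.ofReal_mul (by positivity)]
                congr 1
                push_cast
                have : (N:ℝ) ≠ 0 := ne_of_gt hNR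
                field_simp
        exact ENNReal.add_lt_add_of_lt_of_le (measure_ne_top P U) hCm hPU
    _ = ENNReal.ofReal δ := by
        rw [← ENNReal.ofReal_add (by positivity) (by positivity)]
        norm_num
end

section
/- Let (E_n) be events that are independent under each P in a family 𝒫 of probability measures. If lim_{m→∞} sup_{P∈𝒫} Σ_{k=m}^∞ P(E_k) > 0 (possibly infinite), then lim_{m→∞} sup_{P∈𝒫} P( ∪_{k=m}^∞ E_k ) > 0. In fact lim_{m→∞} sup_{P∈𝒫} P(∪_{k=m}^∞ E_k) ≥ 1 − exp( − lim_{m→∞} sup_{P∈𝒫} Σ_{k=m}^∞ P(E_k) ). -/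
open MeasureTheory ProbabilityTheory Filter

lemma key1' {Ω : Type*} [MeasurableSpace Ω] (P : Measure Ω) [IsProbabilityMeasure P]
    (E : ℕ → Set Ω) (hE : ∀ n, MeasurableSet (E n)) (hind : iIndepSet E P) (S : Finset ℕ) :
    ENNReal.ofReal (1 - Real.exp (-(∑ i ∈ S, (P (E i)).toReal))) ≤ P (⋃ i ∈ S, E i) := by
  have hU : MeasurableSet (⋃ i ∈ S, E i) := S.measurableSet_biUnion (fun i _ => hE i)
  have hcompl : P ((⋃ i ∈ S, E i)ᶜ) = ∏ i ∈ S, P ((E i)ᶜ) := by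
    rw [Set.compl_iUnion₂]
    exact ((iIndepSet_iff_iIndep E P).mp hind).meas_biInter
      (fun i _ => (MeasurableSpace.measurableSet_generateFrom (Set.mem_singleton _)).compl)
  have h1 : P (⋃ i ∈ S, E i) = 1 - ∏ i ∈ S, P ((E i)ᶜ) := by
    have h2 := prob_compl_eq_one_sub (μ := P) hU.compl
    rw [compl_compl] at h2
    rw [h2, hcompl]
  have hterm : ∀ i ∈ S, P ((E i)ᶜ) ≤ ENNReal.ofReal (Real.exp (-(P (E i)).toReal)) := by
    intro i _
    have e1 : ENNReal.ofReal (1 - (P (E i)).toReal) = 1 - P (E i) := by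
      rw [ENNReal.ofReal_sub _ ENNReal.toReal_nonneg, ENNReal.ofReal_one,
        ENNReal.ofReal_toReal (measure_ne_top P (E i))]
    rw [prob_compl_eq_one_sub (hE i), ← e1]
    exact ENNReal.ofReal_le_ofReal
      (by linarith [Real.add_one_le_exp (-(P (E i)).toReal)])
  have hprod : ∏ i ∈ S, P ((E i)ᶜ) ≤
      ENNReal.ofReal (Real.exp (-(∑ i ∈ S, (P (E i)).toReal))) := by
    have e2 : Real.exp (-(∑ i ∈ S, (P (E i)).toReal)) =
        ∏ i ∈ S, Real.exp (-(P (E i)).toReal) := by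
      rw [← Real.exp_sum]
      congr 1
      simp
    rw [e2, ENNReal.ofReal_prod_of_nonneg (fun i _ => (Real.exp_nonneg _))]
    exact Finset.prod_le_prod' hterm
  rw [h1]
  calc ENNReal.ofReal (1 - Real.exp (-(∑ i ∈ S, (P (E i)).toReal)))
      = 1 - ENNReal.ofReal (Real.exp (-(∑ i ∈ S, (P (E i)).toReal))) := by
        rw [ENNReal.ofReal_sub _ (Real.exp_nonneg _), ENNReal.ofReal_one]
    _ ≤ 1 - ∏ i ∈ S, P ((E i)ᶜ) := tsub_le_tsub_left hprod 1

lemma key2' {Ω : Type*} [MeasurableSpace Ω] (P : Measure Ω) [IsProbabilityMeasure P]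
    (E : ℕ → Set Ω) (hE : ∀ n, MeasurableSet (E n)) (hind : iIndepSet E P)
    (m : ℕ) (r : ℝ) (hr : ENNReal.ofReal r < ∑' k : ℕ, P (E (m + k))) :
    ENNReal.ofReal (1 - Real.exp (-r)) ≤ P (⋃ k : ℕ, E (m + k)) := by
  rw [ENNReal.tsum_eq_iSup_sum] at hr
  obtain ⟨S, hS⟩ := lt_iSup_iff.mp hr
  set T := S.image (fun k => m + k) with hT
  have hsum : ∑ i ∈ T, P (E i) = ∑ k ∈ S, P (E (m + k)) :=
    Finset.sum_image (fun x _ y _ h => by omega)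
  have hsub : (⋃ i ∈ T, E i) ⊆ ⋃ k : ℕ, E (m + k) := by
    refine Set.iUnion₂_subset fun i hi => ?_
    obtain ⟨k, -, rfl⟩ := Finset.mem_image.mp hi
    exact Set.subset_iUnion (fun k => E (m + k)) k
  refine le_trans (le_trans ?_ (key1' P E hE hind T)) (measure_mono hsub)
  apply ENNReal.ofReal_le_ofReal
  have hfin : ∑ i ∈ T, P (E i) ≠ ⊤ := by
    simp [measure_ne_top]
  have hr' : r ≤ ∑ i ∈ T, (P (E i)).toReal := by
    rw [← ENNReal.toReal_sum (fun i _ => measure_ne_top P _)]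
    rw [← hsum] at hS
    exact (ENNReal.ofReal_le_iff_le_toReal hfin).mp hS.le
  have hexp := Real.exp_le_exp.mpr (neg_le_neg hr')
  linarith

/-- The second Ps-uniform Borel–Cantelli lemma: for events independent under each `P ∈ Ps`, if
`lim_m sup_{P∈Ps} Σ_{k=m}^∞ P(E_k) > 0` (the limit equals the infimum over `m` since the
quantity is nonincreasing in `m`), then `lim_m sup_{P∈Ps} P(∪_{k=m}^∞ E_k) > 0`; in fact the
latter limit is at least `1 - exp(-L)` where `L` is the former limit. -/
theorem stmt5 {Ω : Type*} [MeasurableSpace Ω] (Ps : Set (Measure Ω))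
    (hPs : ∀ P ∈ Ps, IsProbabilityMeasure P)
    (E : ℕ → Set Ω) (hE : ∀ n, MeasurableSet (E n))
    (hindep : ∀ P ∈ Ps, iIndepSet E P)
    (hpos : 0 < ⨅ m : ℕ, ⨆ P ∈ Ps, ∑' k : ℕ, P (E (m + k))) :
    (0 < ⨅ m : ℕ, ⨆ P ∈ Ps, P (⋃ k : ℕ, E (m + k))) ∧
      ∀ r : ℝ, 0 ≤ r →
        ENNReal.ofReal r ≤ (⨅ m : ℕ, ⨆ P ∈ Ps, ∑' k : ℕ, P (E (m + k))) →
        ENNReal.ofReal (1 - Real.exp (-r)) ≤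
          ⨅ m : ℕ, ⨆ P ∈ Ps, P (⋃ k : ℕ, E (m + k)) := by
  have main : ∀ r : ℝ, 0 ≤ r →
      ENNReal.ofReal r ≤ (⨅ m : ℕ, ⨆ P ∈ Ps, ∑' k : ℕ, P (E (m + k))) →
      ENNReal.ofReal (1 - Real.exp (-r)) ≤
        ⨅ m : ℕ, ⨆ P ∈ Ps, P (⋃ k : ℕ, E (m + k)) := by
    intro r hr hler
    refine le_iInf fun m => ?_
    have hm : ENNReal.ofReal r ≤ ⨆ P ∈ Ps, ∑' k : ℕ, P (E (m + k)) :=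
      hler.trans (iInf_le _ m)
    -- approximate r from below
    have hstep : ∀ n : ℕ, ENNReal.ofReal (1 - Real.exp (-(r - ((n : ℝ) + 1)⁻¹))) ≤
        ⨆ P ∈ Ps, P (⋃ k : ℕ, E (m + k)) := by
      intro n
      rcases le_or_gt (r - ((n : ℝ) + 1)⁻¹) 0 with hsle | hspos
      · have : 1 - Real.exp (-(r - ((n : ℝ) + 1)⁻¹)) ≤ 0 := by
          have h3 : (1:ℝ) ≤ Real.exp (-(r - ((n : ℝ) + 1)⁻¹)) :=
            Real.one_le_exp (by linarith)
          linarith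
        rw [ENNReal.ofReal_eq_zero.mpr this]
        exact zero_le
      · have hsr : r - ((n : ℝ) + 1)⁻¹ < r := by
          have : (0:ℝ) < ((n : ℝ) + 1)⁻¹ := by positivity
          linarith
        have hlt : ENNReal.ofReal (r - ((n : ℝ) + 1)⁻¹) < ⨆ P ∈ Ps, ∑' k : ℕ, P (E (m + k)) :=
          lt_of_lt_of_le ((ENNReal.ofReal_lt_ofReal_iff (by linarith)).mpr hsr) hm
        obtain ⟨P, hP⟩ := lt_iSup_iff.mp hlt
        obtain ⟨hPmem, hP2⟩ := lt_iSup_iff.mp hP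
        have := hPs P hPmem
        refine le_trans (key2' P E hE (hindep P hPmem) m (r - ((n : ℝ) + 1)⁻¹) hP2) ?_
        exact le_biSup (fun P => P (⋃ k : ℕ, E (m + k))) hPmem
    have h1 : Tendsto (fun n : ℕ => r - ((n : ℝ) + 1)⁻¹) atTop (nhds r) := by
      have := tendsto_one_div_add_atTop_nhds_zero_nat (𝕜 := ℝ)
      simp only [one_div] at this
      simpa using tendsto_const_nhds.sub this
    have h2 : Tendsto (fun n : ℕ => 1 - Real.exp (-(r - ((n : ℝ) + 1)⁻¹))) atTop
        (nhds (1 - Real.exp (-r))) :=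
      tendsto_const_nhds.sub ((Real.continuous_exp.tendsto _).comp h1.neg)
    exact le_of_tendsto ((ENNReal.continuous_ofReal.tendsto _).comp h2)
      (Filter.Eventually.of_forall hstep)
  refine ⟨?_, main⟩
  set L := ⨅ m : ℕ, ⨆ P ∈ Ps, ∑' k : ℕ, P (E (m + k)) with hL
  set c := min L 1 with hc
  have hcpos : 0 < c := lt_min hpos one_pos
  have hcne : c ≠ ⊤ := (min_le_right _ _).trans_lt (by norm_num) |>.ne
  have hrpos : 0 < c.toReal := ENNReal.toReal_pos hcpos.ne' hcne
  have hofReal : ENNReal.ofReal c.toReal = c := ENNReal.ofReal_toReal hcne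
  have := main c.toReal hrpos.le (by rw [hofReal]; exact min_le_left _ _)
  refine lt_of_lt_of_le ?_ this
  apply ENNReal.ofReal_pos.mpr
  have : Real.exp (-c.toReal) < 1 := Real.exp_lt_one_iff.mpr (by linarith)
  linarith
end

section
/- Let Y be a random variable on (Ω, F) and 𝒫 a family of probability measures, with q > 0. Then lim_{m→∞} sup_{P∈𝒫} E_P(|Y|^q · 1{|Y|^q > m}) = 0 if and only if lim_{m→∞} sup_{P∈𝒫} Σ_{k=m}^∞ P(|Y|^q > k) = 0. -/
open MeasureTheory ProbabilityTheory Filter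

private lemma tsum_ite_count (c x : ℝ) :
    ∑' k : ℕ, (if c + (k : ℝ) < x then (1 : ENNReal) else 0) = (⌈x - c⌉₊ : ENNReal) := by
  have h : ∀ k : ℕ, (c + (k : ℝ) < x) ↔ k < ⌈x - c⌉₊ := by
    intro k
    rw [Nat.lt_ceil]
    constructor <;> intro h <;> linarith
  have h2 : (fun k : ℕ => (if c + (k : ℝ) < x then (1 : ENNReal) else 0))
      = fun k : ℕ => (if k < ⌈x - c⌉₊ then (1 : ENNReal) else 0) := by
    funext k; simp [h k]
  rw [h2, tsum_eq_sum (s := Finset.range ⌈x - c⌉₊)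
    (by intro k hk; simp only [Finset.mem_range] at hk; simp [hk])]
  rw [Finset.sum_congr rfl (g := fun _ => (1 : ENNReal)) (fun k hk => by
    simp only [Finset.mem_range] at hk; simp [hk])]
  simp

private lemma aux_le1 (m : ℕ) (hm : 1 ≤ m) (x : ℝ) :
    (⌈x - (m : ℝ)⌉₊ : ENNReal) ≤ if (m : ℝ) < x then ENNReal.ofReal x else 0 := by
  by_cases hx : (m : ℝ) < x
  · simp only [hx, if_true]
    have h1 : (⌈x - (m : ℝ)⌉₊ : ℝ) ≤ x := by
      have hm1' : (1 : ℝ) ≤ m := by exact_mod_cast hm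
      have := Nat.ceil_lt_add_one (a := x - (m : ℝ)) (by linarith)
      have h2 : (⌈x - (m : ℝ)⌉₊ : ℝ) < x - m + 1 := this
      linarith
    calc (⌈x - (m : ℝ)⌉₊ : ENNReal) = ENNReal.ofReal (⌈x - (m : ℝ)⌉₊ : ℝ) := by
          rw [ENNReal.ofReal_natCast]
      _ ≤ ENNReal.ofReal x := ENNReal.ofReal_le_ofReal h1
  · simp only [hx, if_false]
    have : ⌈x - (m : ℝ)⌉₊ = 0 := Nat.ceil_eq_zero.mpr (by push_neg at hx; linarith)
    simp [this]

private lemma aux_le2 (m : ℕ) (x : ℝ) :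
    (if (m : ℝ) < x then ENNReal.ofReal x else 0) ≤
      ((m : ENNReal) + 1) * (if (m : ℝ) < x then 1 else 0) + (⌈x - (m : ℝ)⌉₊ : ENNReal) := by
  by_cases hx : (m : ℝ) < x
  · simp only [hx, if_true, mul_one]
    have h1 : x ≤ (m : ℝ) + 1 + (⌈x - (m : ℝ)⌉₊ : ℝ) := by
      have := Nat.le_ceil (x - (m : ℝ))
      linarith
    calc ENNReal.ofReal x ≤ ENNReal.ofReal ((m : ℝ) + 1 + (⌈x - (m : ℝ)⌉₊ : ℝ)) :=
          ENNReal.ofReal_le_ofReal h1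
      _ ≤ (m : ENNReal) + 1 + (⌈x - (m : ℝ)⌉₊ : ENNReal) := by
          rw [ENNReal.ofReal_add (by positivity) (by positivity),
            ENNReal.ofReal_add (by positivity) (by norm_num)]
          simp [ENNReal.ofReal_natCast]
  · simp [hx]

/-- Ps-uniform integrability of the q-th moment is equivalent to Ps-uniformly vanishing tail
sums of tail probabilities. -/
theorem stmt7 {Ω : Type*} [MeasurableSpace Ω] (Ps : Set (Measure Ω))
    (hPs : ∀ P ∈ Ps, IsProbabilityMeasure P)
    (Y : Ω → ℝ) (hY : Measurable Y) (q : ℝ) (hq : 0 < q)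
    (hint : ∀ P ∈ Ps, Integrable (fun ω => |Y ω| ^ q) P) :
    (∀ ε : ℝ, 0 < ε → ∃ M : ℕ, ∀ m ≥ M, ∀ P ∈ Ps,
        ∫ ω in {ω | (m : ℝ) < |Y ω| ^ q}, |Y ω| ^ q ∂P < ε) ↔
      (∀ ε : ℝ, 0 < ε → ∃ M : ℕ, ∀ m ≥ M, ∀ P ∈ Ps,
        ∑' k : ℕ, P {ω | ((m + k : ℕ) : ℝ) < |Y ω| ^ q} < ENNReal.ofReal ε) := by
  have hX : Measurable fun ω => |Y ω| ^ q := by fun_prop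
  have hXnn : ∀ ω, 0 ≤ |Y ω| ^ q := fun ω => Real.rpow_nonneg (abs_nonneg _) q
  have hTmeas : ∀ c : ℝ, MeasurableSet {ω | c < |Y ω| ^ q} :=
    fun c => measurableSet_lt measurable_const hX
  have hceil : ∀ c : ℝ, Measurable fun ω => (⌈|Y ω| ^ q - c⌉₊ : ENNReal) := by
    intro c
    exact measurable_from_nat.comp ((hX.sub measurable_const).nat_ceil)
  -- tail sums as the lintegral of the ceiling function
  have hB : ∀ (P : Measure Ω) (m : ℕ),
      ∑' k : ℕ, P {ω | ((m + k : ℕ) : ℝ) < |Y ω| ^ q}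
        = ∫⁻ ω, (⌈|Y ω| ^ q - (m : ℝ)⌉₊ : ENNReal) ∂P := by
    intro P m
    calc ∑' k : ℕ, P {ω | ((m + k : ℕ) : ℝ) < |Y ω| ^ q}
        = ∑' k : ℕ, ∫⁻ ω, ({ω | ((m + k : ℕ) : ℝ) < |Y ω| ^ q}).indicator 1 ω ∂P :=
          tsum_congr fun k => (lintegral_indicator_one (hTmeas _)).symm
      _ = ∫⁻ ω, ∑' k : ℕ, ({ω | ((m + k : ℕ) : ℝ) < |Y ω| ^ q}).indicator 1 ω ∂P :=
          (lintegral_tsum fun k => ((measurable_one.indicator (hTmeas _)).aemeasurable)).symm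
      _ = ∫⁻ ω, (⌈|Y ω| ^ q - (m : ℝ)⌉₊ : ENNReal) ∂P := by
          refine lintegral_congr fun ω => ?_
          rw [← tsum_ite_count (m : ℝ) (|Y ω| ^ q)]
          refine tsum_congr fun k => ?_
          rw [Set.indicator_apply]
          simp only [Set.mem_setOf_eq, Pi.one_apply, Nat.cast_add]
  -- truncated moment as a lintegral of an if-function
  have hLrepr : ∀ (P : Measure Ω) (m : ℕ),
      ∫⁻ ω in {ω | (m : ℝ) < |Y ω| ^ q}, ENNReal.ofReal (|Y ω| ^ q) ∂P
        = ∫⁻ ω, (if (m : ℝ) < |Y ω| ^ q then ENNReal.ofReal (|Y ω| ^ q) else 0) ∂P := by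
    intro P m
    rw [← lintegral_indicator (hTmeas _)]
    exact lintegral_congr fun ω => by
      rw [Set.indicator_apply]; simp only [Set.mem_setOf_eq]
  have hA : ∀ P ∈ Ps, ∀ m : ℕ,
      ENNReal.ofReal (∫ ω in {ω | (m : ℝ) < |Y ω| ^ q}, |Y ω| ^ q ∂P)
        = ∫⁻ ω in {ω | (m : ℝ) < |Y ω| ^ q}, ENNReal.ofReal (|Y ω| ^ q) ∂P := by
    intro P hP m
    exact ofReal_integral_eq_lintegral_ofReal ((hint P hP).restrict)
      (Filter.Eventually.of_forall fun ω => hXnn ω)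
  -- the if-version of the indicator integral
  have hTif : ∀ (P : Measure Ω) (m : ℕ),
      ∫⁻ ω, (if (m : ℝ) < |Y ω| ^ q then (1 : ENNReal) else 0) ∂P
        = P {ω | (m : ℝ) < |Y ω| ^ q} := by
    intro P m
    rw [← lintegral_indicator_one (hTmeas (m : ℝ))]
    exact lintegral_congr fun ω => by
      rw [Set.indicator_apply]; simp only [Set.mem_setOf_eq, Pi.one_apply]
  constructor
  · -- uniform integrability → vanishing tail sums
    intro h ε hε
    obtain ⟨M₀, hM₀⟩ := h ε hε
    refine ⟨max M₀ 1, fun m hm P hP => ?_⟩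
    have hm1 : 1 ≤ m := le_trans (le_max_right _ _) hm
    calc ∑' k : ℕ, P {ω | ((m + k : ℕ) : ℝ) < |Y ω| ^ q}
        = ∫⁻ ω, (⌈|Y ω| ^ q - (m : ℝ)⌉₊ : ENNReal) ∂P := hB P m
      _ ≤ ∫⁻ ω, (if (m : ℝ) < |Y ω| ^ q then ENNReal.ofReal (|Y ω| ^ q) else 0) ∂P :=
          lintegral_mono fun ω => aux_le1 m hm1 _
      _ = ∫⁻ ω in {ω | (m : ℝ) < |Y ω| ^ q}, ENNReal.ofReal (|Y ω| ^ q) ∂P :=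
          (hLrepr P m).symm
      _ = ENNReal.ofReal (∫ ω in {ω | (m : ℝ) < |Y ω| ^ q}, |Y ω| ^ q ∂P) := (hA P hP m).symm
      _ < ENNReal.ofReal ε := (ENNReal.ofReal_lt_ofReal_iff hε).mpr
          (hM₀ m (le_trans (le_max_left _ _) hm) P hP)
  · -- vanishing tail sums → uniform integrability
    intro h ε hε
    obtain ⟨M₀, hM₀⟩ := h (ε / 4) (by linarith)
    refine ⟨2 * M₀ + 2, fun m hm P hP => ?_⟩
    set j := m / 2 with hj
    have hjM : M₀ ≤ j := by omega
    have hjm : j ≤ m := Nat.div_le_self _ _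
    have hBj : ∫⁻ ω, (⌈|Y ω| ^ q - (j : ℝ)⌉₊ : ENNReal) ∂P < ENNReal.ofReal (ε / 4) := by
      rw [← hB P j]; exact hM₀ j hjM P hP
    -- main chain of inequalities in ENNReal
    have key : ∫⁻ ω in {ω | (m : ℝ) < |Y ω| ^ q}, ENNReal.ofReal (|Y ω| ^ q) ∂P
        < ENNReal.ofReal ε := by
      have h1 : ∫⁻ ω in {ω | (m : ℝ) < |Y ω| ^ q}, ENNReal.ofReal (|Y ω| ^ q) ∂P
          ≤ ((m : ENNReal) + 1) * P {ω | (m : ℝ) < |Y ω| ^ q}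
            + ∫⁻ ω, (⌈|Y ω| ^ q - (m : ℝ)⌉₊ : ENNReal) ∂P := by
        rw [hLrepr P m, ← hTif P m, ← lintegral_const_mul _ (by
          refine Measurable.ite (hTmeas (m : ℝ)) measurable_const measurable_const),
          ← lintegral_add_left (by
            exact (measurable_const.mul (Measurable.ite (hTmeas (m : ℝ)) measurable_const
              measurable_const)))]
        exact lintegral_mono fun ω => aux_le2 m _
      have h2 : ((m : ENNReal) + 1) * P {ω | (m : ℝ) < |Y ω| ^ q}
          ≤ 2 * ∫⁻ ω, (⌈|Y ω| ^ q - (j : ℝ)⌉₊ : ENNReal) ∂P := by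
        have step : ((m - j + 1 : ℕ) : ENNReal) * P {ω | (m : ℝ) < |Y ω| ^ q}
            ≤ ∫⁻ ω, (⌈|Y ω| ^ q - (j : ℝ)⌉₊ : ENNReal) ∂P := by
          calc ((m - j + 1 : ℕ) : ENNReal) * P {ω | (m : ℝ) < |Y ω| ^ q}
              = ∫⁻ _ in {ω | (m : ℝ) < |Y ω| ^ q}, ((m - j + 1 : ℕ) : ENNReal) ∂P :=
                (setLIntegral_const _ _).symm
            _ ≤ ∫⁻ ω in {ω | (m : ℝ) < |Y ω| ^ q}, (⌈|Y ω| ^ q - (j : ℝ)⌉₊ : ENNReal) ∂P := by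
                refine setLIntegral_mono (hceil (j : ℝ)) fun ω hω => ?_
                have hω' : (m : ℝ) < |Y ω| ^ q := hω
                have : m - j + 1 ≤ ⌈|Y ω| ^ q - (j : ℝ)⌉₊ := by
                  have : (m - j : ℕ) < ⌈|Y ω| ^ q - (j : ℝ)⌉₊ := by
                    rw [Nat.lt_ceil]
                    have : ((m - j : ℕ) : ℝ) = (m : ℝ) - (j : ℝ) := by
                      push_cast [Nat.cast_sub hjm]; ring
                    rw [this]
                    linarith
                  omega
                exact_mod_cast this
            _ ≤ ∫⁻ ω, (⌈|Y ω| ^ q - (j : ℝ)⌉₊ : ENNReal) ∂P :=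
                setLIntegral_le_lintegral _ _
        have hcast : ((m : ENNReal) + 1) ≤ 2 * ((m - j + 1 : ℕ) : ENNReal) := by
          have hnat : (m + 1 : ℕ) ≤ 2 * (m - j + 1) := by omega
          calc ((m : ENNReal) + 1) = ((m + 1 : ℕ) : ENNReal) := by push_cast; ring
            _ ≤ ((2 * (m - j + 1) : ℕ) : ENNReal) := by exact_mod_cast hnat
            _ = 2 * ((m - j + 1 : ℕ) : ENNReal) := by push_cast; ring
        calc ((m : ENNReal) + 1) * P {ω | (m : ℝ) < |Y ω| ^ q}
            ≤ 2 * ((m - j + 1 : ℕ) : ENNReal) * P {ω | (m : ℝ) < |Y ω| ^ q} :=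
              mul_le_mul_left hcast _
          _ = 2 * (((m - j + 1 : ℕ) : ENNReal) * P {ω | (m : ℝ) < |Y ω| ^ q}) := by ring
          _ ≤ 2 * ∫⁻ ω, (⌈|Y ω| ^ q - (j : ℝ)⌉₊ : ENNReal) ∂P := mul_le_mul_right step 2
      have h3 : ∫⁻ ω, (⌈|Y ω| ^ q - (m : ℝ)⌉₊ : ENNReal) ∂P
          ≤ ∫⁻ ω, (⌈|Y ω| ^ q - (j : ℝ)⌉₊ : ENNReal) ∂P := by
        refine lintegral_mono fun ω => ?_
        have : ⌈|Y ω| ^ q - (m : ℝ)⌉₊ ≤ ⌈|Y ω| ^ q - (j : ℝ)⌉₊ := by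
          refine Nat.ceil_mono ?_
          have : (j : ℝ) ≤ (m : ℝ) := by exact_mod_cast hjm
          linarith
        exact Nat.cast_le.mpr this
      calc ∫⁻ ω in {ω | (m : ℝ) < |Y ω| ^ q}, ENNReal.ofReal (|Y ω| ^ q) ∂P
          ≤ ((m : ENNReal) + 1) * P {ω | (m : ℝ) < |Y ω| ^ q}
            + ∫⁻ ω, (⌈|Y ω| ^ q - (m : ℝ)⌉₊ : ENNReal) ∂P := h1
        _ ≤ 2 * (∫⁻ ω, (⌈|Y ω| ^ q - (j : ℝ)⌉₊ : ENNReal) ∂P)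
            + ∫⁻ ω, (⌈|Y ω| ^ q - (j : ℝ)⌉₊ : ENNReal) ∂P := add_le_add h2 h3
        _ = 3 * ∫⁻ ω, (⌈|Y ω| ^ q - (j : ℝ)⌉₊ : ENNReal) ∂P := by ring
        _ < 3 * ENNReal.ofReal (ε / 4) := by
            refine ENNReal.mul_lt_mul_right (by norm_num) (by norm_num) hBj
        _ = ENNReal.ofReal (3 * (ε / 4)) := by
            rw [ENNReal.ofReal_mul (by norm_num)]
            norm_num
        _ < ENNReal.ofReal ε := (ENNReal.ofReal_lt_ofReal_iff hε).mpr (by linarith)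
    rw [← hA P hP m] at key
    exact (ENNReal.ofReal_lt_ofReal_iff hε).mp key
end

section
/- Let h* : [0,∞) → [0,∞) be concave, strictly increasing, diverging to ∞, with h*(0) ≥ 1, and let 0 < q < p ≤ 2 with δ := p/q − 1 ∈ (0,1). Then h̃(x) := (h*(x))^δ is concave, strictly increasing, diverging to ∞, satisfies h̃(0) ≥ 1 and h̃(x) ≤ h*(x) for all x ≥ 0, and for all real 0 ≤ a ≤ b with b > 0, a^{p/q}/b^{p/q} ≤ (a·h̃(a))/(b·h̃(b)). -/
open Set Filter

/-- If `h⋆ : [0,∞) → [0,∞)` is concave, strictly increasing, diverging to ∞ with `h⋆ 0 ≥ 1`,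
and `0 < q < p ≤ 2` with `δ := p/q - 1 ∈ (0,1)`, then `h̃ := (h⋆)^δ` is concave, strictly
increasing, diverging to ∞, satisfies `h̃ 0 ≥ 1`, `h̃ ≤ h⋆` on `[0,∞)`, and
`a^(p/q)/b^(p/q) ≤ (a h̃ a)/(b h̃ b)` for `0 ≤ a ≤ b`, `b > 0`. -/
theorem stmt9 (hstar : ℝ → ℝ) (hconc : ConcaveOn ℝ (Ici (0 : ℝ)) hstar)
    (hmono : StrictMonoOn hstar (Ici (0 : ℝ)))
    (hnonneg : ∀ x : ℝ, 0 ≤ x → 0 ≤ hstar x)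
    (htop : Tendsto hstar atTop atTop) (h1 : 1 ≤ hstar 0)
    (p q : ℝ) (hq : 0 < q) (hqp : q < p) (hp : p ≤ 2)
    (hδ0 : 0 < p / q - 1) (hδ1 : p / q - 1 < 1) :
    ConcaveOn ℝ (Ici (0 : ℝ)) (fun x => hstar x ^ (p / q - 1)) ∧
    StrictMonoOn (fun x => hstar x ^ (p / q - 1)) (Ici (0 : ℝ)) ∧
    Tendsto (fun x => hstar x ^ (p / q - 1)) atTop atTop ∧
    (1 : ℝ) ≤ hstar 0 ^ (p / q - 1) ∧
    (∀ x : ℝ, 0 ≤ x → hstar x ^ (p / q - 1) ≤ hstar x) ∧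
    (∀ a b : ℝ, 0 ≤ a → a ≤ b → 0 < b →
      a ^ (p / q) / b ^ (p / q) ≤
        (a * hstar a ^ (p / q - 1)) / (b * hstar b ^ (p / q - 1))) := by
  set δ := p / q - 1 with hδ
  -- h⋆ ≥ 1 on [0,∞)
  have hone : ∀ x : ℝ, 0 ≤ x → 1 ≤ hstar x := by
    intro x hx
    rcases eq_or_lt_of_le hx with h | h
    · simpa [← h] using h1
    · exact h1.trans (hmono (mem_Ici.2 (le_refl 0)) hx h).le
  have hrpow := Real.concaveOn_rpow (p := δ) hδ0.le hδ1.le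
  refine ⟨?_, ?_, ?_, ?_, ?_, ?_⟩
  · -- concavity
    refine ⟨convex_Ici 0, ?_⟩
    intro x hx y hy a b ha hb hab
    have h1x := hnonneg x hx
    have h1y := hnonneg y hy
    have key : a * hstar x + b * hstar y ≤ hstar (a * x + b * y) := by
      simpa using hconc.2 hx hy ha hb hab
    have hnn : (0:ℝ) ≤ a * hstar x + b * hstar y := by positivity
    have step1 : a • hstar x ^ δ + b • hstar y ^ δ ≤ (a * hstar x + b * hstar y) ^ δ := by
      simpa using hrpow.2 (mem_Ici.2 h1x) (mem_Ici.2 h1y) ha hb hab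
    have step2 : (a * hstar x + b * hstar y) ^ δ ≤ hstar (a * x + b * y) ^ δ :=
      Real.rpow_le_rpow hnn key hδ0.le
    simpa using step1.trans step2
  · -- strict mono
    intro x hx y hy hxy
    exact Real.rpow_lt_rpow (hnonneg x hx) (hmono hx hy hxy) hδ0
  · -- tendsto atTop
    exact (tendsto_rpow_atTop hδ0).comp htop
  · -- 1 ≤ h⋆0 ^ δ
    exact Real.one_le_rpow h1 hδ0.le
  · -- h̃ ≤ h⋆
    intro x hx
    have := Real.rpow_le_rpow_of_exponent_le (hone x hx) hδ1.le
    simpa using this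
  · -- ratio inequality
    intro a b ha hab hb
    have hpq : p / q = 1 + δ := by ring
    have hha : 1 ≤ hstar a := hone a ha
    have hhb : 1 ≤ hstar b := hone b (ha.trans hab)
    have hha0 : 0 < hstar a := lt_of_lt_of_le one_pos hha
    have hhb0 : 0 < hstar b := lt_of_lt_of_le one_pos hhb
    -- star-shapedness: a * h⋆ b ≤ b * h⋆ a
    have hstarshape : a / b ≤ hstar a / hstar b := by
      have hconcpt : (a / b) * hstar b + (1 - a / b) * hstar 0 ≤ hstar ((a/b) * b + (1 - a/b) * 0) := by
        have h1 : (0:ℝ) ≤ a / b := by positivity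
        have h2 : (0:ℝ) ≤ 1 - a / b := by
          have : a / b ≤ 1 := (div_le_one hb).2 hab
          linarith
        simpa using hconc.2 (mem_Ici.2 (ha.trans hab)) (mem_Ici.2 (le_refl 0)) h1 h2 (by ring)
      have hba : (a / b) * b = a := by field_simp
      rw [hba] at hconcpt
      have h0 : (0:ℝ) ≤ (1 - a / b) * hstar 0 := by
        have : a / b ≤ 1 := (div_le_one hb).2 hab
        have := hnonneg 0 (le_refl 0)
        nlinarith
      have h2 : a / b * hstar b ≤ hstar a := by
        simp only [mul_zero, add_zero] at hconcpt
        linarith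
      have h3 := mul_le_mul_of_nonneg_right h2 hb.le
      rw [div_le_div_iff₀ hb hhb0]
      calc a * hstar b = a / b * hstar b * b := by field_simp
        _ ≤ hstar a * b := h3
    -- LHS = (a/b)^(p/q)
    rw [← Real.div_rpow ha hb.le]
    have hab1 : a / b ≤ 1 := (div_le_one hb).2 hab
    have hab0 : (0:ℝ) ≤ a / b := by positivity
    have hrw : (a * hstar a ^ δ) / (b * hstar b ^ δ) = (a / b) * (hstar a / hstar b) ^ δ := by
      rw [Real.div_rpow hha0.le hhb0.le]
      field_simp
    rw [hrw, hpq, Real.rpow_add' hab0 (by positivity : (1:ℝ) + δ ≠ 0), Real.rpow_one]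
    have : (a / b) ^ δ ≤ (hstar a / hstar b) ^ δ :=
      Real.rpow_le_rpow hab0 hstarshape hδ0.le
    exact mul_le_mul_of_nonneg_left this hab0
end

section
/- Let 0 < q < p ≤ 2 and let Y be a random variable on a family of probability spaces (Ω, F, 𝒫) with lim_{m→∞} sup_{P∈𝒫} E_P(|Y|^q · 1{|Y|^q > m}) = 0. Then there exists a function φ̃(x) = x·h̃(x) on [0,∞) where h̃ diverges to ∞, satisfies a^{p/q}/b^{p/q} ≤ (a·h̃(a))/(b·h̃(b)) for all 0 ≤ a ≤ b with b > 0, and sup_{P∈𝒫} E_P[φ̃(|Y|^q)] < ∞. -/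
open MeasureTheory ProbabilityTheory Filter Set

/-- If the (uncentered) q-th moment of `Y` is Ps-uniformly integrable and `0 < q < p ≤ 2`, then
there exists `φ̃(x) = x · h̃(x)` with `h̃` diverging to ∞, satisfying the ratio inequality
`a^(p/q)/b^(p/q) ≤ (a h̃ a)/(b h̃ b)`, and with `sup_{P∈Ps} E_P[φ̃(|Y|^q)] < ∞`. -/
theorem stmt10 {Ω : Type*} [MeasurableSpace Ω] (Ps : Set (Measure Ω))
    (hPs : ∀ P ∈ Ps, IsProbabilityMeasure P)
    (Y : Ω → ℝ) (hY : Measurable Y) (p q : ℝ) (hq : 0 < q) (hqp : q < p) (hp : p ≤ 2)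
    (hint : ∀ P ∈ Ps, Integrable (fun ω => |Y ω| ^ q) P)
    (hUI : ∀ ε : ℝ, 0 < ε → ∃ M : ℕ, ∀ m ≥ M, ∀ P ∈ Ps,
      ∫ ω in {ω | (m : ℝ) < |Y ω| ^ q}, |Y ω| ^ q ∂P < ε) :
    ∃ htil : ℝ → ℝ, Measurable htil ∧ (∀ x : ℝ, 0 ≤ x → 0 ≤ htil x) ∧
      Tendsto htil atTop atTop ∧
      (∀ a b : ℝ, 0 ≤ a → a ≤ b → 0 < b →
        a ^ (p / q) / b ^ (p / q) ≤ (a * htil a) / (b * htil b)) ∧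
      ∃ C : ℝ, ∀ P ∈ Ps,
        ∫⁻ ω, ENNReal.ofReal (|Y ω| ^ q * htil (|Y ω| ^ q)) ∂P ≤ ENNReal.ofReal C := by
  classical
  have hpq1 : 1 < p / q := (one_lt_div hq).2 hqp
  set ε : ℝ := p / q - 1 with hεdef
  have hε : 0 < ε := by simp only [hεdef]; linarith
  set X : Ω → ℝ := fun ω => |Y ω| ^ q with hXdef
  have hXm : Measurable X :=
    (Real.continuous_rpow_const hq.le).measurable.comp (measurable_abs.comp hY)
  have hXnn : ∀ ω, 0 ≤ X ω := fun ω => Real.rpow_nonneg (abs_nonneg _) q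
  -- cutoffs
  have hcut' : ∀ n : ℕ, ∃ N : ℕ, ∀ m ≥ N, ∀ P ∈ Ps,
      ∫ ω in {ω | (m : ℝ) < X ω}, X ω ∂P < (1 / 2) ^ n :=
    fun n => hUI ((1 / 2) ^ n) (by positivity)
  choose cut hcut using hcut'
  set m' : ℕ → ℕ := fun n => max (cut n) (⌈(2 : ℝ) ^ ((n : ℝ) / ε)⌉₊ + 1) with hm'def
  set M : ℕ → ℝ := fun n => (m' n : ℝ) * (m' n : ℝ) with hMdef
  have hm'1 : ∀ n, (1 : ℝ) ≤ (m' n : ℝ) := by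
    intro n
    have : 1 ≤ m' n := le_trans (Nat.succ_le_succ (Nat.zero_le _)) (le_max_right _ _)
    exact_mod_cast this
  have hm'pos : ∀ n, (0 : ℝ) < (m' n : ℝ) := fun n => lt_of_lt_of_le one_pos (hm'1 n)
  have hm'pow : ∀ n, (2 : ℝ) ^ n ≤ (m' n : ℝ) ^ ε := by
    intro n
    have h1 : (2 : ℝ) ^ ((n : ℝ) / ε) ≤ (m' n : ℝ) := by
      calc (2 : ℝ) ^ ((n : ℝ) / ε) ≤ (⌈(2 : ℝ) ^ ((n : ℝ) / ε)⌉₊ : ℝ) := Nat.le_ceil _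
        _ ≤ ((⌈(2 : ℝ) ^ ((n : ℝ) / ε)⌉₊ + 1 : ℕ) : ℝ) := by exact_mod_cast Nat.le_succ _
        _ ≤ (m' n : ℝ) := by exact_mod_cast Nat.cast_le.2 (le_max_right _ _)
    have h2 : ((2 : ℝ) ^ ((n : ℝ) / ε)) ^ ε ≤ (m' n : ℝ) ^ ε :=
      Real.rpow_le_rpow (Real.rpow_nonneg (by norm_num) _) h1 hε.le
    have h3 : ((2 : ℝ) ^ ((n : ℝ) / ε)) ^ ε = (2 : ℝ) ^ n := by
      rw [← Real.rpow_natCast 2 n, ← Real.rpow_mul (by norm_num : (0:ℝ) ≤ 2),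
        div_mul_cancel₀ _ hε.ne']
    linarith [h2, h3.symm.le]
  have hMpos : ∀ n, (0 : ℝ) < M n := fun n => mul_pos (hm'pos n) (hm'pos n)
  have hm'eps1 : ∀ n, (1 : ℝ) ≤ (m' n : ℝ) ^ ε := fun n => by
    have := Real.rpow_le_rpow zero_le_one (hm'1 n) hε.le
    rwa [Real.one_rpow] at this
  have hMpow : ∀ n, (2 : ℝ) ^ n ≤ M n ^ ε := by
    intro n
    have h1 : M n ^ ε = (m' n : ℝ) ^ ε * (m' n : ℝ) ^ ε :=
      Real.mul_rpow (hm'pos n).le (hm'pos n).le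
    nlinarith [hm'pow n, hm'eps1 n, pow_pos (by norm_num : (0:ℝ) < 2) n]
  -- the summand
  set F : ℝ → ℕ → ℝ := fun x n => min 1 ((x / M n) ^ ε) with hFdef
  have hFnn : ∀ x n, 0 ≤ x → 0 ≤ F x n := fun x n hx =>
    le_min zero_le_one (Real.rpow_nonneg (div_nonneg hx (hMpos n).le) ε)
  have hFle : ∀ x n, 0 ≤ x → F x n ≤ x ^ ε * (1 / 2) ^ n := by
    intro x n hx
    have h1 : (x / M n) ^ ε = x ^ ε / M n ^ ε := Real.div_rpow hx (hMpos n).le ε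
    have h2 : x ^ ε / M n ^ ε ≤ x ^ ε / 2 ^ n :=
      div_le_div_of_nonneg_left (Real.rpow_nonneg hx ε) (pow_pos (by norm_num) n) (hMpow n)
    calc F x n ≤ (x / M n) ^ ε := min_le_right _ _
      _ = x ^ ε / M n ^ ε := h1
      _ ≤ x ^ ε / 2 ^ n := h2
      _ = x ^ ε * (1 / 2) ^ n := by rw [div_eq_mul_inv, one_div, inv_pow]
  have hFsum : ∀ x, 0 ≤ x → Summable (F x) := by
    intro x hx
    exact Summable.of_nonneg_of_le (fun n => hFnn x n hx) (fun n => hFle x n hx)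
      ((summable_geometric_of_lt_one (by norm_num) (by norm_num)).mul_left (x ^ ε))
  set htil : ℝ → ℝ := fun x => ∑' n, F (max x 0) n with hhdef
  have hmax : ∀ x, 0 ≤ x → htil x = ∑' n, F x n := by
    intro x hx; simp only [hhdef, max_eq_left hx]
  have hnn : ∀ x, 0 ≤ htil x := fun x =>
    tsum_nonneg fun n => hFnn _ n (le_max_right _ _)
  have hmono : Monotone htil := by
    intro x y hxy
    refine Summable.tsum_le_tsum (fun n => ?_) (hFsum _ (le_max_right x 0)) (hFsum _ (le_max_right y 0))
    have hdiv : max x 0 / M n ≤ max y 0 / M n :=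
      div_le_div_of_nonneg_right (max_le_max hxy le_rfl) (hMpos n).le
    exact min_le_min le_rfl
      (Real.rpow_le_rpow (div_nonneg (le_max_right _ _) (hMpos n).le) hdiv hε.le)
  have hmeas : Measurable htil := hmono.measurable
  have hpos : ∀ x, 0 < x → 0 < htil x := by
    intro x hx
    have h0 : 0 < F x 0 :=
      lt_min one_pos (Real.rpow_pos_of_pos (div_pos hx (hMpos 0)) ε)
    have h1 : F x 0 ≤ ∑' n, F x n := Summable.le_tsum (hFsum x hx.le) 0 fun j _ => hFnn x j hx.le
    rw [hmax x hx.le]; linarith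
  -- tendsto
  have htends : Tendsto htil atTop atTop := by
    rw [tendsto_atTop_atTop]
    intro b
    obtain ⟨N, hN⟩ := exists_nat_ge b
    refine ⟨∑ k ∈ Finset.range N, M k, fun x hx => ?_⟩
    have hx0 : 0 ≤ x := le_trans (Finset.sum_nonneg fun k _ => (hMpos k).le) hx
    have hterm : ∀ k ∈ Finset.range N, (1 : ℝ) ≤ F x k := by
      intro k hk
      have hk1 : M k ≤ x :=
        le_trans (Finset.single_le_sum (fun i _ => (hMpos i).le) hk) hx
      have h2 : (1 : ℝ) ≤ x / M k := (one_le_div (hMpos k)).2 hk1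
      have h3 : (1 : ℝ) ≤ (x / M k) ^ ε := by
        have := Real.rpow_le_rpow zero_le_one h2 hε.le
        rwa [Real.one_rpow] at this
      exact le_min le_rfl h3
    calc b ≤ N := hN
      _ = ∑ k ∈ Finset.range N, (1 : ℝ) := by simp
      _ ≤ ∑ k ∈ Finset.range N, F x k := Finset.sum_le_sum hterm
      _ ≤ ∑' n, F x n := Summable.sum_le_tsum _ (fun k _ => hFnn x k hx0) (hFsum x hx0)
      _ = htil x := (hmax x hx0).symm
  -- key pointwise ratio
  have hratio0 : ∀ a b : ℝ, 0 < a → a ≤ b → a ^ ε * htil b ≤ b ^ ε * htil a := by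
    intro a b ha hab
    have hb : 0 < b := lt_of_lt_of_le ha hab
    rw [hmax a ha.le, hmax b hb.le, ← tsum_mul_left, ← tsum_mul_left]
    refine Summable.tsum_le_tsum (fun n => ?_) ((hFsum b hb.le).mul_left _) ((hFsum a ha.le).mul_left _)
    have hK : 0 < M n ^ ε := Real.rpow_pos_of_pos (hMpos n) ε
    have hu : 0 < a ^ ε := Real.rpow_pos_of_pos ha ε
    have hv : 0 < b ^ ε := Real.rpow_pos_of_pos hb ε
    have huv : a ^ ε ≤ b ^ ε := Real.rpow_le_rpow ha.le hab hε.le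
    have hda : (a / M n) ^ ε = a ^ ε / M n ^ ε := Real.div_rpow ha.le (hMpos n).le ε
    have hdb : (b / M n) ^ ε = b ^ ε / M n ^ ε := Real.div_rpow hb.le (hMpos n).le ε
    simp only [hFdef, hda, hdb]
    set u := a ^ ε
    set v := b ^ ε
    set K := M n ^ ε
    rcases le_total v K with h1 | h1
    · have h0 : u ≤ K := le_trans huv h1
      rw [min_eq_right ((div_le_one hK).2 h1), min_eq_right ((div_le_one hK).2 h0)]
      have : u * (v / K) = v * (u / K) := by ring
      exact this.le
    · rcases le_total u K with h2 | h2
      · rw [min_eq_left ((one_le_div hK).2 h1), min_eq_right ((div_le_one hK).2 h2)]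
        rw [mul_one, mul_div_assoc', le_div_iff₀ hK]
        nlinarith
      · rw [min_eq_left ((one_le_div hK).2 h1), min_eq_left ((one_le_div hK).2 h2)]
        simpa using huv
  have hratio : ∀ a b : ℝ, 0 ≤ a → a ≤ b → 0 < b →
      a ^ (p / q) / b ^ (p / q) ≤ (a * htil a) / (b * htil b) := by
    intro a b ha hab hb
    rcases eq_or_lt_of_le ha with h0 | ha'
    · rw [← h0, Real.zero_rpow (by positivity : (0:ℝ) < p / q).ne', zero_div, zero_mul, zero_div]
    · have hbh : 0 < b * htil b := mul_pos hb (hpos b hb)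
      rw [div_le_div_iff₀ (Real.rpow_pos_of_pos hb _) hbh]
      have hkey : a ^ ε * htil b ≤ b ^ ε * htil a := hratio0 a b ha' hab
      have hpq : p / q = 1 + ε := by simp [hεdef]
      have hra : a ^ (p / q) = a * a ^ ε := by
        rw [hpq, Real.rpow_add ha', Real.rpow_one]
      have hrb : b ^ (p / q) = b * b ^ ε := by
        rw [hpq, Real.rpow_add hb, Real.rpow_one]
      rw [hra, hrb]
      calc a * a ^ ε * (b * htil b) = (a * b) * (a ^ ε * htil b) := by ring
        _ ≤ (a * b) * (b ^ ε * htil a) :=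
          mul_le_mul_of_nonneg_left hkey (by positivity)
        _ = a * htil a * (b * b ^ ε) := by ring
  -- uniform bound on first moment
  set B : ℝ := (cut 0 : ℝ) + 1 with hBdef
  have hB0 : 0 ≤ B := by positivity
  have hBbd : ∀ P ∈ Ps, ∫ ω, X ω ∂P ≤ B := by
    intro P hP
    haveI := hPs P hP
    set s : Set Ω := {ω | ((cut 0 : ℕ) : ℝ) < X ω} with hsdef
    have hs : MeasurableSet s := measurableSet_lt measurable_const hXm
    have hint' : Integrable X P := hint P hP
    have htail : ∫ ω in s, X ω ∂P < 1 := by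
      have := hcut 0 (cut 0) le_rfl P hP
      simpa using this
    have hsplit : ∫ ω, X ω ∂P = ∫ ω in s, X ω ∂P + ∫ ω in sᶜ, X ω ∂P :=
      (integral_add_compl hs hint').symm
    have hcompl : ∫ ω in sᶜ, X ω ∂P ≤ (cut 0 : ℝ) := by
      have h1 : ∫ ω in sᶜ, X ω ∂P ≤ ∫ _ω in sᶜ, ((cut 0 : ℕ) : ℝ) ∂P := by
        refine setIntegral_mono_on hint'.integrableOn (integrable_const _) hs.compl ?_
        intro ω hω
        exact not_lt.1 hω
      have h2 : ∫ _ω in sᶜ, ((cut 0 : ℕ) : ℝ) ∂P = (P sᶜ).toReal * (cut 0 : ℝ) := by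
        rw [setIntegral_const, smul_eq_mul]
        rfl
      have h3 : (P sᶜ).toReal ≤ 1 := by
        have := prob_le_one (μ := P) (s := sᶜ)
        simpa using ENNReal.toReal_mono (by norm_num) this
      calc ∫ ω in sᶜ, X ω ∂P ≤ (P sᶜ).toReal * (cut 0 : ℝ) := h1.trans h2.le
        _ ≤ 1 * (cut 0 : ℝ) := by
          exact mul_le_mul_of_nonneg_right h3 (Nat.cast_nonneg _)
        _ = (cut 0 : ℝ) := one_mul _
    rw [hsplit, hBdef]; linarith
  -- per term integral bound
  have hterm : ∀ n : ℕ, ∀ P ∈ Ps,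
      ∫⁻ ω, ENNReal.ofReal (X ω * F (X ω) n) ∂P ≤
        ENNReal.ofReal ((1 / 2) ^ n * (1 + B)) := by
    intro n P hP
    haveI := hPs P hP
    have hint' : Integrable X P := hint P hP
    set s : Set Ω := {ω | ((m' n : ℕ) : ℝ) < X ω} with hsdef
    have hs : MeasurableSet s := measurableSet_lt measurable_const hXm
    -- pointwise bound
    have hpw : ∀ ω, X ω * F (X ω) n ≤ s.indicator X ω + (1 / 2) ^ n * X ω := by
      intro ω
      by_cases hω : ((m' n : ℕ) : ℝ) < X ω
      · have hi : s.indicator X ω = X ω := Set.indicator_of_mem (show ω ∈ s from hω) X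
        have h1 : F (X ω) n ≤ 1 := min_le_left _ _
        have h2 : X ω * F (X ω) n ≤ X ω * 1 :=
          mul_le_mul_of_nonneg_left h1 (hXnn ω)
        have h3 : (0:ℝ) ≤ (1 / 2) ^ n * X ω := by positivity
        rw [hi]; nlinarith
      · have hi : s.indicator X ω = 0 := Set.indicator_of_notMem (show ω ∉ s from hω) X
        have hle : X ω ≤ (m' n : ℝ) := not_lt.1 hω
        have h1 : X ω / M n ≤ 1 / (m' n : ℝ) := by
          rw [hMdef, div_le_div_iff₀ (mul_pos (hm'pos n) (hm'pos n)) (hm'pos n)]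
          nlinarith [hXnn ω, hm'pos n]
        have h2 : (X ω / M n) ^ ε ≤ (1 / (m' n : ℝ)) ^ ε :=
          Real.rpow_le_rpow (div_nonneg (hXnn ω) (hMpos n).le) h1 hε.le
        have h3 : (1 / (m' n : ℝ)) ^ ε = 1 / (m' n : ℝ) ^ ε := by
          rw [Real.div_rpow zero_le_one (hm'pos n).le ε, Real.one_rpow]
        have h4 : 1 / (m' n : ℝ) ^ ε ≤ (1 / 2) ^ n := by
          rw [one_div, one_div, inv_pow]
          exact inv_anti₀ (pow_pos (by norm_num) n) (hm'pow n)
        have h5 : F (X ω) n ≤ (1 / 2) ^ n := by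
          calc F (X ω) n ≤ (X ω / M n) ^ ε := min_le_right _ _
            _ ≤ (1 / (m' n : ℝ)) ^ ε := h2
            _ = 1 / (m' n : ℝ) ^ ε := h3
            _ ≤ (1 / 2) ^ n := h4
        have h6 : X ω * F (X ω) n ≤ X ω * (1 / 2) ^ n :=
          mul_le_mul_of_nonneg_left h5 (hXnn ω)
        rw [hi]; linarith [h6]
    have hmeas1 : Measurable fun ω => ENNReal.ofReal (s.indicator X ω) :=
      (hXm.indicator hs).ennreal_ofReal
    have hstep1 : ∫⁻ ω, ENNReal.ofReal (X ω * F (X ω) n) ∂P ≤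
        ∫⁻ ω, (ENNReal.ofReal (s.indicator X ω) + ENNReal.ofReal ((1 / 2) ^ n * X ω)) ∂P := by
      refine lintegral_mono fun ω => ?_
      calc ENNReal.ofReal (X ω * F (X ω) n)
          ≤ ENNReal.ofReal (s.indicator X ω + (1 / 2) ^ n * X ω) :=
            ENNReal.ofReal_le_ofReal (hpw ω)
        _ ≤ ENNReal.ofReal (s.indicator X ω) + ENNReal.ofReal ((1 / 2) ^ n * X ω) :=
            ENNReal.ofReal_add_le
    have hind : ∫⁻ ω, ENNReal.ofReal (s.indicator X ω) ∂P ≤ ENNReal.ofReal ((1 / 2) ^ n) := by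
      have he : (fun ω => ENNReal.ofReal (s.indicator X ω)) =
          s.indicator fun ω => ENNReal.ofReal (X ω) := by
        funext ω
        by_cases hω : ω ∈ s
        · simp [Set.indicator_of_mem hω]
        · simp [Set.indicator_of_notMem hω]
      rw [he, lintegral_indicator hs _]
      have heq : ∫⁻ ω in s, ENNReal.ofReal (X ω) ∂P = ENNReal.ofReal (∫ ω in s, X ω ∂P) :=
        (ofReal_integral_eq_lintegral_ofReal hint'.integrableOn
          (Filter.Eventually.of_forall fun ω => hXnn ω)).symm
      rw [heq]
      exact ENNReal.ofReal_le_ofReal (hcut n (m' n) (le_max_left _ _) P hP).le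
    have hsecond : ∫⁻ ω, ENNReal.ofReal ((1 / 2) ^ n * X ω) ∂P ≤
        ENNReal.ofReal ((1 / 2) ^ n * B) := by
      have he : (fun ω => ENNReal.ofReal ((1 / 2) ^ n * X ω)) =
          fun ω => ENNReal.ofReal ((1 / 2 : ℝ) ^ n) * ENNReal.ofReal (X ω) := by
        funext ω; rw [ENNReal.ofReal_mul (by positivity)]
      rw [he, lintegral_const_mul _ hXm.ennreal_ofReal]
      have heq : ∫⁻ ω, ENNReal.ofReal (X ω) ∂P = ENNReal.ofReal (∫ ω, X ω ∂P) :=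
        (ofReal_integral_eq_lintegral_ofReal hint'
          (Filter.Eventually.of_forall fun ω => hXnn ω)).symm
      rw [heq, ← ENNReal.ofReal_mul (by positivity)]
      exact ENNReal.ofReal_le_ofReal
        (mul_le_mul_of_nonneg_left (hBbd P hP) (by positivity))
    calc ∫⁻ ω, ENNReal.ofReal (X ω * F (X ω) n) ∂P
        ≤ ∫⁻ ω, (ENNReal.ofReal (s.indicator X ω) + ENNReal.ofReal ((1 / 2) ^ n * X ω)) ∂P :=
          hstep1
      _ = (∫⁻ ω, ENNReal.ofReal (s.indicator X ω) ∂P) +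
          ∫⁻ ω, ENNReal.ofReal ((1 / 2) ^ n * X ω) ∂P := lintegral_add_left hmeas1 _
      _ ≤ ENNReal.ofReal ((1 / 2) ^ n) + ENNReal.ofReal ((1 / 2) ^ n * B) :=
          add_le_add hind hsecond
      _ = ENNReal.ofReal ((1 / 2) ^ n * (1 + B)) := by
          rw [← ENNReal.ofReal_add (by positivity) (by positivity)]
          ring_nf
  -- assemble
  refine ⟨htil, hmeas, fun x _ => hnn x, htends, hratio, 2 * (1 + B), fun P hP => ?_⟩
  haveI := hPs P hP
  have hFm : ∀ n, Measurable fun ω => ENNReal.ofReal (X ω * F (X ω) n) := by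
    intro n
    have hc : Continuous fun x : ℝ => F x n :=
      continuous_const.min ((Real.continuous_rpow_const hε.le).comp
        (continuous_id.div_const _))
    exact (hXm.mul (hc.measurable.comp hXm)).ennreal_ofReal
  have h1 : ∀ ω, ENNReal.ofReal (X ω * htil (X ω)) =
      ∑' n, ENNReal.ofReal (X ω * F (X ω) n) := by
    intro ω
    rw [hmax _ (hXnn ω), ← tsum_mul_left]
    exact ENNReal.ofReal_tsum_of_nonneg
      (fun n => mul_nonneg (hXnn ω) (hFnn _ n (hXnn ω)))
      ((hFsum _ (hXnn ω)).mul_left _)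
  calc ∫⁻ ω, ENNReal.ofReal (X ω * htil (X ω)) ∂P
      = ∫⁻ ω, ∑' n, ENNReal.ofReal (X ω * F (X ω) n) ∂P := by
        exact lintegral_congr fun ω => h1 ω
    _ = ∑' n, ∫⁻ ω, ENNReal.ofReal (X ω * F (X ω) n) ∂P :=
        lintegral_tsum fun n => (hFm n).aemeasurable
    _ ≤ ∑' n, ENNReal.ofReal ((1 / 2) ^ n * (1 + B)) :=
        ENNReal.tsum_le_tsum fun n => hterm n P hP
    _ = ENNReal.ofReal (∑' n : ℕ, (1 / 2 : ℝ) ^ n * (1 + B)) :=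
        (ENNReal.ofReal_tsum_of_nonneg (fun n => by positivity)
          ((summable_geometric_of_lt_one (by norm_num) (by norm_num)).mul_right _)).symm
    _ = ENNReal.ofReal (2 * (1 + B)) := by
        rw [tsum_mul_right, tsum_geometric_of_lt_one (by norm_num) (by norm_num)]
        norm_num
end

section
/- Let Y be a random variable on (Ω, F) with E_P|Y| < ∞ for every P in a family 𝒫. Then Y is 𝒫-uniformly integrable (i.e., lim_{m→∞} sup_{P∈𝒫} E_P(|Y|·1{|Y| ≥ m}) = 0) if and only if there exists a measurable function h : [0,∞) → [0,∞) that is concave, strictly increasing, with h(0) = 0 and h(x) → ∞ as x → ∞, such that sup_{P∈𝒫} E_P[|Y|·h(|Y|)] < ∞. -/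
open MeasureTheory ProbabilityTheory Filter Set

/-- De la Vallée Poussin criterion, refined: `Y` (integrable under every `P ∈ Ps`) is
Ps-uniformly integrable iff there is a measurable `h : [0,∞) → [0,∞)` that is concave, strictly
increasing, with `h 0 = 0`, `h → ∞`, and `sup_{P∈Ps} E_P[|Y| h(|Y|)] < ∞`. -/
theorem stmt11 {Ω : Type*} [MeasurableSpace Ω] (Ps : Set (Measure Ω))
    (hPs : ∀ P ∈ Ps, IsProbabilityMeasure P)
    (Y : Ω → ℝ) (hY : Measurable Y)
    (hint : ∀ P ∈ Ps, Integrable Y P) :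
    (∀ ε : ℝ, 0 < ε → ∃ M : ℕ, ∀ m ≥ M, ∀ P ∈ Ps,
        ∫ ω in {ω | (m : ℝ) ≤ |Y ω|}, |Y ω| ∂P < ε) ↔
      ∃ h : ℝ → ℝ, Measurable h ∧ ConcaveOn ℝ (Ici (0 : ℝ)) h ∧
        StrictMonoOn h (Ici (0 : ℝ)) ∧ (∀ x : ℝ, 0 ≤ x → 0 ≤ h x) ∧ h 0 = 0 ∧
        Tendsto h atTop atTop ∧
        ∃ C : ℝ, ∀ P ∈ Ps,
          ∫⁻ ω, ENNReal.ofReal (|Y ω| * h |Y ω|) ∂P ≤ ENNReal.ofReal C := by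
  constructor
  · -- forward direction: construct h
    intro hui
    choose M hM using fun k : ℕ => hui ((1/2 : ℝ)^k) (by positivity)
    set R : ℕ → ℕ := fun k => max (M k) (2^k) with hRdef
    have hRM : ∀ k, M k ≤ R k := fun k => le_max_left _ _
    have hR2 : ∀ k, (2:ℝ)^k ≤ (R k : ℝ) := by
      intro k
      calc (2:ℝ)^k = ((2^k : ℕ) : ℝ) := by push_cast; ring
        _ ≤ _ := Nat.cast_le.2 (le_max_right _ _)
    have hR1 : ∀ k, (1:ℝ) ≤ (R k : ℝ) := fun k =>
      le_trans (one_le_pow₀ one_le_two) (hR2 k)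
    set c : ℕ → ℝ := fun k => (R k : ℝ)^2 with hcdef
    have hc1 : ∀ k, 1 ≤ c k := fun k => one_le_pow₀ (hR1 k)
    have hc0 : ∀ k, 0 < c k := fun k => lt_of_lt_of_le one_pos (hc1 k)
    have hRc : ∀ k, (R k : ℝ) ≤ c k := fun k => by
      have := hR1 k
      calc (R k : ℝ) = (R k : ℝ) * 1 := (mul_one _).symm
        _ ≤ (R k : ℝ) * (R k : ℝ) := by nlinarith
        _ = c k := (sq (R k : ℝ)).symm
    set f : ℕ → ℝ → ℝ := fun k x => (c k)⁻¹ * min x (c k) with hfdef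
    have habs : ∀ k x, |f k x| ≤ (1/4 : ℝ)^k * |x| := by
      intro k x
      have h1 : |min x (c k)| ≤ |x| := by
        rcases le_total x (c k) with h | h
        · rw [min_eq_left h]
        · rw [min_eq_right h, abs_of_nonneg (hc0 k).le]
          exact le_trans h (le_abs_self x)
      have h2 : (c k)⁻¹ ≤ (1/4 : ℝ)^k := by
        rw [one_div, inv_pow]
        apply inv_anti₀ (by positivity)
        calc (4:ℝ)^k = ((2:ℝ)^k)^2 := by rw [← pow_mul, mul_comm, pow_mul]; norm_num
          _ ≤ (R k : ℝ)^2 := by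
              apply pow_le_pow_left₀ (by positivity) (hR2 k)
      calc |f k x| = (c k)⁻¹ * |min x (c k)| := by
            rw [abs_mul, abs_of_nonneg (inv_nonneg.2 (hc0 k).le)]
        _ ≤ (1/4 : ℝ)^k * |x| := by
            apply mul_le_mul h2 h1 (abs_nonneg _) (by positivity)
    have hsum : ∀ x, Summable (fun k => f k x) := by
      intro x
      apply Summable.of_norm_bounded (g := fun k => (1/4 : ℝ)^k * |x|)
        ((summable_geometric_of_lt_one (by norm_num) (by norm_num)).mul_right |x|)
      intro k
      simpa using habs k x
    set h : ℝ → ℝ := fun x => ∑' k, f k x with hhdef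
    have hfmono : ∀ k, Monotone (f k) := by
      intro k a b hab
      exact mul_le_mul_of_nonneg_left (min_le_min hab le_rfl) (inv_nonneg.2 (hc0 k).le)
    have hmono : Monotone h := by
      intro a b hab
      exact Summable.tsum_le_tsum (fun k => hfmono k hab) (hsum a) (hsum b)
    have hfnonneg : ∀ k, ∀ x : ℝ, 0 ≤ x → 0 ≤ f k x := by
      intro k x hx
      exact mul_nonneg (inv_nonneg.2 (hc0 k).le) (le_min hx (hc0 k).le)
    refine ⟨h, hmono.measurable, ⟨convex_Ici 0, ?_⟩, ?_, ?_, ?_, ?_, ?_⟩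
    · -- concave
      intro x hx y hy a b ha hb hab
      simp only [smul_eq_mul, hhdef]
      rw [← tsum_mul_left, ← tsum_mul_left,
        ← Summable.tsum_add ((hsum x).mul_left a) ((hsum y).mul_left b)]
      apply Summable.tsum_le_tsum _ (((hsum x).mul_left a).add ((hsum y).mul_left b)) (hsum _)
      intro k
      have hmin : a * min x (c k) + b * min y (c k) ≤ min (a * x + b * y) (c k) := by
        apply le_min
        · exact add_le_add (mul_le_mul_of_nonneg_left (min_le_left _ _) ha)
            (mul_le_mul_of_nonneg_left (min_le_left _ _) hb)
        · have h1 : a * min x (c k) + b * min y (c k) ≤ a * c k + b * c k :=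
            add_le_add (mul_le_mul_of_nonneg_left (min_le_right _ _) ha)
              (mul_le_mul_of_nonneg_left (min_le_right _ _) hb)
          have h2 : a * c k + b * c k = c k := by rw [← add_mul, hab, one_mul]
          linarith
      calc a * f k x + b * f k y
          = (c k)⁻¹ * (a * min x (c k) + b * min y (c k)) := by
            simp only [hfdef]; ring
        _ ≤ (c k)⁻¹ * min (a * x + b * y) (c k) :=
            mul_le_mul_of_nonneg_left hmin (inv_nonneg.2 (hc0 k).le)
        _ = f k (a * x + b * y) := rfl
    · -- strict mono on Ici 0
      intro a ha b hb hab
      obtain ⟨n, hn⟩ : ∃ n : ℕ, b < 2^n := pow_unbounded_of_one_lt b one_lt_two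
      have hbc : b ≤ c n := by
        calc b ≤ (2:ℝ)^n := hn.le
          _ ≤ (R n : ℝ) := hR2 n
          _ ≤ c n := hRc n
      have hstrict : f n a < f n b := by
        simp only [hfdef]
        rw [min_eq_left (le_trans hab.le hbc), min_eq_left hbc]
        exact mul_lt_mul_of_pos_left hab (inv_pos.2 (hc0 n))
      exact Summable.tsum_lt_tsum (fun k => hfmono k hab.le) hstrict (hsum a) (hsum b)
    · -- nonneg
      intro x hx
      exact tsum_nonneg (fun k => hfnonneg k x hx)
    · -- h 0 = 0
      have : ∀ k, f k 0 = 0 := by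
        intro k
        simp only [hfdef, min_eq_left (hc0 k).le, mul_zero]
      simp only [hhdef, this, tsum_zero]
    · -- tendsto atTop
      apply tendsto_atTop_atTop_of_monotone hmono
      intro b
      obtain ⟨n, hn⟩ := exists_nat_ge b
      set T : ℕ := (Finset.range n).sup R with hT
      refine ⟨(T : ℝ)^2, ?_⟩
      have hx0 : (0:ℝ) ≤ (T : ℝ)^2 := by positivity
      have key : ∀ k ∈ Finset.range n, f k ((T:ℝ)^2) = 1 := by
        intro k hk
        have hck : c k ≤ (T:ℝ)^2 := by
          apply pow_le_pow_left₀ (by positivity)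
          exact_mod_cast Finset.le_sup hk
        simp only [hfdef]
        rw [min_eq_right hck]
        exact inv_mul_cancel₀ (hc0 k).ne'
      calc b ≤ (n : ℝ) := hn
        _ = ∑ k ∈ Finset.range n, f k ((T:ℝ)^2) := by
            rw [Finset.sum_congr rfl key]; simp
        _ ≤ h ((T:ℝ)^2) :=
            Summable.sum_le_tsum _ (fun k _ => hfnonneg k _ hx0) (hsum _)
    · -- the uniform bound
      refine ⟨2 * ((R 0 : ℝ) + 2), ?_⟩
      intro P hP
      haveI := hPs P hP
      have hYint : Integrable (fun ω => |Y ω|) P := (hint P hP).abs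
      set S : ℕ → Set Ω := fun k => {ω | (R k : ℝ) ≤ |Y ω|} with hSdef
      have hSmeas : ∀ k, MeasurableSet (S k) :=
        fun k => measurableSet_le measurable_const hY.abs
      have htail : ∀ k, ∫ ω in S k, |Y ω| ∂P < (1/2:ℝ)^k :=
        fun k => hM k (R k) (hRM k) P hP
      have htail' : ∀ k, ∫⁻ ω in S k, ENNReal.ofReal |Y ω| ∂P ≤ ENNReal.ofReal ((1/2:ℝ)^k) := by
        intro k
        rw [← ofReal_integral_eq_lintegral_ofReal (hYint.restrict)
          (Filter.Eventually.of_forall fun ω => abs_nonneg _)]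
        exact ENNReal.ofReal_le_ofReal (htail k).le
      -- total expectation bound
      have hEY : ∫⁻ ω, ENNReal.ofReal |Y ω| ∂P ≤ ENNReal.ofReal ((R 0 : ℝ) + 1) := by
        rw [← lintegral_add_compl (fun ω => ENNReal.ofReal |Y ω|) (hSmeas 0)]
        have h2 : ∫⁻ ω in (S 0)ᶜ, ENNReal.ofReal |Y ω| ∂P ≤ ENNReal.ofReal (R 0 : ℝ) := by
          calc ∫⁻ ω in (S 0)ᶜ, ENNReal.ofReal |Y ω| ∂P
              ≤ ∫⁻ _ in (S 0)ᶜ, ENNReal.ofReal (R 0 : ℝ) ∂P := by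
                apply setLIntegral_mono measurable_const
                intro ω hω
                exact ENNReal.ofReal_le_ofReal (le_of_not_ge hω)
            _ = ENNReal.ofReal (R 0 : ℝ) * P ((S 0)ᶜ) := by
                rw [setLIntegral_const]
            _ ≤ ENNReal.ofReal (R 0 : ℝ) * 1 := by
                exact mul_le_mul_right prob_le_one _
            _ = ENNReal.ofReal (R 0 : ℝ) := mul_one _
        calc ∫⁻ ω in S 0, ENNReal.ofReal |Y ω| ∂P + ∫⁻ ω in (S 0)ᶜ, ENNReal.ofReal |Y ω| ∂P
            ≤ ENNReal.ofReal ((1/2:ℝ)^0) + ENNReal.ofReal (R 0 : ℝ) :=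
              add_le_add (htail' 0) h2
          _ = ENNReal.ofReal ((R 0 : ℝ) + 1) := by
              rw [← ENNReal.ofReal_add (by norm_num) (by positivity)]
              norm_num [add_comm]
      -- termwise pointwise bound
      have hpt : ∀ ω, ENNReal.ofReal (|Y ω| * h |Y ω|) ≤
          ∑' k, ENNReal.ofReal ((if (R k : ℝ) ≤ |Y ω| then |Y ω| else 0) + (1/2:ℝ)^k * |Y ω|) := by
        intro ω
        set x := |Y ω| with hxdef
        have hx : 0 ≤ x := abs_nonneg _
        have hxh : x * h x = ∑' k, x * f k x := by
          rw [hhdef, tsum_mul_left]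
        have hterm : ∀ k, x * f k x ≤ (if (R k : ℝ) ≤ x then x else 0) + (1/2:ℝ)^k * x := by
          intro k
          by_cases hxk : (R k : ℝ) ≤ x
          · rw [if_pos hxk]
            have hf1 : f k x ≤ 1 := by
              simp only [hfdef]
              calc (c k)⁻¹ * min x (c k) ≤ (c k)⁻¹ * c k :=
                    mul_le_mul_of_nonneg_left (min_le_right _ _) (inv_nonneg.2 (hc0 k).le)
                _ = 1 := inv_mul_cancel₀ (hc0 k).ne'
            calc x * f k x ≤ x * 1 := mul_le_mul_of_nonneg_left hf1 hx
              _ = x := mul_one x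
              _ ≤ x + (1/2:ℝ)^k * x := le_add_of_nonneg_right (by positivity)
          · rw [if_neg hxk]
            push_neg at hxk
            have hmin : min x (c k) = x := min_eq_left (le_trans hxk.le (hRc k))
            have hfk : f k x ≤ (1/2:ℝ)^k := by
              simp only [hfdef, hmin]
              have hinv : (c k)⁻¹ * x ≤ (c k)⁻¹ * (R k : ℝ) :=
                mul_le_mul_of_nonneg_left hxk.le (inv_nonneg.2 (hc0 k).le)
              have : (c k)⁻¹ * (R k : ℝ) ≤ (1/2:ℝ)^k := by
                have hR0 : (0:ℝ) < (R k : ℝ) := lt_of_lt_of_le one_pos (hR1 k)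
                rw [hcdef]
                have : ((R k : ℝ)^2)⁻¹ * (R k : ℝ) = ((R k : ℝ))⁻¹ := by
                  field_simp
                rw [this, one_div, inv_pow]
                exact inv_anti₀ (by positivity) (hR2 k)
              linarith
            calc x * f k x ≤ x * (1/2:ℝ)^k := mul_le_mul_of_nonneg_left hfk hx
              _ = 0 + (1/2:ℝ)^k * x := by ring
        have hsum2 : Summable (fun k => x * f k x) := (hsum x).mul_left x
        rw [hxh, ENNReal.ofReal_tsum_of_nonneg
          (fun k => mul_nonneg hx (hfnonneg k x hx)) hsum2]
        apply ENNReal.tsum_le_tsum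
        intro k
        exact ENNReal.ofReal_le_ofReal (hterm k)
      -- main estimate
      have hmeasg : ∀ k : ℕ, Measurable (fun ω =>
          ENNReal.ofReal ((if (R k : ℝ) ≤ |Y ω| then |Y ω| else 0) + (1/2:ℝ)^k * |Y ω|)) := by
        intro k
        apply ENNReal.measurable_ofReal.comp
        apply Measurable.add _ (hY.abs.const_mul _)
        exact Measurable.ite (hSmeas k) hY.abs measurable_const
      calc ∫⁻ ω, ENNReal.ofReal (|Y ω| * h |Y ω|) ∂P
          ≤ ∫⁻ ω, ∑' k, ENNReal.ofReal
              ((if (R k : ℝ) ≤ |Y ω| then |Y ω| else 0) + (1/2:ℝ)^k * |Y ω|) ∂P :=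
            lintegral_mono hpt
        _ = ∑' k, ∫⁻ ω, ENNReal.ofReal
              ((if (R k : ℝ) ≤ |Y ω| then |Y ω| else 0) + (1/2:ℝ)^k * |Y ω|) ∂P :=
            lintegral_tsum (fun k => (hmeasg k).aemeasurable)
        _ ≤ ∑' k, ENNReal.ofReal ((1/2:ℝ)^k * ((R 0 : ℝ) + 2)) := by
            apply ENNReal.tsum_le_tsum
            intro k
            have hsplit : ∀ ω, ENNReal.ofReal
                ((if (R k : ℝ) ≤ |Y ω| then |Y ω| else 0) + (1/2:ℝ)^k * |Y ω|) =
                ENNReal.ofReal (if (R k : ℝ) ≤ |Y ω| then |Y ω| else 0) +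
                ENNReal.ofReal ((1/2:ℝ)^k * |Y ω|) := by
              intro ω
              rw [ENNReal.ofReal_add _ (by positivity)]
              split
              · exact abs_nonneg _
              · exact le_rfl
            simp only [hsplit]
            rw [lintegral_add_right _ (((hY.abs.const_mul _).ennreal_ofReal))]
            have hA : ∫⁻ ω, ENNReal.ofReal (if (R k : ℝ) ≤ |Y ω| then |Y ω| else 0) ∂P
                ≤ ENNReal.ofReal ((1/2:ℝ)^k) := by
              have hind : ∀ ω, ENNReal.ofReal (if (R k : ℝ) ≤ |Y ω| then |Y ω| else 0) =
                  (S k).indicator (fun ω => ENNReal.ofReal |Y ω|) ω := by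
                intro ω
                by_cases hω : (R k : ℝ) ≤ |Y ω|
                · rw [if_pos hω, Set.indicator_of_mem (show ω ∈ S k from hω) (fun ω => ENNReal.ofReal |Y ω|)]
                · rw [if_neg hω, Set.indicator_of_notMem (show ω ∉ S k from hω) (fun ω => ENNReal.ofReal |Y ω|), ENNReal.ofReal_zero]
              simp only [hind]
              rw [lintegral_indicator (hSmeas k)]
              exact htail' k
            have hB : ∫⁻ ω, ENNReal.ofReal ((1/2:ℝ)^k * |Y ω|) ∂P
                ≤ ENNReal.ofReal ((1/2:ℝ)^k) * ENNReal.ofReal ((R 0 : ℝ) + 1) := by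
              have : ∀ ω, ENNReal.ofReal ((1/2:ℝ)^k * |Y ω|) =
                  ENNReal.ofReal ((1/2:ℝ)^k) * ENNReal.ofReal (|Y ω|) := by
                intro ω
                rw [ENNReal.ofReal_mul (by positivity)]
              simp only [this]
              rw [lintegral_const_mul _ (hY.abs.ennreal_ofReal)]
              exact mul_le_mul_right hEY _
            calc ∫⁻ ω, ENNReal.ofReal (if (R k : ℝ) ≤ |Y ω| then |Y ω| else 0) ∂P +
                  ∫⁻ ω, ENNReal.ofReal ((1/2:ℝ)^k * |Y ω|) ∂P
                ≤ ENNReal.ofReal ((1/2:ℝ)^k) +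
                  ENNReal.ofReal ((1/2:ℝ)^k) * ENNReal.ofReal ((R 0 : ℝ) + 1) :=
                  add_le_add hA hB
              _ = ENNReal.ofReal ((1/2:ℝ)^k * ((R 0 : ℝ) + 2)) := by
                  rw [← ENNReal.ofReal_mul (by positivity),
                    ← ENNReal.ofReal_add (by positivity) (by positivity)]
                  congr 1
                  ring
        _ = ENNReal.ofReal (2 * ((R 0 : ℝ) + 2)) := by
            rw [← ENNReal.ofReal_tsum_of_nonneg (fun k => by positivity)
              (((summable_geometric_of_lt_one (by norm_num) (by norm_num))).mul_right _)]
            congr 1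
            rw [tsum_mul_right, tsum_geometric_of_lt_one (by norm_num) (by norm_num)]
            norm_num
  · -- reverse direction
    rintro ⟨h, hmeas, hconc, hsm, hnn, h0, htop, C, hC⟩
    intro ε hε
    set C' := max C 0 with hC'def
    have hC'0 : 0 ≤ C' := le_max_right _ _
    set K := C' / ε + 1 with hKdef
    have hK0 : 0 < K := by positivity
    obtain ⟨x₀, hx₀⟩ := (htop.eventually (eventually_ge_atTop K)).exists_forall_of_atTop
    refine ⟨⌈max x₀ 0⌉₊, ?_⟩
    intro m hm P hP
    haveI := hPs P hP
    set A := {ω | (m : ℝ) ≤ |Y ω|} with hAdef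
    have hAmeas : MeasurableSet A := measurableSet_le measurable_const hY.abs
    have hYint : Integrable (fun ω => |Y ω|) P := (hint P hP).abs
    have hhK : ∀ ω ∈ A, K ≤ h |Y ω| := by
      intro ω hω
      apply hx₀
      have h1 : x₀ ≤ (⌈max x₀ 0⌉₊ : ℝ) := le_trans (le_max_left _ _) (Nat.le_ceil _)
      have h2 : ((⌈max x₀ 0⌉₊ : ℕ) : ℝ) ≤ (m : ℝ) := Nat.cast_le.2 hm
      exact le_trans h1 (le_trans h2 hω)
    -- key inequality
    have hkey : ENNReal.ofReal K * ∫⁻ ω in A, ENNReal.ofReal |Y ω| ∂P ≤ ENNReal.ofReal C' := by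
      calc ENNReal.ofReal K * ∫⁻ ω in A, ENNReal.ofReal |Y ω| ∂P
          = ∫⁻ ω in A, ENNReal.ofReal K * ENNReal.ofReal |Y ω| ∂P := by
            rw [lintegral_const_mul _ (hY.abs.ennreal_ofReal)]
        _ ≤ ∫⁻ ω in A, ENNReal.ofReal (|Y ω| * h |Y ω|) ∂P := by
            apply setLIntegral_mono (((hY.abs.mul (hmeas.comp hY.abs)).ennreal_ofReal))
            intro ω hω
            rw [← ENNReal.ofReal_mul hK0.le]
            apply ENNReal.ofReal_le_ofReal
            calc K * |Y ω| ≤ h (|Y ω|) * |Y ω| :=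
                mul_le_mul_of_nonneg_right (hhK ω hω) (abs_nonneg _)
              _ = |Y ω| * h |Y ω| := mul_comm _ _
        _ ≤ ∫⁻ ω, ENNReal.ofReal (|Y ω| * h |Y ω|) ∂P :=
            setLIntegral_le_lintegral _ _
        _ ≤ ENNReal.ofReal C := hC P hP
        _ ≤ ENNReal.ofReal C' := ENNReal.ofReal_le_ofReal (le_max_left _ _)
    have hEA : ENNReal.ofReal (∫ ω in A, |Y ω| ∂P) = ∫⁻ ω in A, ENNReal.ofReal |Y ω| ∂P :=
      ofReal_integral_eq_lintegral_ofReal hYint.restrict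
        (Filter.Eventually.of_forall fun ω => abs_nonneg _)
    have hIA : 0 ≤ ∫ ω in A, |Y ω| ∂P :=
      integral_nonneg fun ω => abs_nonneg _
    have hfin : K * ∫ ω in A, |Y ω| ∂P ≤ C' := by
      have := hkey
      rw [← hEA, ← ENNReal.ofReal_mul hK0.le] at this
      exact (ENNReal.ofReal_le_ofReal_iff hC'0).1 this
    have : ∫ ω in A, |Y ω| ∂P ≤ C' / K := (le_div_iff₀' hK0).2 hfin
    apply lt_of_le_of_lt this
    rw [div_lt_iff₀ hK0, hKdef]
    have : ε * (C' / ε) = C' := by field_simp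
    nlinarith [hε, hC'0]
end

section
/- Let (X_n) be independent random variables under each P in a family 𝒫, and suppose for some q ∈ [1,2] and a positive nondecreasing sequence a_n ↗ ∞: sup_{P∈𝒫} Σ_{k=1}^∞ E_P|X_k − E_P X_k|^q / a_k^q < ∞ and lim_{m→∞} sup_{P∈𝒫} Σ_{k=m}^∞ E_P|X_k − E_P X_k|^q / a_k^q = 0. Then for every ε > 0, lim_{m→∞} sup_{P∈𝒫} P( sup_{k ≥ m} |(1/a_k) Σ_{i=1}^k (X_i − E_P X_i)| ≥ ε ) = 0. -/
open MeasureTheory ProbabilityTheory Filter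
open scoped NNReal ENNReal

namespace Stmt12

noncomputable def sgn (x : ℝ) : ℝ := if x < 0 then -1 else if 0 < x then 1 else 0

lemma sgn_of_pos {x : ℝ} (hx : 0 < x) : sgn x = 1 := by
  simp [sgn, hx, not_lt.2 hx.le]

lemma sgn_of_neg {x : ℝ} (hx : x < 0) : sgn x = -1 := by simp [sgn, hx]

@[simp] lemma sgn_zero : sgn 0 = 0 := by simp [sgn]

lemma abs_sgn_le (x : ℝ) : |sgn x| ≤ 1 := by
  unfold sgn; split_ifs <;> simp

lemma measurable_sgn : Measurable sgn := by
  unfold sgn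
  exact Measurable.ite (measurableSet_lt measurable_id measurable_const) measurable_const
    (Measurable.ite (measurableSet_lt measurable_const measurable_id) measurable_const
      measurable_const)

/-- the "derivative" of `|x|^q`. -/
noncomputable def dpow (q x : ℝ) : ℝ := q * sgn x * |x| ^ (q - 1)

lemma dpow_neg (q x : ℝ) : dpow q (-x) = - dpow q x := by
  rcases lt_trichotomy x 0 with h | rfl | h
  · simp [dpow, sgn_of_pos (neg_pos.2 h), sgn_of_neg h]
  · simp [dpow]
  · simp [dpow, sgn_of_neg (neg_neg_of_pos h), sgn_of_pos h]

lemma abs_dpow_le {q : ℝ} (hq : 1 ≤ q) (x : ℝ) : |dpow q x| ≤ q * |x| ^ (q - 1) := by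
  have h0 : (0:ℝ) ≤ q := by linarith
  have := abs_sgn_le x
  have habs : (0:ℝ) ≤ |x| ^ (q-1) := Real.rpow_nonneg (abs_nonneg x) _
  calc |dpow q x| = q * |sgn x| * |x| ^ (q-1) := by
        rw [dpow, abs_mul, abs_mul, abs_of_nonneg h0, abs_of_nonneg habs]
    _ ≤ q * 1 * |x| ^ (q-1) := by
        apply mul_le_mul_of_nonneg_right _ habs
        exact mul_le_mul_of_nonneg_left this h0
    _ = q * |x| ^ (q-1) := by ring

/-- mean value inequality tool: for `0 < x < z`, `z^q - x^q = q ξ^{q-1} (z-x)` for some ξ. -/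
lemma mvt_rpow {q x z : ℝ} (hq : 1 < q) (hx : 0 < x) (hxz : x < z) :
    ∃ ξ, x < ξ ∧ ξ < z ∧ z ^ q - x ^ q = q * ξ ^ (q - 1) * (z - x) := by
  have hcont : ContinuousOn (fun t : ℝ => t ^ q) (Set.Icc x z) := by
    intro t _
    exact (Real.continuousAt_rpow_const t q (Or.inr (by linarith))).continuousWithinAt
  have hderiv : ∀ t ∈ Set.Ioo x z, HasDerivAt (fun t : ℝ => t ^ q) (q * t ^ (q - 1)) t := by
    intro t ht
    exact Real.hasDerivAt_rpow_const (Or.inl (by nlinarith [ht.1] : t ≠ 0))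
  obtain ⟨ξ, hξ, hslope⟩ := exists_hasDerivAt_eq_slope (fun t : ℝ => t ^ q)
    (fun t => q * t ^ (q-1)) hxz hcont hderiv
  refine ⟨ξ, hξ.1, hξ.2, ?_⟩
  have hzx : z - x ≠ 0 := by linarith [hxz]
  field_simp at hslope
  linarith [hslope]

end Stmt12

namespace Stmt12

lemma rpow_mul_self {t : ℝ} (ht : 0 < t) (q : ℝ) : t ^ (q - 1) * t = t ^ q := by
  calc t ^ (q-1) * t = t ^ (q-1) * t ^ (1:ℝ) := by rw [Real.rpow_one]
    _ = t ^ (q - 1 + 1) := (Real.rpow_add ht _ _).symm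
    _ = t ^ q := by ring_nf

lemma sgn_mul_self (x : ℝ) : sgn x * x = |x| := by
  rcases lt_trichotomy x 0 with h | rfl | h
  · rw [sgn_of_neg h, abs_of_neg h]; ring
  · simp
  · rw [sgn_of_pos h, abs_of_pos h]; ring

lemma rpow_subadd {r u v : ℝ} (hr0 : 0 ≤ r) (hr1 : r ≤ 1) (hu : 0 ≤ u) (hv : 0 ≤ v) :
    (u + v) ^ r ≤ u ^ r + v ^ r := by
  have key : ((u + v).toNNReal : ℝ≥0) ^ r ≤ u.toNNReal ^ r + v.toNNReal ^ r := by
    rw [Real.toNNReal_add hu hv]; exact NNReal.rpow_add_le_add_rpow _ _ hr0 hr1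
  have h2 := NNReal.coe_le_coe.2 key
  push_cast at h2
  rwa [Real.coe_toNNReal _ (by linarith), Real.coe_toNNReal _ hu, Real.coe_toNNReal _ hv] at h2

lemma tangent_pos {q x : ℝ} (hq : 1 < q) (hx : 0 < x) (y : ℝ) :
    x ^ q + q * x ^ (q - 1) * y ≤ |x + y| ^ q := by
  have hq0 : (0:ℝ) < q := by linarith
  have hq1' : (0:ℝ) ≤ q - 1 := by linarith
  have hxq : x ^ (q - 1) * x = x ^ q := rpow_mul_self hx q
  have hxq0 : (0:ℝ) ≤ x ^ (q-1) := Real.rpow_nonneg hx.le _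
  have hxqq : (0:ℝ) ≤ x ^ q := Real.rpow_nonneg hx.le _
  rcases le_or_gt (x + y) 0 with hxy | hxy
  · have h1 : q * x ^ (q-1) * y ≤ q * x ^ (q-1) * (-x) := by
      apply mul_le_mul_of_nonneg_left (by linarith) (by positivity)
    have h2 : q * x ^ (q-1) * (-x) = -(q * x ^ q) := by rw [mul_neg, mul_assoc, hxq]
    have h3 : (0:ℝ) ≤ |x + y| ^ q := Real.rpow_nonneg (abs_nonneg _) _
    nlinarith
  · rw [abs_of_pos hxy]
    rcases lt_trichotomy y 0 with hy | rfl | hy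
    · obtain ⟨ξ, h1, h2, h3⟩ := mvt_rpow hq hxy (by linarith : x + y < x)
      have he : x - (x + y) = -y := by ring
      rw [he] at h3
      have hξx : ξ ^ (q-1) ≤ x ^ (q-1) :=
        Real.rpow_le_rpow (le_of_lt (lt_trans hxy h1)) h2.le hq1'
      nlinarith [mul_nonneg (sub_nonneg.2 hξx) (neg_nonneg.2 hy.le)]
    · simp
    · obtain ⟨ξ, h1, h2, h3⟩ := mvt_rpow hq hx (by linarith : x < x + y)
      have he : x + y - x = y := by ring
      rw [he] at h3
      have hξx : x ^ (q-1) ≤ ξ ^ (q-1) := Real.rpow_le_rpow hx.le h1.le hq1'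
      nlinarith [mul_nonneg (sub_nonneg.2 hξx) hy.le]

lemma tangent {q : ℝ} (hq : 1 ≤ q) (x y : ℝ) :
    |x| ^ q + dpow q x * y ≤ |x + y| ^ q := by
  rcases eq_or_lt_of_le hq with h | hq'
  · subst h
    simp only [dpow, sub_self, Real.rpow_zero, Real.rpow_one, one_mul, mul_one]
    have h1 : sgn x * (x + y) ≤ |x + y| := by
      calc sgn x * (x + y) ≤ |sgn x * (x + y)| := le_abs_self _
        _ = |sgn x| * |x + y| := abs_mul _ _
        _ ≤ 1 * |x + y| := mul_le_mul_of_nonneg_right (abs_sgn_le x) (abs_nonneg _)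
        _ = |x + y| := one_mul _
    have h2 : sgn x * x = |x| := sgn_mul_self x
    nlinarith
  · rcases lt_trichotomy x 0 with hx | rfl | hx
    · have h := tangent_pos hq' (neg_pos.2 hx) (-y)
      have e1 : -x + -y = -(x + y) := by ring
      rw [e1, abs_neg] at h
      have e2 : (-x) = |x| := (abs_of_neg hx).symm
      rw [e2] at h
      have e3 : dpow q x * y = q * |x| ^ (q-1) * (-y) := by
        rw [dpow, sgn_of_neg hx]; ring
      rw [e3]; exact h
    · have : |(0:ℝ)| ^ q = 0 := by
        rw [abs_zero, Real.zero_rpow (by linarith : q ≠ 0)]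
      rw [this, dpow, sgn_zero]
      simpa using Real.rpow_nonneg (abs_nonneg (0 + y)) q
    · have h := tangent_pos hq' hx y
      have e2 : x = |x| := (abs_of_pos hx).symm
      have e3 : dpow q x * y = q * |x| ^ (q-1) * y := by
        rw [dpow, sgn_of_pos hx]; ring
      rw [e3, ← e2]; exact h

end Stmt12

namespace Stmt12

lemma vbe_pos {q x y : ℝ} (hq : 1 < q) (hq2 : q ≤ 2) (hx : 0 < x) (hyx : |y| < x) :
    |x + y| ^ q ≤ x ^ q + q * x ^ (q - 1) * y + 6 * |y| ^ q := by
  have hq1' : (0:ℝ) ≤ q - 1 := by linarith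
  have hq1'' : q - 1 ≤ 1 := by linarith
  have hxy : 0 < x + y := by
    have := neg_abs_le y; linarith [abs_le.1 hyx.le]
  rw [abs_of_pos hxy]
  rcases lt_trichotomy y 0 with hy | rfl | hy
  · -- y < 0
    obtain ⟨ξ, h1, h2, h3⟩ := mvt_rpow hq hxy (by linarith : x + y < x)
    have he : x - (x + y) = -y := by ring
    rw [he] at h3
    have habs : |y| = -y := abs_of_neg hy
    have hsub : x ^ (q-1) ≤ (x+y) ^ (q-1) + (-y) ^ (q-1) := by
      have h := rpow_subadd hq1' hq1'' hxy.le (by linarith : (0:ℝ) ≤ -y)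
      have he2 : x + y + -y = x := by ring
      rwa [he2] at h
    have hmono : (x+y) ^ (q-1) ≤ ξ ^ (q-1) := Real.rpow_le_rpow hxy.le h1.le hq1'
    have hkey : x ^ (q-1) ≤ ξ ^ (q-1) + (-y) ^ (q-1) := by linarith
    have hyq : (-y) ^ (q-1) * (-y) = (-y) ^ q := rpow_mul_self (by linarith) q
    have habsq : |y| ^ q = (-y) ^ q := by rw [habs]
    rw [habsq]
    have hstep : x ^ (q-1) * (-y) - ξ ^ (q-1) * (-y) ≤ (-y) ^ q := by
      nlinarith [mul_nonneg (sub_nonneg.2 hkey) (neg_nonneg.2 hy.le)]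
    have hstep2 : q * (x ^ (q-1) * (-y) - ξ ^ (q-1) * (-y)) ≤ q * (-y) ^ q :=
      mul_le_mul_of_nonneg_left hstep (by linarith)
    nlinarith [Real.rpow_nonneg (by linarith : (0:ℝ) ≤ -y) q]
  · simp only [add_zero, mul_zero, abs_zero]
    have : (0:ℝ) ^ q = 0 := Real.zero_rpow (by linarith)
    rw [this]; ring_nf; exact le_rfl
  · -- y > 0
    obtain ⟨ξ, h1, h2, h3⟩ := mvt_rpow hq hx (by linarith : x < x + y)
    have he : x + y - x = y := by ring
    rw [he] at h3
    have hsub : ξ ^ (q-1) ≤ x ^ (q-1) + y ^ (q-1) := by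
      calc ξ ^ (q-1) ≤ (x + y) ^ (q-1) := Real.rpow_le_rpow (by linarith) h2.le hq1'
        _ ≤ x ^ (q-1) + y ^ (q-1) := rpow_subadd hq1' hq1'' hx.le hy.le
    have hyq : y ^ (q-1) * y = y ^ q := rpow_mul_self hy q
    have habsq : |y| ^ q = y ^ q := by rw [abs_of_pos hy]
    rw [habsq]
    nlinarith [Real.rpow_nonneg hy.le q, mul_nonneg (sub_nonneg.2 hsub) hy.le]

lemma vbe_pointwise {q : ℝ} (hq1 : 1 ≤ q) (hq2 : q ≤ 2) (x y : ℝ) :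
    |x + y| ^ q ≤ |x| ^ q + dpow q x * y + 6 * |y| ^ q := by
  by_cases hy : y = 0
  · subst hy
    simp only [add_zero, mul_zero, abs_zero]
    have : (0:ℝ) ^ q = 0 := Real.zero_rpow (by linarith)
    rw [this]; ring_nf; exact le_rfl
  rcases le_or_gt |x| |y| with hxy | hxy
  · -- |x| ≤ |y|
    have hy0 : 0 < |y| := abs_pos.2 hy
    have hyq0 : (0:ℝ) ≤ |y| ^ q := Real.rpow_nonneg (abs_nonneg _) _
    have h1 : |x+y| ^ q ≤ 4 * |y| ^ q := by
      calc |x+y| ^ q ≤ (2 * |y|) ^ q := by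
            apply Real.rpow_le_rpow (abs_nonneg _) _ (by linarith)
            calc |x + y| ≤ |x| + |y| := abs_add_le _ _
              _ ≤ 2 * |y| := by linarith
        _ = 2 ^ q * |y| ^ q := Real.mul_rpow (by norm_num) (abs_nonneg _)
        _ ≤ 4 * |y| ^ q := by
            have h2q : (2:ℝ) ^ q ≤ 2 ^ (2:ℝ) :=
              Real.rpow_le_rpow_of_exponent_le one_le_two hq2
            have h4 : (2:ℝ) ^ (2:ℝ) = 4 := by
              rw [show (2:ℝ) = ((2:ℕ):ℝ) from by norm_num, Real.rpow_natCast]; norm_num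
            nlinarith
    have h2 : |dpow q x * y| ≤ 2 * |y| ^ q := by
      have hmono : |x| ^ (q-1) ≤ |y| ^ (q-1) :=
        Real.rpow_le_rpow (abs_nonneg _) hxy (by linarith)
      have hyy : |y| ^ (q-1) * |y| = |y| ^ q := rpow_mul_self hy0 q
      calc |dpow q x * y| = |dpow q x| * |y| := abs_mul _ _
        _ ≤ (q * |x| ^ (q-1)) * |y| :=
            mul_le_mul_of_nonneg_right (abs_dpow_le hq1 x) (abs_nonneg _)
        _ ≤ (2 * |y| ^ (q-1)) * |y| := by
            apply mul_le_mul_of_nonneg_right _ (abs_nonneg _)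
            apply mul_le_mul hq2 hmono (Real.rpow_nonneg (abs_nonneg _) _) (by norm_num)
        _ = 2 * |y| ^ q := by rw [mul_assoc, hyy]
    have h3 := (abs_le.1 h2).1
    have h4 : (0:ℝ) ≤ |x| ^ q := Real.rpow_nonneg (abs_nonneg _) _
    linarith
  · -- |y| < |x|, so x ≠ 0
    have hx : x ≠ 0 := by
      intro h; rw [h, abs_zero] at hxy; exact absurd hxy (not_lt.2 (abs_nonneg y))
    rcases eq_or_lt_of_le hq1 with h | hq'
    · -- q = 1
      subst h
      simp only [dpow, sub_self, Real.rpow_zero, Real.rpow_one, one_mul, mul_one]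
      rcases lt_or_gt_of_ne hx with hx' | hx'
      · rw [sgn_of_neg hx']
        have h1 : x + y < 0 := by
          have := abs_le.1 hxy.le; rw [abs_of_neg hx'] at hxy; linarith [le_abs_self y]
        rw [abs_of_neg h1, abs_of_neg hx']
        have := abs_nonneg y; linarith
      · rw [sgn_of_pos hx']
        have h1 : 0 < x + y := by
          rw [abs_of_pos hx'] at hxy; linarith [neg_abs_le y]
        rw [abs_of_pos h1, abs_of_pos hx']
        have := abs_nonneg y; linarith
    · rcases lt_or_gt_of_ne hx with hx' | hx'
      · have h := vbe_pos hq' hq2 (neg_pos.2 hx') (by rwa [abs_neg, ← abs_of_neg hx'])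
        have e1 : -x + -y = -(x + y) := by ring
        rw [e1, abs_neg, abs_neg] at h
        have e2 : (-x) = |x| := (abs_of_neg hx').symm
        rw [e2] at h
        have e3 : dpow q x * y = q * |x| ^ (q-1) * (-y) := by
          rw [dpow, sgn_of_neg hx']; ring
        rw [e3]; exact h
      · have h := vbe_pos hq' hq2 hx' (by rwa [← abs_of_pos hx'])
        have e2 : x = |x| := (abs_of_pos hx').symm
        have e3 : dpow q x * y = q * |x| ^ (q-1) * y := by
          rw [dpow, sgn_of_pos hx']; ring
        rw [e3, ← e2]; exact h

end Stmt12

namespace Stmt12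

lemma measurable_abs_rpow {f : α → ℝ} [MeasurableSpace α] (hf : Measurable f) (q : ℝ) :
    Measurable fun ω => |f ω| ^ q :=
  hf.abs.pow measurable_const

lemma measurable_dpow (q : ℝ) : Measurable (dpow q) :=
  (measurable_const.mul measurable_sgn).mul ((measurable_abs_rpow measurable_id (q-1)))

lemma rpow_sub_one_le {q x : ℝ} (hq1 : 1 ≤ q) : |x| ^ (q - 1) ≤ 1 + |x| ^ q := by
  rcases le_total |x| 1 with h | h
  · have : |x| ^ (q-1) ≤ 1 := Real.rpow_le_one (abs_nonneg _) h (by linarith)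
    have h2 : (0:ℝ) ≤ |x| ^ q := Real.rpow_nonneg (abs_nonneg _) _
    linarith
  · have : |x| ^ (q-1) ≤ |x| ^ q := Real.rpow_le_rpow_of_exponent_le h (by linarith)
    linarith

lemma abs_dpow_le' {q : ℝ} (hq1 : 1 ≤ q) (x : ℝ) : |dpow q x| ≤ q * (1 + |x| ^ q) := by
  calc |dpow q x| ≤ q * |x| ^ (q-1) := abs_dpow_le hq1 x
    _ ≤ q * (1 + |x| ^ q) :=
      mul_le_mul_of_nonneg_left (rpow_sub_one_le hq1) (by linarith)

lemma abs_add_rpow_le {q : ℝ} (hq1 : 1 ≤ q) (hq2 : q ≤ 2) (u v : ℝ) :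
    |u + v| ^ q ≤ 4 * (|u| ^ q + |v| ^ q) := by
  have key : ∀ w z : ℝ, |w| ≤ |z| → |w + z| ^ q ≤ 4 * (|w| ^ q + |z| ^ q) := by
    intro w z hwz
    have h1 : |w + z| ^ q ≤ 4 * |z| ^ q := by
      calc |w + z| ^ q ≤ (2 * |z|) ^ q := by
            apply Real.rpow_le_rpow (abs_nonneg _) _ (by linarith)
            calc |w + z| ≤ |w| + |z| := abs_add_le _ _
              _ ≤ 2 * |z| := by linarith
        _ = 2 ^ q * |z| ^ q := Real.mul_rpow (by norm_num) (abs_nonneg _)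
        _ ≤ 4 * |z| ^ q := by
            have h2q : (2:ℝ) ^ q ≤ 2 ^ (2:ℝ) :=
              Real.rpow_le_rpow_of_exponent_le one_le_two hq2
            have h4 : (2:ℝ) ^ (2:ℝ) = 4 := by
              rw [show (2:ℝ) = ((2:ℕ):ℝ) from by norm_num, Real.rpow_natCast]; norm_num
            nlinarith [Real.rpow_nonneg (abs_nonneg z) q]
    have h2 : (0:ℝ) ≤ |w| ^ q := Real.rpow_nonneg (abs_nonneg _) _
    linarith
  rcases le_total |u| |v| with h | h
  · exact key u v h
  · have := key v u h
    rw [add_comm v u, add_comm (|v| ^ q)] at this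
    exact this

variable {Ω : Type*} [MeasurableSpace Ω] {μ : Measure Ω} [IsProbabilityMeasure μ]

lemma vbe_integral {q : ℝ} (hq1 : 1 ≤ q) (hq2 : q ≤ 2)
    (Y : ℕ → Ω → ℝ) (hYmeas : ∀ i, Measurable (Y i))
    (hindep : iIndepFun Y μ)
    (hint : ∀ i, Integrable (Y i) μ)
    (hzero : ∀ i, ∫ ω, Y i ω ∂μ = 0)
    (hq : ∀ i, Integrable (fun ω => |Y i ω| ^ q) μ) (s : Finset ℕ) :
    Integrable (fun ω => |∑ i ∈ s, Y i ω| ^ q) μ ∧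
      ∫ ω, |∑ i ∈ s, Y i ω| ^ q ∂μ ≤ 6 * ∑ i ∈ s, ∫ ω, |Y i ω| ^ q ∂μ := by
  classical
  induction s using Finset.induction_on with
  | empty =>
      have h0 : (fun _ : Ω => |(0:ℝ)| ^ q) = fun _ => (0:ℝ) := by
        funext ω; rw [abs_zero, Real.zero_rpow (by linarith)]
      simp only [Finset.sum_empty, h0]
      exact ⟨integrable_const 0, by simp⟩
  | @insert j s hj ih =>
      obtain ⟨ihint, ihle⟩ := ih
      set S : Ω → ℝ := fun ω => ∑ i ∈ s, Y i ω with hS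
      have hmeasS : Measurable S := Finset.measurable_sum s fun i _ => hYmeas i
      have hSind : IndepFun S (Y j) μ := by
        have h := hindep.indepFun_finset_sum_of_notMem hYmeas hj
        have : (∑ i ∈ s, Y i) = S := by funext ω; simp [hS, Finset.sum_apply]
        rwa [this] at h
      have hgmeas : Measurable fun ω => dpow q (S ω) := (measurable_dpow q).comp hmeasS
      have hgint : Integrable (fun ω => dpow q (S ω)) μ := by
        apply Integrable.mono' (((integrable_const (1:ℝ)).add ihint).const_mul q)
          hgmeas.aestronglyMeasurable
        filter_upwards with ω
        rw [Real.norm_eq_abs]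
        exact abs_dpow_le' hq1 (S ω)
      have hgind : IndepFun (fun ω => dpow q (S ω)) (Y j) μ :=
        hSind.comp (measurable_dpow q) measurable_id
      have hmul : Integrable (fun ω => dpow q (S ω) * Y j ω) μ :=
        hgind.integrable_mul hgint (hint j)
      have hmul0 : ∫ ω, dpow q (S ω) * Y j ω ∂μ = 0 := by
        have h : ∫ ω, dpow q (S ω) * Y j ω ∂μ =
            (∫ ω, dpow q (S ω) ∂μ) * ∫ ω, Y j ω ∂μ :=
          hgind.integral_mul_eq_mul_integral hgint.aestronglyMeasurable (hint j).aestronglyMeasurable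
        rw [h, hzero j, mul_zero]
      have hnewint : Integrable (fun ω => |S ω + Y j ω| ^ q) μ := by
        apply Integrable.mono' ((ihint.add (hq j)).const_mul 4)
          ((measurable_abs_rpow (hmeasS.add (hYmeas j)) q).aestronglyMeasurable)
        filter_upwards with ω
        rw [Real.norm_eq_abs, abs_of_nonneg (Real.rpow_nonneg (abs_nonneg _) _)]
        exact abs_add_rpow_le hq1 hq2 (S ω) (Y j ω)
      have hrhsint : Integrable
          (fun ω => |S ω| ^ q + dpow q (S ω) * Y j ω + 6 * |Y j ω| ^ q) μ :=
        (ihint.add hmul).add ((hq j).const_mul 6)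
      have hle : ∫ ω, |S ω + Y j ω| ^ q ∂μ ≤
          ∫ ω, (|S ω| ^ q + dpow q (S ω) * Y j ω + 6 * |Y j ω| ^ q) ∂μ := by
        apply integral_mono hnewint hrhsint
        intro ω
        exact vbe_pointwise hq1 hq2 (S ω) (Y j ω)
      have hsplit : ∫ ω, (|S ω| ^ q + dpow q (S ω) * Y j ω + 6 * |Y j ω| ^ q) ∂μ =
          ∫ ω, |S ω| ^ q ∂μ + 6 * ∫ ω, |Y j ω| ^ q ∂μ := by
        have i1 : ∫ ω, (|S ω| ^ q + dpow q (S ω) * Y j ω) + 6 * |Y j ω| ^ q ∂μ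
            = (∫ ω, |S ω| ^ q + dpow q (S ω) * Y j ω ∂μ) + ∫ ω, 6 * |Y j ω| ^ q ∂μ :=
          integral_add (ihint.add hmul) ((hq j).const_mul 6)
        have i2 : ∫ ω, |S ω| ^ q + dpow q (S ω) * Y j ω ∂μ
            = (∫ ω, |S ω| ^ q ∂μ) + ∫ ω, dpow q (S ω) * Y j ω ∂μ :=
          integral_add ihint hmul
        have i3 : ∫ ω, 6 * |Y j ω| ^ q ∂μ = 6 * ∫ ω, |Y j ω| ^ q ∂μ :=
          integral_const_mul 6 _
        rw [i1, i2, i3, hmul0]; ring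
      have hrw : ∀ ω, ∑ i ∈ insert j s, Y i ω = S ω + Y j ω := by
        intro ω; rw [Finset.sum_insert hj, hS]; ring
      have hrwf : (fun ω => |∑ i ∈ insert j s, Y i ω| ^ q)
          = fun ω => |S ω + Y j ω| ^ q := by funext ω; rw [hrw ω]
      constructor
      · rw [hrwf]; exact hnewint
      · rw [hrwf, Finset.sum_insert hj, mul_add]
        calc ∫ ω, |S ω + Y j ω| ^ q ∂μ ≤ ∫ ω, |S ω| ^ q ∂μ + 6 * ∫ ω, |Y j ω| ^ q ∂μ := by
              rw [← hsplit]; exact hle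
          _ ≤ 6 * ∫ ω, |Y j ω| ^ q ∂μ + 6 * ∑ i ∈ s, ∫ ω, |Y i ω| ^ q ∂μ := by linarith

end Stmt12

namespace Stmt12

variable {Ω : Type*} [MeasurableSpace Ω] {μ : Measure Ω} [IsProbabilityMeasure μ]

lemma kolmogorov {q : ℝ} (hq1 : 1 ≤ q) (hq2 : q ≤ 2)
    (Y : ℕ → Ω → ℝ) (hYmeas : ∀ i, Measurable (Y i))
    (hindep : iIndepFun Y μ)
    (hint : ∀ i, Integrable (Y i) μ) (hzero : ∀ i, ∫ ω, Y i ω ∂μ = 0)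
    (hq : ∀ i, Integrable (fun ω => |Y i ω| ^ q) μ)
    (m n : ℕ) {ε : ℝ} (hε : 0 < ε) :
    ε ^ q * (μ {ω | ∃ j, m < j ∧ j ≤ n ∧ ε ≤ |∑ i ∈ Finset.Ioc m j, Y i ω|}).toReal ≤
      6 * ∑ i ∈ Finset.Ioc m n, ∫ ω, |Y i ω| ^ q ∂μ := by
  classical
  set T : ℕ → Ω → ℝ := fun j ω => ∑ i ∈ Finset.Ioc m j, Y i ω with hT
  have hTmeas : ∀ j, Measurable (T j) := fun j => Finset.measurable_sum _ fun i _ => hYmeas i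
  have hTq : ∀ j, Integrable (fun ω => |T j ω| ^ q) μ := fun j =>
    (vbe_integral hq1 hq2 Y hYmeas hindep hint hzero hq (Finset.Ioc m j)).1
  set A : ℕ → Set Ω := fun j =>
    {ω | ε ≤ |T j ω|} ∩ ⋂ (i : ℕ) (_ : m < i) (_ : i < j), {ω | |T i ω| < ε} with hA
  have hAmeas : ∀ j, MeasurableSet (A j) := by
    intro j
    apply MeasurableSet.inter
    · exact measurableSet_le measurable_const (hTmeas j).abs
    · exact MeasurableSet.iInter fun i => MeasurableSet.iInter fun _ =>
        MeasurableSet.iInter fun _ => measurableSet_lt (hTmeas i).abs measurable_const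
  have hAmem : ∀ j ω, ω ∈ A j ↔ (ε ≤ |T j ω| ∧ ∀ i, m < i → i < j → |T i ω| < ε) := by
    intro j ω
    simp only [hA, Set.mem_inter_iff, Set.mem_setOf_eq, Set.mem_iInter]
  have hdisj : (↑(Finset.Ioc m n) : Set ℕ).PairwiseDisjoint A := by
    have key : ∀ j k : ℕ, m < j → j < k → Disjoint (A j) (A k) := by
      intro j k hmj hjk
      refine Set.disjoint_left.mpr fun ω hωj hωk => ?_
      have h1 := ((hAmem j ω).1 hωj).1
      have h2 := ((hAmem k ω).1 hωk).2 j hmj hjk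
      linarith
    intro j hj k hk hjk
    rcases lt_or_gt_of_ne hjk with h | h
    · exact key j k (Finset.mem_Ioc.1 (Finset.mem_coe.1 hj)).1 h
    · exact (key k j (Finset.mem_Ioc.1 (Finset.mem_coe.1 hk)).1 h).symm
  have hunion : {ω | ∃ j, m < j ∧ j ≤ n ∧ ε ≤ |T j ω|} = ⋃ j ∈ Finset.Ioc m n, A j := by
    ext ω
    simp only [Set.mem_setOf_eq, Set.mem_iUnion, exists_prop]
    constructor
    · rintro ⟨j, hmj, hjn, hje⟩
      have hex : ∃ j, m < j ∧ ε ≤ |T j ω| := ⟨j, hmj, hje⟩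
      obtain ⟨hmj₀, hj₀e⟩ := Nat.find_spec hex
      refine ⟨Nat.find hex, Finset.mem_Ioc.2 ⟨hmj₀, le_trans (Nat.find_min' hex ⟨hmj, hje⟩) hjn⟩, ?_⟩
      rw [hAmem]
      refine ⟨hj₀e, fun i hmi hij => ?_⟩
      by_contra hcon
      push_neg at hcon
      exact Nat.find_min hex hij ⟨hmi, hcon⟩
    · rintro ⟨j, hj, hωj⟩
      exact ⟨j, (Finset.mem_Ioc.1 hj).1, (Finset.mem_Ioc.1 hj).2, ((hAmem j ω).1 hωj).1⟩
  have key : ∀ j, m < j → j ≤ n →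
      ε ^ q * (μ (A j)).toReal ≤ ∫ ω in A j, |T n ω| ^ q ∂μ := by
    intro j hmj hjn
    set R : Ω → ℝ := fun ω => ∑ i ∈ Finset.Ioc j n, Y i ω with hR
    have hRmeas : Measurable R := Finset.measurable_sum _ fun i _ => hYmeas i
    have hRint : Integrable R μ := integrable_finset_sum _ fun i _ => hint i
    have hRzero : ∫ ω, R ω ∂μ = 0 := by
      rw [hR, integral_finset_sum _ fun i _ => hint i]
      simp [hzero]
    have hTR : ∀ ω, T n ω = T j ω + R ω := fun ω =>
      (Finset.sum_Ioc_consecutive (fun i => Y i ω) (le_of_lt hmj) hjn).symm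
    -- independence of the indicator-weighted dpow and R
    have hblockdisj : Disjoint (Finset.Ioc m j) (Finset.Ioc j n) := by
      rw [Finset.disjoint_left]
      intro i h1 h2
      have := (Finset.mem_Ioc.1 h1).2
      have := (Finset.mem_Ioc.1 h2).1
      omega
    have hblock := hindep.indepFun_finset (Finset.Ioc m j) (Finset.Ioc j n) hblockdisj hYmeas
    set tv : ℕ → ({ x // x ∈ Finset.Ioc m j } → ℝ) → ℝ :=
      fun k v => ∑ i : { x // x ∈ Finset.Ioc m j }, if (i : ℕ) ≤ k then v i else 0 with htv
    have htvmeas : ∀ k, Measurable (tv k) := by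
      intro k
      apply Finset.measurable_sum
      intro i _
      by_cases h : (i : ℕ) ≤ k
      · simpa [h] using measurable_pi_apply i
      · simpa [h] using (measurable_const : Measurable fun _ : { x // x ∈ Finset.Ioc m j } → ℝ => (0:ℝ))
    have htvY : ∀ k, k ≤ j → ∀ ω, tv k (fun i => Y (i : ℕ) ω) = T k ω := by
      intro k hk ω
      rw [htv]
      calc (∑ i : { x // x ∈ Finset.Ioc m j }, if (i : ℕ) ≤ k then Y (i : ℕ) ω else 0)
          = ∑ i ∈ Finset.Ioc m j, (if i ≤ k then Y i ω else 0) :=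
            Finset.sum_coe_sort (Finset.Ioc m j) (fun i => if i ≤ k then Y i ω else 0)
        _ = ∑ i ∈ (Finset.Ioc m j).filter (· ≤ k), Y i ω := (Finset.sum_filter _ _).symm
        _ = ∑ i ∈ Finset.Ioc m k, Y i ω := by
            congr 1
            ext i
            simp only [Finset.mem_filter, Finset.mem_Ioc]
            omega
    set cond : Set ({ x // x ∈ Finset.Ioc m j } → ℝ) :=
      {v | ε ≤ |tv j v| ∧ ∀ i, m < i → i < j → |tv i v| < ε} with hcond
    have hcondmeas : MeasurableSet cond := by
      have : cond = {v | ε ≤ |tv j v|} ∩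
          ⋂ (i : ℕ) (_ : m < i) (_ : i < j), {v | |tv i v| < ε} := by
        ext v
        simp only [hcond, Set.mem_setOf_eq, Set.mem_inter_iff, Set.mem_iInter]
      rw [this]
      exact (measurableSet_le measurable_const (htvmeas j).abs).inter
        (MeasurableSet.iInter fun i => MeasurableSet.iInter fun _ =>
          MeasurableSet.iInter fun _ => measurableSet_lt (htvmeas i).abs measurable_const)
    set φ : ({ x // x ∈ Finset.Ioc m j } → ℝ) → ℝ :=
      Set.indicator cond (fun v => dpow q (tv j v)) with hφ
    have hφmeas : Measurable φ :=
      Measurable.indicator ((measurable_dpow q).comp (htvmeas j)) hcondmeas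
    set ψ : ({ x // x ∈ Finset.Ioc j n } → ℝ) → ℝ :=
      fun v => ∑ i : { x // x ∈ Finset.Ioc j n }, v i with hψ
    have hψmeas : Measurable ψ :=
      Finset.measurable_sum _ fun i _ => measurable_pi_apply i
    set F : Ω → ℝ := Set.indicator (A j) (fun ω => dpow q (T j ω)) with hF
    have hFeq : (fun ω => φ (fun i : { x // x ∈ Finset.Ioc m j } => Y (i : ℕ) ω)) = F := by
      funext ω
      have hmem : (fun i : { x // x ∈ Finset.Ioc m j } => Y (i : ℕ) ω) ∈ cond ↔ ω ∈ A j := by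
        rw [hAmem]
        simp only [hcond, Set.mem_setOf_eq]
        constructor
        · rintro ⟨h1, h2⟩
          rw [htvY j le_rfl ω] at h1
          refine ⟨h1, fun i hmi hij => ?_⟩
          have := h2 i hmi hij
          rwa [htvY i hij.le ω] at this
        · rintro ⟨h1, h2⟩
          rw [htvY j le_rfl ω]
          refine ⟨h1, fun i hmi hij => ?_⟩
          rw [htvY i hij.le ω]
          exact h2 i hmi hij
      by_cases hω : ω ∈ A j
      · rw [hφ, hF, Set.indicator_of_mem (hmem.2 hω), Set.indicator_of_mem hω, htvY j le_rfl ω]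
      · rw [hφ, hF, Set.indicator_of_notMem (fun hc => hω (hmem.1 hc)),
          Set.indicator_of_notMem hω]
    have hψeq : (fun ω => ψ (fun i : { x // x ∈ Finset.Ioc j n } => Y (i : ℕ) ω)) = R := by
      funext ω
      rw [hψ, hR]
      exact Finset.sum_coe_sort (Finset.Ioc j n) (fun i => Y i ω)
    have hFR : IndepFun F R μ := by
      have h2 := hblock.comp hφmeas hψmeas
      rwa [show φ ∘ (fun a (i : { x // x ∈ Finset.Ioc m j }) => Y (i : ℕ) a) = F from hFeq,
        show ψ ∘ (fun a (i : { x // x ∈ Finset.Ioc j n }) => Y (i : ℕ) a) = R from hψeq] at h2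
    have hFmeas : Measurable F := ((measurable_dpow q).comp (hTmeas j)).indicator (hAmeas j)
    have hFint : Integrable F μ := by
      apply Integrable.mono' (((integrable_const (1:ℝ)).add (hTq j)).const_mul q)
        hFmeas.aestronglyMeasurable
      filter_upwards with ω
      calc ‖F ω‖ ≤ ‖dpow q (T j ω)‖ := norm_indicator_le_norm_self _ _
        _ ≤ q * (1 + |T j ω| ^ q) := by rw [Real.norm_eq_abs]; exact abs_dpow_le' hq1 _
    have hprod_int : Integrable (fun ω => F ω * R ω) μ := hFR.integrable_mul hFint hRint
    have hind_eq : (fun ω => F ω * R ω)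
        = Set.indicator (A j) (fun ω => dpow q (T j ω) * R ω) := by
      funext ω
      by_cases hω : ω ∈ A j
      · rw [hF, Set.indicator_of_mem hω, Set.indicator_of_mem hω]
      · rw [hF, Set.indicator_of_notMem hω, Set.indicator_of_notMem hω, zero_mul]
    have hcross : ∫ ω, F ω * R ω ∂μ = 0 := by
      have h : ∫ ω, F ω * R ω ∂μ = (∫ ω, F ω ∂μ) * ∫ ω, R ω ∂μ :=
        hFR.integral_mul_eq_mul_integral hFint.aestronglyMeasurable hRint.aestronglyMeasurable
      rw [h, hRzero, mul_zero]
    have hsetcross_int : IntegrableOn (fun ω => dpow q (T j ω) * R ω) (A j) μ :=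
      (integrable_indicator_iff (hAmeas j)).1 (by rw [← hind_eq]; exact hprod_int)
    have hsetcross : ∫ ω in A j, dpow q (T j ω) * R ω ∂μ = 0 := by
      rw [← integral_indicator (hAmeas j), ← hind_eq]
      exact hcross
    have step2 : ∫ ω in A j, |T j ω| ^ q ∂μ ≤ ∫ ω in A j, |T n ω| ^ q ∂μ := by
      have hmono : ∀ ω ∈ A j, |T j ω| ^ q + dpow q (T j ω) * R ω ≤ |T n ω| ^ q := by
        intro ω _
        rw [hTR ω]
        exact tangent hq1 (T j ω) (R ω)
      have h1 : ∫ ω in A j, (|T j ω| ^ q + dpow q (T j ω) * R ω) ∂μ ≤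
          ∫ ω in A j, |T n ω| ^ q ∂μ :=
        setIntegral_mono_on ((hTq j).integrableOn.add hsetcross_int)
          ((hTq n).integrableOn) (hAmeas j) hmono
      have h2 : ∫ ω in A j, (|T j ω| ^ q + dpow q (T j ω) * R ω) ∂μ =
          ∫ ω in A j, |T j ω| ^ q ∂μ + ∫ ω in A j, dpow q (T j ω) * R ω ∂μ :=
        integral_add (hTq j).integrableOn hsetcross_int
      rw [h2, hsetcross] at h1
      linarith
    have step1 : ε ^ q * (μ (A j)).toReal ≤ ∫ ω in A j, |T j ω| ^ q ∂μ := by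
      have hm : ∀ ω ∈ A j, ε ^ q ≤ |T j ω| ^ q := fun ω hω =>
        Real.rpow_le_rpow hε.le ((hAmem j ω).1 hω).1 (by linarith)
      have h := setIntegral_mono_on ((integrable_const (ε ^ q)).integrableOn)
        ((hTq j).integrableOn) (hAmeas j) hm
      rw [setIntegral_const, smul_eq_mul, measureReal_def] at h
      linarith [h]
    linarith [step1, step2]
  rw [hunion]
  have hUeq : (μ (⋃ j ∈ Finset.Ioc m n, A j)).toReal = ∑ j ∈ Finset.Ioc m n, (μ (A j)).toReal := by
    rw [measure_biUnion_finset hdisj (fun j _ => hAmeas j)]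
    exact ENNReal.toReal_sum fun j _ => measure_ne_top μ _
  rw [hUeq, Finset.mul_sum]
  calc ∑ j ∈ Finset.Ioc m n, ε ^ q * (μ (A j)).toReal
      ≤ ∑ j ∈ Finset.Ioc m n, ∫ ω in A j, |T n ω| ^ q ∂μ :=
        Finset.sum_le_sum fun j hj => key j (Finset.mem_Ioc.1 hj).1 (Finset.mem_Ioc.1 hj).2
    _ = ∫ ω in ⋃ j ∈ Finset.Ioc m n, A j, |T n ω| ^ q ∂μ :=
        (integral_biUnion_finset _ (fun j _ => hAmeas j) hdisj
          (fun j _ => (hTq n).integrableOn)).symm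
    _ ≤ ∫ ω, |T n ω| ^ q ∂μ :=
        setIntegral_le_integral (hTq n)
          (Filter.Eventually.of_forall fun ω => Real.rpow_nonneg (abs_nonneg _) _)
    _ ≤ 6 * ∑ i ∈ Finset.Ioc m n, ∫ ω, |Y i ω| ^ q ∂μ :=
        (vbe_integral hq1 hq2 Y hYmeas hindep hint hzero hq (Finset.Ioc m n)).2

end Stmt12

namespace Stmt12

lemma abel_bound (a : ℕ → ℝ) (hapos : ∀ n, 0 < a n) (hamono : Monotone a)
    (Z : ℕ → ℝ) (m : ℕ) (M : ℝ) (hM : 0 ≤ M) :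
    ∀ k, m ≤ k → (∀ i, m < i → i ≤ k → |∑ j ∈ Finset.Ioc m i, Z j / a j| ≤ M) →
      |∑ i ∈ Finset.Ioc m k, Z i| ≤ 2 * a k * M := by
  have main : ∀ k, m ≤ k → (∀ i, m < i → i ≤ k → |∑ j ∈ Finset.Ioc m i, Z j / a j| ≤ M) →
      |(∑ i ∈ Finset.Ioc m k, Z i) - a k * (∑ i ∈ Finset.Ioc m k, Z i / a i)| ≤
        (a k - a m) * M := by
    intro k hk
    induction k, hk using Nat.le_induction with
    | base => intro _; simp
    | succ k hk ih =>
      intro hyp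
      have ihb := ih fun i h1 h2 => hyp i h1 (le_trans h2 (Nat.le_succ k))
      have hTk : |∑ j ∈ Finset.Ioc m k, Z j / a j| ≤ M := by
        rcases eq_or_lt_of_le hk with h | h
        · rw [← h]; simpa using hM
        · exact hyp k h (Nat.le_succ k)
      have e1 : ∑ i ∈ Finset.Ioc m (k+1), Z i = (∑ i ∈ Finset.Ioc m k, Z i) + Z (k+1) :=
        Finset.sum_Ioc_succ_top hk _
      have e2 : ∑ i ∈ Finset.Ioc m (k+1), Z i / a i
          = (∑ i ∈ Finset.Ioc m k, Z i / a i) + Z (k+1) / a (k+1) :=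
        Finset.sum_Ioc_succ_top hk _
      have e3 : a (k+1) * (Z (k+1) / a (k+1)) = Z (k+1) := by
        rw [mul_comm]; exact div_mul_cancel₀ _ (ne_of_gt (hapos (k+1)))
      have hmono1 : a k ≤ a (k+1) := hamono (Nat.le_succ k)
      have habs : |(a (k+1) - a k) * (∑ j ∈ Finset.Ioc m k, Z j / a j)|
          ≤ (a (k+1) - a k) * M := by
        rw [abs_mul, abs_of_nonneg (by linarith)]
        exact mul_le_mul_of_nonneg_left hTk (by linarith)
      have e4 : (∑ i ∈ Finset.Ioc m k, Z i) + Z (k+1) -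
          a (k+1) * ((∑ i ∈ Finset.Ioc m k, Z i / a i) + Z (k+1) / a (k+1)) =
          ((∑ i ∈ Finset.Ioc m k, Z i) - a k * (∑ i ∈ Finset.Ioc m k, Z i / a i)) -
            (a (k+1) - a k) * (∑ i ∈ Finset.Ioc m k, Z i / a i) := by
        rw [mul_add, e3]; ring
      rw [e1, e2, e4]
      calc |_ - _| ≤ |(∑ i ∈ Finset.Ioc m k, Z i) - a k * (∑ i ∈ Finset.Ioc m k, Z i / a i)|
            + |(a (k+1) - a k) * (∑ j ∈ Finset.Ioc m k, Z j / a j)| := abs_sub _ _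
        _ ≤ (a k - a m) * M + (a (k+1) - a k) * M := add_le_add ihb habs
        _ = (a (k+1) - a m) * M := by ring
  intro k hk hyp
  have h1 := main k hk hyp
  have hTk : |∑ j ∈ Finset.Ioc m k, Z j / a j| ≤ M := by
    rcases eq_or_lt_of_le hk with h | h
    · rw [← h]; simpa using hM
    · exact hyp k h le_rfl
  have h2 : |∑ i ∈ Finset.Ioc m k, Z i| ≤
      |(∑ i ∈ Finset.Ioc m k, Z i) - a k * (∑ i ∈ Finset.Ioc m k, Z i / a i)|
        + |a k * (∑ i ∈ Finset.Ioc m k, Z i / a i)| := by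
    have := abs_add_le ((∑ i ∈ Finset.Ioc m k, Z i) - a k * (∑ i ∈ Finset.Ioc m k, Z i / a i))
      (a k * (∑ i ∈ Finset.Ioc m k, Z i / a i))
    simpa using this
  have h3 : |a k * (∑ i ∈ Finset.Ioc m k, Z i / a i)| ≤ a k * M := by
    rw [abs_mul, abs_of_pos (hapos k)]
    exact mul_le_mul_of_nonneg_left hTk (hapos k).le
  have h4 := (hapos m).le
  nlinarith [mul_nonneg h4 hM]

variable {Ω : Type*} [MeasurableSpace Ω] {μ : Measure Ω} [IsProbabilityMeasure μ]

lemma markov {q : ℝ} (hq : 0 < q) {f : Ω → ℝ} (hfmeas : Measurable f)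
    (hfint : Integrable (fun ω => |f ω| ^ q) μ) {c : ℝ} (hc : 0 < c) :
    c ^ q * (μ {ω | c ≤ |f ω|}).toReal ≤ ∫ ω, |f ω| ^ q ∂μ := by
  have hs : MeasurableSet {ω | c ≤ |f ω|} := measurableSet_le measurable_const hfmeas.abs
  have hm : ∀ ω ∈ {ω | c ≤ |f ω|}, c ^ q ≤ |f ω| ^ q := fun ω hω =>
    Real.rpow_le_rpow hc.le hω hq.le
  have h := setIntegral_mono_on ((integrable_const (c ^ q)).integrableOn)
    hfint.integrableOn hs hm
  rw [setIntegral_const, smul_eq_mul, measureReal_def] at h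
  have h2 : ∫ ω in {ω | c ≤ |f ω|}, |f ω| ^ q ∂μ ≤ ∫ ω, |f ω| ^ q ∂μ :=
    setIntegral_le_integral hfint
      (Filter.Eventually.of_forall fun ω => Real.rpow_nonneg (abs_nonneg _) _)
  linarith [h, h2]

lemma sum_Ico_le (f : ℕ → ℝ) (hf : ∀ i, 0 ≤ f i) {m₀ n : ℕ} {τ : ℝ} (hτ : 0 ≤ τ)
    (h : ∑' k, ENNReal.ofReal (f (m₀ + k)) ≤ ENNReal.ofReal τ) :
    ∑ i ∈ Finset.Ico m₀ n, f i ≤ τ := by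
  rw [Finset.sum_Ico_eq_sum_range]
  have h2 : ENNReal.ofReal (∑ k ∈ Finset.range (n - m₀), f (m₀ + k)) =
      ∑ k ∈ Finset.range (n - m₀), ENNReal.ofReal (f (m₀ + k)) :=
    ENNReal.ofReal_sum_of_nonneg fun i _ => hf _
  have h3 : (∑ k ∈ Finset.range (n - m₀), ENNReal.ofReal (f (m₀ + k))) ≤
      ∑' k, ENNReal.ofReal (f (m₀ + k)) := ENNReal.sum_le_tsum _
  have h4 : ENNReal.ofReal (∑ k ∈ Finset.range (n - m₀), f (m₀ + k)) ≤ ENNReal.ofReal τ := by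
    rw [h2]; exact le_trans h3 h
  exact (ENNReal.ofReal_le_ofReal_iff hτ).1 h4

lemma sum_Ioc_le (f : ℕ → ℝ) (hf : ∀ i, 0 ≤ f i) {m₀ n : ℕ} {τ : ℝ} (hτ : 0 ≤ τ)
    (h : ∑' k, ENNReal.ofReal (f (m₀ + 1 + k)) ≤ ENNReal.ofReal τ) :
    ∑ i ∈ Finset.Ioc m₀ n, f i ≤ τ := by
  have : Finset.Ioc m₀ n = Finset.Ico (m₀ + 1) (n + 1) := (Finset.Ico_add_one_add_one_eq_Ioc m₀ n).symm
  rw [this]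
  exact sum_Ico_le f hf hτ h

end Stmt12


open Stmt12

set_option maxHeartbeats 2000000 in
/-- Ps-uniform strong law of large numbers for independent, non-identically distributed random
variables: under the uniform boundedness and uniformly vanishing tails of
`Σ_k E_P|X_k − E_P X_k|^q / a_k^q`, the normalized centered sums vanish Ps-uniformly a.s. -/
theorem stmt12 {Ω : Type*} [MeasurableSpace Ω] (Ps : Set (Measure Ω))
    (hPs : ∀ P ∈ Ps, IsProbabilityMeasure P)
    (X : ℕ → Ω → ℝ) (hmeas : ∀ n, Measurable (X n))
    (hindep : ∀ P ∈ Ps, iIndepFun X P)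
    (q : ℝ) (hq1 : 1 ≤ q) (hq2 : q ≤ 2)
    (a : ℕ → ℝ) (hapos : ∀ n, 0 < a n) (hamono : Monotone a) (hatop : Tendsto a atTop atTop)
    (hint : ∀ P ∈ Ps, ∀ k, Integrable (X k) P)
    (hmom : ∀ P ∈ Ps, ∀ k, Integrable (fun ω => |X k ω - ∫ x, X k x ∂P| ^ q) P)
    (hbdd : ∃ C : ℝ, ∀ P ∈ Ps,
      ∑' k : ℕ, ENNReal.ofReal
        ((∫ ω, |X (k + 1) ω - ∫ x, X (k + 1) x ∂P| ^ q ∂P) / a (k + 1) ^ q) ≤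
        ENNReal.ofReal C)
    (htail : ∀ ε : ℝ, 0 < ε → ∃ M : ℕ, ∀ m ≥ M, ∀ P ∈ Ps,
      ∑' k : ℕ, ENNReal.ofReal
        ((∫ ω, |X (m + k) ω - ∫ x, X (m + k) x ∂P| ^ q ∂P) / a (m + k) ^ q) <
        ENNReal.ofReal ε) :
    ∀ ε : ℝ, 0 < ε → ∀ δ : ℝ, 0 < δ → ∃ M : ℕ, ∀ m ≥ M, ∀ P ∈ Ps,
      P {ω | ∃ k ≥ m, ε ≤
        |(a k)⁻¹ * ∑ i ∈ Finset.Icc 1 k, (X i ω - ∫ x, X i x ∂P)|} <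
        ENNReal.ofReal δ := by
  classical
  intro ε hε δ hδ
  obtain ⟨C, hC⟩ := hbdd
  have hq0 : (0:ℝ) < q := by linarith
  set C' : ℝ := max C 0 with hC'def
  have hC'0 : (0:ℝ) ≤ C' := le_max_right _ _
  have hc4 : (0:ℝ) < (ε/4) ^ q := Real.rpow_pos_of_pos (by linarith) q
  have hc2 : (0:ℝ) < (ε/2) ^ q := Real.rpow_pos_of_pos (by linarith) q
  set τ₁ : ℝ := δ * ((ε/4) ^ q) / 36 with hτ₁def
  have hτ₁ : 0 < τ₁ := by rw [hτ₁def]; positivity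
  set τ₂ : ℝ := δ * ((ε/2) ^ q) / 72 with hτ₂def
  have hτ₂ : 0 < τ₂ := by rw [hτ₂def]; positivity
  obtain ⟨M₁, hM₁⟩ := htail τ₁ hτ₁
  obtain ⟨N, hN⟩ := htail τ₂ hτ₂
  set R : ℝ := max 1 (36 * (a N ^ q) * C' / (δ * ((ε/2) ^ q))) with hRdef
  obtain ⟨M₂, hM₂⟩ := Filter.eventually_atTop.1 (hatop.eventually_ge_atTop R)
  refine ⟨max (max M₁ M₂) (N + 1), fun m hm P hP => ?_⟩
  haveI : IsProbabilityMeasure P := hPs P hP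
  have hmM₁ : M₁ ≤ m := le_trans (le_trans (le_max_left _ _) (le_max_left _ _)) hm
  have hmM₂ : M₂ ≤ m := le_trans (le_trans (le_max_right _ _) (le_max_left _ _)) hm
  have hmN : N + 1 ≤ m := le_trans (le_max_right _ _) hm
  set c : ℕ → ℝ := fun i => ∫ x, X i x ∂P with hcdef
  set Y : ℕ → Ω → ℝ := fun i ω => X i ω - c i with hYdef
  set Z : ℕ → Ω → ℝ := fun i ω => Y i ω / a i with hZdef
  set e : ℕ → ℝ := fun i => ∫ ω, |Y i ω| ^ q ∂P with hedef
  have hYmeas : ∀ i, Measurable (Y i) := fun i => (hmeas i).sub measurable_const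
  have hZmeas : ∀ i, Measurable (Z i) := fun i => (hYmeas i).div_const _
  have hYint : ∀ i, Integrable (Y i) P := fun i => (hint P hP i).sub (integrable_const _)
  have hZint : ∀ i, Integrable (Z i) P := fun i => (hYint i).div_const _
  have hYzero : ∀ i, ∫ ω, Y i ω ∂P = 0 := by
    intro i
    simp only [hYdef]
    rw [integral_sub (hint P hP i) (integrable_const _), integral_const]
    simp [hcdef]
  have hZzero : ∀ i, ∫ ω, Z i ω ∂P = 0 := by
    intro i
    simp only [hZdef]
    rw [integral_div, hYzero i, zero_div]
  have hYq : ∀ i, Integrable (fun ω => |Y i ω| ^ q) P := fun i => hmom P hP i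
  have hYindep : iIndepFun Y P := by
    have h := (hindep P hP).comp (fun i t => t - c i)
      (fun i => measurable_id.sub measurable_const)
    exact h
  have hZindep : iIndepFun Z P := by
    have h := (hindep P hP).comp (fun i t => (t - c i) / a i)
      (fun i => (measurable_id.sub measurable_const).div_const _)
    exact h
  have hZq_eq : ∀ i, ∀ ω : Ω, |Z i ω| ^ q = |Y i ω| ^ q / a i ^ q := by
    intro i ω
    simp only [hZdef]
    rw [abs_div, abs_of_pos (hapos i), Real.div_rpow (abs_nonneg _) (hapos i).le]
  have hZq : ∀ i, Integrable (fun ω => |Z i ω| ^ q) P := by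
    intro i
    have h : (fun ω => |Z i ω| ^ q) = fun ω => |Y i ω| ^ q / a i ^ q :=
      funext fun ω => hZq_eq i ω
    rw [h]
    exact (hYq i).div_const _
  have hZq_int : ∀ i, ∫ ω, |Z i ω| ^ q ∂P = e i / a i ^ q := by
    intro i
    calc ∫ ω, |Z i ω| ^ q ∂P = ∫ ω, |Y i ω| ^ q / a i ^ q ∂P := by
          congr 1; exact funext fun ω => hZq_eq i ω
      _ = e i / a i ^ q := integral_div _ _
  have he0 : ∀ i, 0 ≤ e i := fun i =>
    integral_nonneg fun ω => Real.rpow_nonneg (abs_nonneg _) _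
  have hf0 : ∀ i, 0 ≤ e i / a i ^ q := fun i =>
    div_nonneg (he0 i) (Real.rpow_pos_of_pos (hapos i) q).le
  -- tail bounds as real finite sums
  have htail1 : ∀ n, ∑ i ∈ Finset.Ioc m n, e i / a i ^ q ≤ τ₁ := by
    intro n
    apply sum_Ioc_le (fun i => e i / a i ^ q) hf0 hτ₁.le
    exact le_of_lt (hM₁ (m+1) (by omega) P hP)
  have htail2 : ∀ n, ∑ i ∈ Finset.Ioc N n, e i / a i ^ q ≤ τ₂ := by
    intro n
    apply sum_Ioc_le (fun i => e i / a i ^ q) hf0 hτ₂.le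
    exact le_of_lt (hN (N+1) (by omega) P hP)
  have hbdd' : ∀ n, ∑ i ∈ Finset.Ioc 0 n, e i / a i ^ q ≤ C' := by
    intro n
    apply sum_Ioc_le (fun i => e i / a i ^ q) hf0 hC'0
    have h1 : (∑' k : ℕ, ENNReal.ofReal (e (k + 1) / a (k + 1) ^ q)) ≤ ENNReal.ofReal C :=
      hC P hP
    have h2 : (fun k : ℕ => ENNReal.ofReal (e (0 + 1 + k) / a (0 + 1 + k) ^ q))
        = fun k : ℕ => ENNReal.ofReal (e (k + 1) / a (k + 1) ^ q) := by
      funext k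
      rw [show 0 + 1 + k = k + 1 by omega]
    rw [h2]
    exact le_trans h1 (ENNReal.ofReal_le_ofReal (le_max_left _ _))
  -- sums of e
  have hee : ∀ i k : ℕ, i ≤ k → e i ≤ a k ^ q * (e i / a i ^ q) := by
    intro i k hik
    have hai : (0:ℝ) < a i ^ q := Real.rpow_pos_of_pos (hapos i) q
    have hmono : a i ^ q ≤ a k ^ q := Real.rpow_le_rpow (hapos i).le (hamono hik) hq0.le
    calc e i = a i ^ q * (e i / a i ^ q) := by
          rw [mul_div_cancel₀ _ (ne_of_gt hai)]
      _ ≤ a k ^ q * (e i / a i ^ q) := mul_le_mul_of_nonneg_right hmono (hf0 i)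
  have heN : ∑ i ∈ Finset.Ioc 0 N, e i ≤ a N ^ q * C' := by
    calc ∑ i ∈ Finset.Ioc 0 N, e i ≤ ∑ i ∈ Finset.Ioc 0 N, a N ^ q * (e i / a i ^ q) :=
          Finset.sum_le_sum fun i hi => hee i N (Finset.mem_Ioc.1 hi).2
      _ = a N ^ q * ∑ i ∈ Finset.Ioc 0 N, (e i / a i ^ q) := by rw [Finset.mul_sum]
      _ ≤ a N ^ q * C' := mul_le_mul_of_nonneg_left (hbdd' N)
          (Real.rpow_pos_of_pos (hapos N) q).le
  have heM : ∑ i ∈ Finset.Ioc N m, e i ≤ a m ^ q * τ₂ := by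
    calc ∑ i ∈ Finset.Ioc N m, e i ≤ ∑ i ∈ Finset.Ioc N m, a m ^ q * (e i / a i ^ q) :=
          Finset.sum_le_sum fun i hi => hee i m (Finset.mem_Ioc.1 hi).2
      _ = a m ^ q * ∑ i ∈ Finset.Ioc N m, (e i / a i ^ q) := by rw [Finset.mul_sum]
      _ ≤ a m ^ q * τ₂ := mul_le_mul_of_nonneg_left (htail2 m)
          (Real.rpow_pos_of_pos (hapos m) q).le
  have hesplit : ∑ i ∈ Finset.Ioc 0 m, e i ≤ a N ^ q * C' + a m ^ q * τ₂ := by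
    have h := Finset.sum_Ioc_consecutive e (Nat.zero_le N) (show N ≤ m by omega)
    linarith [heN, heM]
  have haR : R ≤ a m := hM₂ m hmM₂
  have ham1 : (1:ℝ) ≤ a m := le_trans (le_max_left _ _) haR
  have hA : (0:ℝ) < a m ^ q := Real.rpow_pos_of_pos (hapos m) q
  have hamq : 36 * (a N ^ q) * C' / (δ * ((ε/2) ^ q)) ≤ a m ^ q := by
    have h1 : 36 * (a N ^ q) * C' / (δ * ((ε/2) ^ q)) ≤ R := by
      rw [hRdef]; exact le_max_right _ _
    have h3 : a m ≤ a m ^ q := by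
      calc a m = a m ^ (1:ℝ) := (Real.rpow_one _).symm
        _ ≤ a m ^ q := Real.rpow_le_rpow_of_exponent_le ham1 hq1
    linarith
  have hkey1 : 36 * (a N ^ q * C') ≤ a m ^ q * (δ * ((ε/2) ^ q)) := by
    have hpos : (0:ℝ) < δ * ((ε/2) ^ q) := by positivity
    rw [div_le_iff₀ hpos] at hamq
    nlinarith [hamq]
  -- the normalized partial sums
  set S : ℕ → Ω → ℝ := fun k ω => ∑ i ∈ Finset.Icc 1 k, Y i ω with hSdef
  have hIcc : ∀ k, Finset.Icc 1 k = Finset.Ioc 0 k := by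
    intro k; ext i; simp only [Finset.mem_Icc, Finset.mem_Ioc]; omega
  have hSmeas : ∀ k, Measurable (S k) := fun k =>
    Finset.measurable_sum _ fun i _ => hYmeas i
  have hSfun : (fun ω => |S m ω| ^ q) = fun ω => |∑ i ∈ Finset.Ioc 0 m, Y i ω| ^ q := by
    funext ω
    simp only [hSdef]
    rw [hIcc m]
  have hSq : Integrable (fun ω => |S m ω| ^ q) P := by
    rw [hSfun]
    exact (vbe_integral hq1 hq2 Y hYmeas hYindep hYint hYzero hYq (Finset.Ioc 0 m)).1
  have hi1 : ∫ ω, |S m ω| ^ q ∂P ≤ 6 * ∑ i ∈ Finset.Ioc 0 m, e i := by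
    have hvbe := (vbe_integral hq1 hq2 Y hYmeas hYindep hYint hYzero hYq (Finset.Ioc 0 m)).2
    rw [hSfun]
    exact hvbe
  -- event B1
  set c1 : ℝ := ε * a m / 2 with hc1def
  have hc1 : 0 < c1 := by
    rw [hc1def]
    have := hapos m
    positivity
  set B1 : Set Ω := {ω | c1 ≤ |S m ω|} with hB1def
  have hc1q : c1 ^ q = (ε/2) ^ q * a m ^ q := by
    rw [hc1def, show ε * a m / 2 = (ε/2) * a m by ring,
      Real.mul_rpow (by linarith) (hapos m).le]
  have hB1bound : (P B1).toReal ≤ δ/3 := by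
    have hmar := markov hq0 (hSmeas m) hSq hc1
    rw [hc1q] at hmar
    have h6B : 6 * (a N ^ q * C') ≤ (ε/2) ^ q * a m ^ q * δ / 6 := by nlinarith [hkey1]
    have h6τ : 6 * (a m ^ q * τ₂) = (ε/2) ^ q * a m ^ q * δ / 12 := by
      rw [hτ₂def]; ring
    have hc2A : (0:ℝ) < (ε/2) ^ q * a m ^ q := mul_pos hc2 hA
    have ht4 : ((ε/2) ^ q * a m ^ q) * (P B1).toReal ≤ ((ε/2) ^ q * a m ^ q) * (δ/3) := by
      nlinarith [hmar, hi1, hesplit, h6B, h6τ, mul_pos hc2A hδ]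
    have := (mul_le_mul_iff_right₀ hc2A).1 ht4
    linarith
  have hB1m : P B1 ≤ ENNReal.ofReal (δ/3) :=
    (ENNReal.le_ofReal_iff_toReal_le (measure_ne_top _ _) (by positivity)).2 hB1bound
  -- event B2
  set B2n : ℕ → Set Ω := fun n =>
    {ω | ∃ j, m < j ∧ j ≤ n ∧ ε/4 ≤ |∑ i ∈ Finset.Ioc m j, Z i ω|} with hB2ndef
  have hB2mono : Monotone B2n := by
    intro n n' hnn' ω hω
    obtain ⟨j, h1, h2, h3⟩ := hω
    exact ⟨j, h1, le_trans h2 hnn', h3⟩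
  set B2 : Set Ω := ⋃ n, B2n n with hB2def
  have hB2nbound : ∀ n, P (B2n n) ≤ ENNReal.ofReal (δ/3) := by
    intro n
    have hkol := kolmogorov hq1 hq2 Z hZmeas hZindep hZint hZzero hZq m n
      (show (0:ℝ) < ε/4 by linarith)
    have hsum : ∑ i ∈ Finset.Ioc m n, ∫ ω, |Z i ω| ^ q ∂P ≤ τ₁ := by
      rw [Finset.sum_congr rfl fun i _ => hZq_int i]
      exact htail1 n
    have ht : ((ε/4) ^ q) * (P (B2n n)).toReal ≤ ((ε/4) ^ q) * (δ/3) := by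
      have hτeq : 6 * τ₁ = (ε/4) ^ q * δ / 6 := by rw [hτ₁def]; ring
      nlinarith [hkol, hsum, mul_pos hc4 hδ]
    have h2 := (mul_le_mul_iff_right₀ hc4).1 ht
    exact (ENNReal.le_ofReal_iff_toReal_le (measure_ne_top _ _) (by positivity)).2
      (by linarith)
  have hB2m : P B2 ≤ ENNReal.ofReal (δ/3) := by
    rw [hB2def, Directed.measure_iUnion hB2mono.directed_le]
    exact iSup_le hB2nbound
  -- inclusion
  have hincl : {ω | ∃ k ≥ m, ε ≤
      |(a k)⁻¹ * ∑ i ∈ Finset.Icc 1 k, (X i ω - ∫ x, X i x ∂P)|} ⊆ B1 ∪ B2 := by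
    intro ω hω
    obtain ⟨k, hkm, hke⟩ := hω
    by_contra hcon
    rw [Set.mem_union] at hcon
    push_neg at hcon
    obtain ⟨h1, h2⟩ := hcon
    have hS1 : |S m ω| < c1 := by
      by_contra hc
      exact h1 (by rw [hB1def]; exact Set.mem_setOf_eq ▸ not_lt.1 hc)
    have hT : ∀ i, m < i → i ≤ k → |∑ j ∈ Finset.Ioc m i, Y j ω / a j| ≤ ε/4 := by
      intro i h1i h2i
      by_contra hcc
      push_neg at hcc
      apply h2
      rw [hB2def]
      refine Set.mem_iUnion.2 ⟨i, ?_⟩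
      rw [hB2ndef]
      exact ⟨i, h1i, le_rfl, le_of_lt hcc⟩
    have habel := abel_bound a hapos hamono (fun i => Y i ω) m (ε/4) (by linarith)
      k hkm hT
    have hsplitS : S k ω = S m ω + ∑ i ∈ Finset.Ioc m k, Y i ω := by
      simp only [hSdef]
      rw [hIcc k, hIcc m]
      exact (Finset.sum_Ioc_consecutive (fun i => Y i ω) (Nat.zero_le m) hkm).symm
    have hke' : ε ≤ |(a k)⁻¹ * S k ω| := hke
    have hak : 0 < a k := hapos k
    have hkeak : ε * a k ≤ |S k ω| := by
      rw [abs_mul, abs_inv, abs_of_pos hak] at hke'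
      rw [show (a k)⁻¹ * |S k ω| = |S k ω| / a k by ring] at hke'
      exact (le_div_iff₀ hak).1 hke'
    have hbig : |S k ω| < ε * a k := by
      have h3 : |S k ω| ≤ |S m ω| + |∑ i ∈ Finset.Ioc m k, Y i ω| := by
        rw [hsplitS]; exact abs_add_le _ _
      have h4 : a m ≤ a k := hamono hkm
      calc |S k ω| ≤ |S m ω| + |∑ i ∈ Finset.Ioc m k, Y i ω| := h3
        _ < c1 + 2 * a k * (ε/4) := by linarith [habel]
        _ = ε * a m / 2 + ε * a k / 2 := by rw [hc1def]; ring
        _ ≤ ε * a k := by nlinarith [h4]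
    linarith
  refine lt_of_le_of_lt (le_trans (measure_mono hincl) (measure_union_le B1 B2)) ?_
  calc P B1 + P B2 ≤ ENNReal.ofReal (δ/3) + ENNReal.ofReal (δ/3) := add_le_add hB1m hB2m
    _ = ENNReal.ofReal (δ/3 + δ/3) := (ENNReal.ofReal_add (by positivity) (by positivity)).symm
    _ < ENNReal.ofReal δ := (ENNReal.ofReal_lt_ofReal_iff hδ).2 (by linarith)
end
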